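/- arXiv:0803.2294 — 6 statements merged into one kernel-verified Lean document; each statement's English description precedes it below -/
import Mathlib

section
/- Let u, c : [0,∞) → [0,∞) be continuous with c nondecreasing and c(t) > 0 for all t, let α ∈ C¹([0,∞),[0,∞)) be nondecreasing with α(t) ≤ t, let f, g : [0,∞)×[0,∞) → [0,∞) be continuous and nondecreasing in the first variable, let φ : [0,∞) → [0,∞) be a continuous strictly increasing bijection, and let η, w : [0,∞) → [0,∞) be continuous nondecreasing with η(x) > 0 and w(x) > 0 for x > 0, and ∫_{x₀}^∞ ds/η(φ⁻¹(s)) = ∞ for some 0 < x₀ < c(0). Define G(x) = ∫_{x₀}^x ds/η(φ⁻¹(s)), p(t) = G(c(t)) + ∫_0^{α(t)} g(t,s) ds, and Ψ(x) = ∫_{x₁}^x ds/w(φ⁻¹(G⁻¹(s))) for some fixed x₁ > 0. If φ(u(t)) ≤ c(t) + ∫_0^{α(t)} [f(t,s)η(u(s))w(u(s)) + g(t,s)η(u(s))] ds for all t ≥ 0, then there exists τ > 0 such that for all t ∈ [0,τ], the quantity Ψ(p(t)) + ∫_0^{α(t)} f(t,s) ds lies in the domain of Ψ⁻¹ and u(t)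 ≤ φ⁻¹(G⁻¹(Ψ⁻¹(Ψ(p(t)) + ∫_0^{α(t)} f(t,s) ds))). -/
open Set Filter intervalIntegral MeasureTheory Topology

private lemma aux_uIcc_subset_Ici {a b x : ℝ} (hb : a ≤ b) (hx : a ≤ x) :
    uIcc b x ⊆ Ici a := fun s hs => le_trans (le_min hb hx) hs.1

private lemma aux_contAt {F : ℝ → ℝ} {a x : ℝ} (hF : ContinuousOn F (Ici a)) (hx : a < x) :
    ContinuousAt F x :=
  hF.continuousAt (mem_of_superset (Ioi_mem_nhds hx) Ioi_subset_Ici_self)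

private lemma aux_inv_cont {Finv : ℝ → ℝ} {a : ℝ} (hmono : StrictMonoOn Finv (Ici a))
    (hsurj : Ici (Finv a) ⊆ Finv '' (Ici a)) : ContinuousOn Finv (Ici a) := by
  intro y hy
  rcases eq_or_lt_of_le (mem_Ici.mp hy) with rfl | hlt
  · exact hmono.continuousWithinAt_right_of_surjOn self_mem_nhdsWithin
      (fun z hz => hsurj (mem_Ici.mpr (le_of_lt hz)))
  · refine (hmono.continuousAt_of_image_mem_nhds
      (mem_of_superset (Ioi_mem_nhds hlt) Ioi_subset_Ici_self) ?_).continuousWithinAt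
    exact mem_of_superset (Ioi_mem_nhds (hmono self_mem_Ici hy hlt))
      (fun z hz => hsurj (mem_Ici.mpr (le_of_lt hz)))

private lemma aux_primitive_cont {F : ℝ → ℝ} {a b : ℝ} (hF : ContinuousOn F (Ici a))
    (hb : a ≤ b) : ContinuousOn (fun x => ∫ t in b..x, F t) (Ici a) := by
  intro x hx
  have hxM : x < max (x + 1) b + 1 := by
    have := le_max_left (x + 1) b; linarith
  have haM : a ≤ max (x + 1) b + 1 := le_trans (le_trans hb (le_max_right _ _)) (by linarith)
  have h1 : IntervalIntegrable F MeasureTheory.volume a (max (x + 1) b + 1) :=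
    ((hF.mono (aux_uIcc_subset_Ici le_rfl haM)).intervalIntegrable)
  have h2 := intervalIntegral.continuousOn_primitive_interval' h1
    (by rw [uIcc_of_le haM]; exact ⟨hb, le_trans (le_max_right _ _) (by linarith)⟩)
  rw [uIcc_of_le haM] at h2
  refine (h2 x ⟨hx, le_of_lt hxM⟩).mono_of_mem_nhdsWithin ?_
  rw [← Ici_inter_Iic]
  exact inter_mem self_mem_nhdsWithin (mem_nhdsWithin_of_mem_nhds (Iic_mem_nhds hxM))

private lemma aux_primitive_deriv {F : ℝ → ℝ} {a b x : ℝ} (hF : ContinuousOn F (Ici a))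
    (hb : a ≤ b) (hx : a < x) : HasDerivAt (fun y => ∫ t in b..y, F t) (F x) x :=
  intervalIntegral.integral_hasDerivAt_right
    ((hF.mono (aux_uIcc_subset_Ici hb hx.le)).intervalIntegrable)
    ((hF.mono Ioi_subset_Ici_self).stronglyMeasurableAtFilter isOpen_Ioi x hx)
    (aux_contAt hF hx)

private lemma aux_subst {m h ρ : ℝ → ℝ} {r : ℝ} (hr : 0 ≤ r)
    (hm : ContinuousOn m (Icc 0 r))
    (hd : ∀ x ∈ Ioo 0 r, HasDerivWithinAt m (h x) (Ioi x) x)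
    (hh : ContinuousOn h (Icc 0 r))
    (hρ : ContinuousOn ρ (m '' Icc 0 r)) :
    (∫ s in (0:ℝ)..r, h s * ρ (m s)) = ∫ x in (m 0)..(m r), ρ x := by
  have h1 := intervalIntegral.integral_comp_smul_deriv'' (a := 0) (b := r) (f := m) (f' := h)
    (g := ρ) (by rwa [uIcc_of_le hr])
    (by rw [min_eq_left hr, max_eq_right hr]; exact hd)
    (by rwa [uIcc_of_le hr]) (by rwa [uIcc_of_le hr])
  simpa [smul_eq_mul, Function.comp] using h1

private lemma aux_ineq1 {fv gv ηu wu ηm wm : ℝ} (hf : 0 ≤ fv) (hg : 0 ≤ gv)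
    (hηu : 0 ≤ ηu) (hwu : 0 ≤ wu) (hηm : 0 ≤ ηm) (hη : ηu ≤ ηm) (hw : wu ≤ wm) :
    fv * ηu * wu + gv * ηu ≤ (fv * wm + gv) * ηm := by
  have h1 : ηu * wu ≤ ηm * wm := mul_le_mul hη hw hwu hηm
  have h2 : fv * (ηu * wu) ≤ fv * (ηm * wm) := mul_le_mul_of_nonneg_left h1 hf
  have h3 : gv * ηu ≤ gv * ηm := mul_le_mul_of_nonneg_left hη hg
  nlinarith [h2, h3]

private lemma aux_ineq2 {fv gv wm σn σ0 : ℝ} (hf : 0 ≤ fv) (hg : 0 ≤ gv)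
    (h1 : wm * σn ≤ 1) (h2 : σn ≤ σ0) :
    (fv * wm + gv) * σn ≤ fv + gv * σ0 := by nlinarith

set_option maxHeartbeats 1600000 in
/-- Theorem 1: retarded integral inequality.  Inverse functions are handled as
follows: `φinv` is the two-sided inverse of the bijection `φ : [0,∞) → [0,∞)`;
`Ginv` is the inverse of the strictly increasing `G` (which maps `[x₀,∞)` onto
`[0,∞)` by the divergence hypothesis); membership of `Ψ(p t) + ∫₀^{α t} f`
in `Dom(Ψ⁻¹)` is expressed as `∃ y > 0, Ψ y = …`, and the bound
`u t ≤ φ⁻¹(G⁻¹(Ψ⁻¹(…)))` as `u t ≤ φinv (Ginv y)`. -/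
theorem thm1_retarded_inequality
    (u c α : ℝ → ℝ) (f g : ℝ → ℝ → ℝ) (φ φinv η w G Ginv p Ψ : ℝ → ℝ)
    (x₀ x₁ : ℝ)
    (hu_cont : ContinuousOn u (Ici 0)) (hu_nonneg : ∀ t ≥ (0:ℝ), 0 ≤ u t)
    (hc_cont : ContinuousOn c (Ici 0)) (hc_pos : ∀ t ≥ (0:ℝ), 0 < c t)
    (hc_mono : MonotoneOn c (Ici 0))
    (hα_C1 : ContDiffOn ℝ 1 α (Ici 0)) (hα_mono : MonotoneOn α (Ici 0))
    (hα_nonneg : ∀ t ≥ (0:ℝ), 0 ≤ α t) (hα_le : ∀ t ≥ (0:ℝ), α t ≤ t)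
    (hf_cont : ContinuousOn (Function.uncurry f) (Ici 0 ×ˢ Ici 0))
    (hf_nonneg : ∀ t ≥ (0:ℝ), ∀ s ≥ (0:ℝ), 0 ≤ f t s)
    (hf_mono : ∀ s ≥ (0:ℝ), MonotoneOn (fun t => f t s) (Ici 0))
    (hg_cont : ContinuousOn (Function.uncurry g) (Ici 0 ×ˢ Ici 0))
    (hg_nonneg : ∀ t ≥ (0:ℝ), ∀ s ≥ (0:ℝ), 0 ≤ g t s)
    (hg_mono : ∀ s ≥ (0:ℝ), MonotoneOn (fun t => g t s) (Ici 0))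
    (hφ_cont : ContinuousOn φ (Ici 0)) (hφ_mono : StrictMonoOn φ (Ici 0))
    (hφ_bij : BijOn φ (Ici 0) (Ici 0))
    (hφinv_left : ∀ x ≥ (0:ℝ), φinv (φ x) = x)
    (hφinv_right : ∀ y ≥ (0:ℝ), φ (φinv y) = y)
    (hη_cont : ContinuousOn η (Ici 0)) (hη_mono : MonotoneOn η (Ici 0))
    (hη_pos : ∀ x > (0:ℝ), 0 < η x)
    (hw_cont : ContinuousOn w (Ici 0)) (hw_mono : MonotoneOn w (Ici 0))
    (hw_pos : ∀ x > (0:ℝ), 0 < w x)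
    (hx₀_pos : 0 < x₀) (hx₀_lt : x₀ < c 0) (hx₁ : 0 < x₁)
    (hG : ∀ x, G x = ∫ s in x₀..x, 1 / η (φinv s))
    (hG_div : Tendsto G atTop atTop)
    (hGinv_left : ∀ x ≥ x₀, Ginv (G x) = x)
    (hGinv_right : ∀ y ≥ (0:ℝ), G (Ginv y) = y ∧ x₀ ≤ Ginv y)
    (hp : ∀ t, p t = G (c t) + ∫ s in (0:ℝ)..(α t), g t s)
    (hΨ : ∀ x, Ψ x = ∫ s in x₁..x, 1 / w (φinv (Ginv s)))
    (hmain : ∀ t ≥ (0:ℝ),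
      φ (u t) ≤ c t + ∫ s in (0:ℝ)..(α t),
        (f t s * η (u s) * w (u s) + g t s * η (u s))) :
    ∃ τ > (0:ℝ), ∀ t ∈ Icc (0:ℝ) τ,
      ∃ y > (0:ℝ), Ψ y = Ψ (p t) + (∫ s in (0:ℝ)..(α t), f t s) ∧
        u t ≤ φinv (Ginv y) := by
  -- φ basics
  have hφ0 : φ 0 = 0 := by
    by_contra h
    have h0 : (0:ℝ) ≤ φ 0 := hφ_bij.mapsTo self_mem_Ici
    have hpos : 0 < φ 0 := lt_of_le_of_ne h0 (Ne.symm h)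
    obtain ⟨x, hx, hfx⟩ := hφ_bij.surjOn (show φ 0 / 2 ∈ Ici (0:ℝ) from by
      simp only [mem_Ici]; linarith)
    have h2 : φ 0 ≤ φ x := hφ_mono.monotoneOn self_mem_Ici hx hx
    rw [hfx] at h2; linarith
  have hφinv_nonneg : ∀ y, 0 ≤ y → 0 ≤ φinv y := fun y hy => by
    obtain ⟨x, hx, rfl⟩ := hφ_bij.surjOn (mem_Ici.mpr hy)
    rw [hφinv_left x hx]; exact hx
  have hφinv0 : φinv 0 = 0 := by
    have := hφinv_left 0 le_rfl; rwa [hφ0] at this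
  have hφinv_mono : ∀ a b : ℝ, 0 ≤ a → a ≤ b → φinv a ≤ φinv b := by
    intro a b ha hab
    by_contra h
    push_neg at h
    have := hφ_mono (mem_Ici.mpr (hφinv_nonneg b (ha.trans hab))) (mem_Ici.mpr (hφinv_nonneg a ha)) h
    rw [hφinv_right a ha, hφinv_right b (ha.trans hab)] at this
    linarith
  have hφinv_pos : ∀ y, 0 < y → 0 < φinv y := by
    intro y hy
    rcases lt_or_eq_of_le (hφinv_nonneg y hy.le) with h | h
    · exact h
    · exfalso
      have := hφinv_right y hy.le
      rw [← h, hφ0] at this; linarith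
  have hφinv_smono : StrictMonoOn φinv (Ici 0) := by
    intro a ha b hb hab
    refine lt_of_le_of_ne (hφinv_mono a b ha hab.le) (fun h => ?_)
    have : φ (φinv a) = φ (φinv b) := by rw [h]
    rw [hφinv_right a ha, hφinv_right b hb] at this
    exact absurd this hab.ne
  have hφinv_cont : ContinuousOn φinv (Ici 0) := by
    refine aux_inv_cont hφinv_smono ?_
    rw [hφinv0]
    rintro z (hz : (0:ℝ) ≤ z)
    exact ⟨φ z, hφ_bij.mapsTo hz, hφinv_left z hz⟩
  -- η, w nonneg
  have hη_nonneg : ∀ x, 0 ≤ x → 0 ≤ η x := by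
    intro x hx
    rcases lt_or_eq_of_le hx with h | h
    · exact (hη_pos x h).le
    · subst h
      have h1 : Tendsto η (𝓝[>] (0:ℝ)) (𝓝 (η 0)) :=
        ((hη_cont 0 self_mem_Ici).mono_left (nhdsWithin_mono _ Ioi_subset_Ici_self))
      refine ge_of_tendsto h1 ?_
      filter_upwards [self_mem_nhdsWithin] with y hy
      exact (hη_pos y hy).le
  have hw_nonneg : ∀ x, 0 ≤ x → 0 ≤ w x := by
    intro x hx
    rcases lt_or_eq_of_le hx with h | h
    · exact (hw_pos x h).le
    · subst h
      have h1 : Tendsto w (𝓝[>] (0:ℝ)) (𝓝 (w 0)) :=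
        ((hw_cont 0 self_mem_Ici).mono_left (nhdsWithin_mono _ Ioi_subset_Ici_self))
      refine ge_of_tendsto h1 ?_
      filter_upwards [self_mem_nhdsWithin] with y hy
      exact (hw_pos y hy).le
  -- ρ facts
  have hηφ_pos : ∀ s, x₀ ≤ s → 0 < η (φinv s) :=
    fun s hs => hη_pos _ (hφinv_pos _ (lt_of_lt_of_le hx₀_pos hs))
  have hρ_nonneg : ∀ s, x₀ ≤ s → 0 ≤ 1 / η (φinv s) := by
    intro s hs
    have := hηφ_pos s hs; positivity
  have hρ_cont : ContinuousOn (fun s => 1 / η (φinv s)) (Ici x₀) := by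
    refine continuousOn_const.div
      (hη_cont.comp (hφinv_cont.mono (Ici_subset_Ici.mpr hx₀_pos.le))
        (fun s hs => hφinv_nonneg s (le_trans hx₀_pos.le hs)))
      (fun s hs => (hηφ_pos s hs).ne')
  -- G facts
  have hGdiff : ∀ a b, x₀ ≤ a → x₀ ≤ b → G b - G a = ∫ s in a..b, 1 / η (φinv s) := by
    intro a b ha hb
    rw [hG a, hG b]
    exact integral_interval_sub_left
      ((hρ_cont.mono (aux_uIcc_subset_Ici le_rfl hb)).intervalIntegrable)
      ((hρ_cont.mono (aux_uIcc_subset_Ici le_rfl ha)).intervalIntegrable)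
  have hGx₀ : G x₀ = 0 := by rw [hG]; exact integral_same
  have hG_mono : ∀ a b, x₀ ≤ a → a ≤ b → G a ≤ G b := by
    intro a b ha hab
    have h1 := hGdiff a b ha (ha.trans hab)
    have h2 : 0 ≤ ∫ s in a..b, 1 / η (φinv s) :=
      intervalIntegral.integral_nonneg hab (fun s hs => hρ_nonneg s (ha.trans hs.1))
    linarith
  have hG_strict : ∀ a b, x₀ ≤ a → a < b → G a < G b := by
    intro a b ha hab
    have h1 := hGdiff a b ha (ha.trans hab.le)
    have h2 : 0 < ∫ s in a..b, 1 / η (φinv s) := by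
      refine intervalIntegral_pos_of_pos_on
        ((hρ_cont.mono (aux_uIcc_subset_Ici ha (ha.trans hab.le))).intervalIntegrable)
        (fun s hs => ?_) hab
      have := hηφ_pos s (ha.trans hs.1.le); positivity
    linarith
  have hG_nonneg : ∀ x, x₀ ≤ x → 0 ≤ G x := by
    intro x hx
    have := hG_mono x₀ x le_rfl hx; rw [hGx₀] at this; exact this
  have hGinv0 : Ginv 0 = x₀ := by rw [← hGx₀]; exact hGinv_left x₀ le_rfl
  have hGinv_mono : ∀ a b, 0 ≤ a → a ≤ b → Ginv a ≤ Ginv b := by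
    intro a b ha hab
    by_contra h
    push_neg at h
    have h1 := hGinv_right a ha
    have h2 := hGinv_right b (ha.trans hab)
    have := hG_strict _ _ h2.2 h
    rw [h1.1, h2.1] at this; linarith
  have hGinv_smono : StrictMonoOn Ginv (Ici 0) := by
    intro a ha b hb hab
    refine lt_of_le_of_ne (hGinv_mono a b ha hab.le) (fun h => ?_)
    have h1 := (hGinv_right a ha).1
    have h2 := (hGinv_right b hb).1
    rw [← h1, ← h2, h] at hab
    exact lt_irrefl _ hab
  have hGinv_cont : ContinuousOn Ginv (Ici 0) := by
    refine aux_inv_cont hGinv_smono ?_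
    rw [hGinv0]
    rintro z (hz : x₀ ≤ z)
    exact ⟨G z, hG_nonneg z hz, hGinv_left z hz⟩
  have hGinv_x₀ : ∀ y, 0 ≤ y → x₀ ≤ Ginv y := fun y hy => (hGinv_right y hy).2
  -- σ facts
  have hφGinv_pos : ∀ s, 0 ≤ s → 0 < φinv (Ginv s) :=
    fun s hs => hφinv_pos _ (lt_of_lt_of_le hx₀_pos (hGinv_x₀ s hs))
  have hwσ_pos : ∀ s, 0 ≤ s → 0 < w (φinv (Ginv s)) := fun s hs => hw_pos _ (hφGinv_pos s hs)
  have hσ_nonneg : ∀ s, 0 ≤ s → 0 ≤ 1 / w (φinv (Ginv s)) := by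
    intro s hs; have := hwσ_pos s hs; positivity
  have hσ_cont : ContinuousOn (fun s => 1 / w (φinv (Ginv s))) (Ici 0) := by
    refine continuousOn_const.div
      (hw_cont.comp (hφinv_cont.comp hGinv_cont
          (fun s hs => le_trans hx₀_pos.le (hGinv_x₀ s hs)))
        (fun s hs => hφinv_nonneg _ (le_trans hx₀_pos.le (hGinv_x₀ s hs))))
      (fun s hs => (hwσ_pos s hs).ne')
  have hσ_anti : ∀ a b, 0 ≤ a → a ≤ b →
      1 / w (φinv (Ginv b)) ≤ 1 / w (φinv (Ginv a)) := by
    intro a b ha hab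
    refine one_div_le_one_div_of_le (hwσ_pos a ha) ?_
    refine hw_mono (mem_Ici.mpr (hφinv_nonneg _ (le_trans hx₀_pos.le (hGinv_x₀ a ha))))
      (mem_Ici.mpr (hφinv_nonneg _ (le_trans hx₀_pos.le (hGinv_x₀ b (ha.trans hab)))))
      (hφinv_mono _ _ (le_trans hx₀_pos.le (hGinv_x₀ a ha)) (hGinv_mono a b ha hab))
  -- Ψ facts
  have hΨdiff : ∀ a b, 0 ≤ a → 0 ≤ b →
      Ψ b - Ψ a = ∫ s in a..b, 1 / w (φinv (Ginv s)) := by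
    intro a b ha hb
    rw [hΨ a, hΨ b]
    exact integral_interval_sub_left
      ((hσ_cont.mono (aux_uIcc_subset_Ici hx₁.le hb)).intervalIntegrable)
      ((hσ_cont.mono (aux_uIcc_subset_Ici hx₁.le ha)).intervalIntegrable)
  have hΨ_mono : ∀ a b, 0 ≤ a → a ≤ b → Ψ a ≤ Ψ b := by
    intro a b ha hab
    have h1 := hΨdiff a b ha (ha.trans hab)
    have h2 : 0 ≤ ∫ s in a..b, 1 / w (φinv (Ginv s)) :=
      intervalIntegral.integral_nonneg hab (fun s hs => hσ_nonneg s (ha.trans hs.1))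
    linarith
  have hΨ_strict : ∀ a b, 0 ≤ a → a < b → Ψ a < Ψ b := by
    intro a b ha hab
    have h1 := hΨdiff a b ha (ha.trans hab.le)
    have h2 : 0 < ∫ s in a..b, 1 / w (φinv (Ginv s)) := by
      refine intervalIntegral_pos_of_pos_on
        ((hσ_cont.mono (aux_uIcc_subset_Ici ha (ha.trans hab.le))).intervalIntegrable)
        (fun s hs => ?_) hab
      have := hwσ_pos s (ha.trans hs.1.le); positivity
    linarith
  have hΨ_cont : ContinuousOn Ψ (Ici 0) :=
    (aux_primitive_cont hσ_cont hx₁.le).congr (fun x _ => hΨ x)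
  -- continuity of sections of f and g
  have hfs_cont : ∀ T, 0 ≤ T → ContinuousOn (fun s => f T s) (Ici 0) := by
    intro T hT
    exact hf_cont.comp ((continuous_const.prodMk continuous_id).continuousOn)
      (fun s hs => mk_mem_prod (mem_Ici.mpr hT) hs)
  have hgs_cont : ∀ T, 0 ≤ T → ContinuousOn (fun s => g T s) (Ici 0) := by
    intro T hT
    exact hg_cont.comp ((continuous_const.prodMk continuous_id).continuousOn)
      (fun s hs => mk_mem_prod (mem_Ici.mpr hT) hs)
  -- bounds on f, g over [0,1]^2
  obtain ⟨Mf, hMf⟩ := (isCompact_Icc.prod isCompact_Icc).exists_bound_of_continuousOn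
    (hf_cont.mono (prod_mono (Icc_subset_Ici_self : Icc (0:ℝ) 1 ⊆ Ici 0)
      (Icc_subset_Ici_self : Icc (0:ℝ) 1 ⊆ Ici 0)))
  obtain ⟨Mg, hMg⟩ := (isCompact_Icc.prod isCompact_Icc).exists_bound_of_continuousOn
    (hg_cont.mono (prod_mono (Icc_subset_Ici_self : Icc (0:ℝ) 1 ⊆ Ici 0)
      (Icc_subset_Ici_self : Icc (0:ℝ) 1 ⊆ Ici 0)))
  have hMf0 : 0 ≤ Mf := le_trans (norm_nonneg _)
    (hMf (0, 0) ⟨⟨le_rfl, zero_le_one⟩, ⟨le_rfl, zero_le_one⟩⟩)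
  have hMg0 : 0 ≤ Mg := le_trans (norm_nonneg _)
    (hMg (0, 0) ⟨⟨le_rfl, zero_le_one⟩, ⟨le_rfl, zero_le_one⟩⟩)
  have hfle : ∀ T ∈ Icc (0:ℝ) 1, ∀ s ∈ Icc (0:ℝ) 1, f T s ≤ Mf := fun T hT s hs =>
    le_trans (le_abs_self _) (by simpa [Real.norm_eq_abs] using hMf (T, s) ⟨hT, hs⟩)
  have hgle : ∀ T ∈ Icc (0:ℝ) 1, ∀ s ∈ Icc (0:ℝ) 1, g T s ≤ Mg := fun T hT s hs =>
    le_trans (le_abs_self _) (by simpa [Real.norm_eq_abs] using hMg (T, s) ⟨hT, hs⟩)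
  -- continuity of c at 0
  have hE_pos : 0 < η (φinv x₀) := hηφ_pos x₀ le_rfl
  obtain ⟨δc, hδc_pos, hδc⟩ := Metric.continuousWithinAt_iff.mp (hc_cont 0 self_mem_Ici)
    (η (φinv x₀) / 4) (by positivity)
  -- constants
  have hGc0_pos : 0 < G (c 0) := by
    have := hG_strict x₀ (c 0) le_rfl hx₀_lt; rwa [hGx₀] at this
  set P := G (c 0) + 1 with hPdef
  set κ := Ψ P - Ψ (G (c 0) + 1/2) with hκdef
  have hκ_pos : 0 < κ := by
    refine sub_pos.mpr (hΨ_strict _ _ (by linarith) (by rw [hPdef]; linarith))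
  set τ := min (min (δc / 2) 1) (min ((4 * (Mg + 1))⁻¹) (κ / (Mf + 1))) with hτdef
  have hτ_pos : 0 < τ :=
    lt_min (lt_min (by linarith) one_pos) (lt_min (by positivity) (by positivity))
  refine ⟨τ, hτ_pos, fun t ht => ?_⟩
  obtain ⟨ht0, htτ⟩ := ht
  have ht1 : t ≤ 1 := le_trans htτ (le_trans (min_le_left _ _) (min_le_right _ _))
  have htδ : t < δc :=
    lt_of_le_of_lt (le_trans htτ (le_trans (min_le_left _ _) (min_le_left _ _))) (by linarith)
  have htMg : t * Mg ≤ 1 / 4 := by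
    have h1 : t ≤ (4 * (Mg + 1))⁻¹ := le_trans htτ (le_trans (min_le_right _ _) (min_le_left _ _))
    have h2 : t * Mg ≤ (4 * (Mg + 1))⁻¹ * Mg := mul_le_mul_of_nonneg_right h1 hMg0
    have h3 : (4 * (Mg + 1))⁻¹ * Mg ≤ 1 / 4 := by
      rw [inv_mul_eq_div, div_le_div_iff₀ (by positivity) (by norm_num)]
      nlinarith
    linarith
  have htMf : t * Mf ≤ κ := by
    have h1 : t ≤ κ / (Mf + 1) := le_trans htτ (le_trans (min_le_right _ _) (min_le_right _ _))
    have h2 : t * Mf ≤ κ / (Mf + 1) * Mf := mul_le_mul_of_nonneg_right h1 hMf0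
    have h3 : κ / (Mf + 1) * Mf ≤ κ := by
      rw [div_mul_eq_mul_div, div_le_iff₀ (by positivity)]
      nlinarith
    exact le_trans h2 h3
  -- per-t basics
  have hαt0 : 0 ≤ α t := hα_nonneg t ht0
  have hαtt : α t ≤ t := hα_le t ht0
  have hc0t : c 0 ≤ c t := hc_mono self_mem_Ici ht0 ht0
  have hx₀ct : x₀ ≤ c t := le_trans hx₀_lt.le hc0t
  have hJ_int : IntervalIntegrable (fun s => g t s) volume 0 (α t) :=
    ((hgs_cont t ht0).mono (aux_uIcc_subset_Ici le_rfl hαt0)).intervalIntegrable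
  have hF_int : IntervalIntegrable (fun s => f t s) volume 0 (α t) :=
    ((hfs_cont t ht0).mono (aux_uIcc_subset_Ici le_rfl hαt0)).intervalIntegrable
  have hJ_nonneg : 0 ≤ ∫ s in (0:ℝ)..(α t), g t s :=
    intervalIntegral.integral_nonneg hαt0 (fun s hs => hg_nonneg t ht0 s hs.1)
  have hF_nonneg : 0 ≤ ∫ s in (0:ℝ)..(α t), f t s :=
    intervalIntegral.integral_nonneg hαt0 (fun s hs => hf_nonneg t ht0 s hs.1)
  have hJ_le : (∫ s in (0:ℝ)..(α t), g t s) ≤ t * Mg := by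
    have h1 : (∫ s in (0:ℝ)..(α t), g t s) ≤ ∫ _ in (0:ℝ)..(α t), Mg :=
      intervalIntegral.integral_mono_on hαt0 hJ_int intervalIntegrable_const
        (fun s hs => hgle t ⟨ht0, ht1⟩ s ⟨hs.1, le_trans hs.2 (le_trans hαtt ht1)⟩)
    have h2 : (∫ _ in (0:ℝ)..(α t), Mg) = α t * Mg := by simp
    have h3 : α t * Mg ≤ t * Mg := mul_le_mul_of_nonneg_right hαtt hMg0
    linarith
  have hF_le : (∫ s in (0:ℝ)..(α t), f t s) ≤ t * Mf := by
    have h1 : (∫ s in (0:ℝ)..(α t), f t s) ≤ ∫ _ in (0:ℝ)..(α t), Mf :=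
      intervalIntegral.integral_mono_on hαt0 hF_int intervalIntegrable_const
        (fun s hs => hfle t ⟨ht0, ht1⟩ s ⟨hs.1, le_trans hs.2 (le_trans hαtt ht1)⟩)
    have h2 : (∫ _ in (0:ℝ)..(α t), Mf) = α t * Mf := by simp
    have h3 : α t * Mf ≤ t * Mf := mul_le_mul_of_nonneg_right hαtt hMf0
    linarith
  -- upper bound for G (c t)
  have hGct_le : G (c t) ≤ G (c 0) + 1 / 4 := by
    have h1 := hGdiff (c 0) (c t) hx₀_lt.le hx₀ct
    have hcc : c t - c 0 ≤ η (φinv x₀) / 4 := by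
      have := hδc (mem_Ici.mpr ht0) (by simpa [Real.dist_eq, abs_of_nonneg ht0] using htδ)
      rw [Real.dist_eq] at this
      have := le_abs_self (c t - c 0)
      linarith [abs_nonneg (c t - c 0), (abs_lt.mp (by assumption)).2]
    have h2 : (∫ s in (c 0)..(c t), 1 / η (φinv s)) ≤ ∫ _ in (c 0)..(c t), 1 / η (φinv x₀) := by
      refine intervalIntegral.integral_mono_on hc0t
        ((hρ_cont.mono (aux_uIcc_subset_Ici hx₀_lt.le hx₀ct)).intervalIntegrable)
        intervalIntegrable_const (fun s hs => ?_)
      refine one_div_le_one_div_of_le hE_pos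
        (hη_mono (mem_Ici.mpr (hφinv_nonneg _ hx₀_pos.le))
          (mem_Ici.mpr (hφinv_nonneg _ (le_trans hx₀_pos.le (le_trans hx₀_lt.le hs.1))))
          (hφinv_mono _ _ hx₀_pos.le (le_trans hx₀_lt.le hs.1)))
    have h3 : (∫ _ in (c 0)..(c t), 1 / η (φinv x₀)) = (c t - c 0) * (1 / η (φinv x₀)) := by
      simp [smul_eq_mul, mul_comm]
    have h4 : (c t - c 0) * (1 / η (φinv x₀)) ≤ 1 / 4 := by
      rw [mul_one_div, div_le_iff₀ hE_pos]
      linarith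
    linarith
  have hpt_le : p t ≤ G (c 0) + 1 / 2 := by
    rw [hp]; linarith
  have hpt_lb : G (c 0) ≤ p t := by
    rw [hp]
    have := hG_mono (c 0) (c t) hx₀_lt.le hc0t
    linarith
  have hpt_pos : 0 < p t := lt_of_lt_of_le hGc0_pos hpt_lb
  -- choose y by IVT
  have h1 : Ψ (p t) ≤ Ψ (p t) + (∫ s in (0:ℝ)..(α t), f t s) := le_add_of_nonneg_right hF_nonneg
  have h2 : Ψ (p t) + (∫ s in (0:ℝ)..(α t), f t s) ≤ Ψ P := by
    have ha := hΨ_mono (p t) (G (c 0) + 1/2) hpt_pos.le hpt_le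
    have : (∫ s in (0:ℝ)..(α t), f t s) ≤ κ := le_trans hF_le htMf
    rw [hκdef] at this
    linarith
  have hptP : p t ≤ P := by
    by_contra h
    push_neg at h
    have := hΨ_strict P (p t) (by rw [hPdef]; linarith) h
    linarith
  obtain ⟨y, hy_mem, hy_eq⟩ := intermediate_value_Icc hptP
    (hΨ_cont.mono (fun z hz => le_trans hpt_pos.le hz.1)) ⟨h1, h2⟩
  refine ⟨y, lt_of_lt_of_le hpt_pos hy_mem.1, hy_eq, ?_⟩
  -- ===== main machinery =====
  have hmt := hmain t ht0
  set h := fun s => f t s * η (u s) * w (u s) + g t s * η (u s) with hhdef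
  have hηu : ContinuousOn (fun s => η (u s)) (Ici 0) :=
    hη_cont.comp hu_cont (fun s hs => hu_nonneg s hs)
  have hwu : ContinuousOn (fun s => w (u s)) (Ici 0) :=
    hw_cont.comp hu_cont (fun s hs => hu_nonneg s hs)
  have hh_cont : ContinuousOn h (Ici 0) :=
    (((hfs_cont t ht0).mul hηu).mul hwu).add ((hgs_cont t ht0).mul hηu)
  have hh_nonneg : ∀ s, 0 ≤ s → 0 ≤ h s := fun s hs =>
    add_nonneg (mul_nonneg (mul_nonneg (hf_nonneg t ht0 s hs)
        (hη_nonneg _ (hu_nonneg s hs))) (hw_nonneg _ (hu_nonneg s hs)))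
      (mul_nonneg (hg_nonneg t ht0 s hs) (hη_nonneg _ (hu_nonneg s hs)))
  set m := fun r => c t + ∫ s in (0:ℝ)..r, h s with hmdef
  have hm_cont : ContinuousOn m (Ici 0) :=
    continuousOn_const.add (aux_primitive_cont hh_cont le_rfl)
  have hm_deriv : ∀ x, 0 < x → HasDerivAt m (h x) x := fun x hx =>
    (aux_primitive_deriv hh_cont le_rfl hx).const_add (c t)
  have hm_lb : ∀ r, 0 ≤ r → c t ≤ m r := by
    intro r hr
    have h1 : 0 ≤ ∫ s in (0:ℝ)..r, h s :=
      intervalIntegral.integral_nonneg hr (fun s hs => hh_nonneg s hs.1)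
    simp only [hmdef]; linarith
  have hmx₀ : ∀ r, 0 ≤ r → x₀ ≤ m r := fun r hr => le_trans hx₀ct (hm_lb r hr)
  have hm0 : m 0 = c t := by simp [hmdef]
  have hh_int : ∀ b, 0 ≤ b → IntervalIntegrable h volume 0 b := fun b hb =>
    (hh_cont.mono (aux_uIcc_subset_Ici le_rfl hb)).intervalIntegrable
  have hmono_int : ∀ a b, 0 ≤ a → a ≤ b →
      (∫ s in (0:ℝ)..a, h s) ≤ ∫ s in (0:ℝ)..b, h s := by
    intro a b ha hab
    refine intervalIntegral.integral_mono_interval le_rfl ha hab ?_ (hh_int b (ha.trans hab))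
    exact MeasureTheory.ae_restrict_of_forall_mem measurableSet_Ioc
      (fun s hs => hh_nonneg s hs.1.le)
  -- step (b): φ (u s) ≤ m s for 0 ≤ s ≤ t
  have hub : ∀ s, 0 ≤ s → s ≤ t → φ (u s) ≤ m s := by
    intro s hs0 hst
    have h1 := hmain s hs0
    have hαs0 := hα_nonneg s hs0
    have hαss := hα_le s hs0
    have hint_s : IntervalIntegrable
        (fun σ => f s σ * η (u σ) * w (u σ) + g s σ * η (u σ)) volume 0 (α s) :=
      (((((hfs_cont s hs0).mul hηu).mul hwu).add
        ((hgs_cont s hs0).mul hηu)).mono (aux_uIcc_subset_Ici le_rfl hαs0)).intervalIntegrable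
    have h2 : (∫ σ in (0:ℝ)..(α s), (f s σ * η (u σ) * w (u σ) + g s σ * η (u σ))) ≤
        ∫ σ in (0:ℝ)..(α s), h σ := by
      refine intervalIntegral.integral_mono_on hαs0 hint_s (hh_int (α s) hαs0) (fun σ hσ => ?_)
      have hσ0 := hσ.1
      have hfσ : f s σ ≤ f t σ := (hf_mono σ hσ0) (mem_Ici.mpr hs0) (mem_Ici.mpr ht0) hst
      have hgσ : g s σ ≤ g t σ := (hg_mono σ hσ0) (mem_Ici.mpr hs0) (mem_Ici.mpr ht0) hst
      have e1 : f s σ * η (u σ) * w (u σ) ≤ f t σ * η (u σ) * w (u σ) :=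
        mul_le_mul_of_nonneg_right (mul_le_mul_of_nonneg_right hfσ
          (hη_nonneg _ (hu_nonneg σ hσ0))) (hw_nonneg _ (hu_nonneg σ hσ0))
      have e2 : g s σ * η (u σ) ≤ g t σ * η (u σ) :=
        mul_le_mul_of_nonneg_right hgσ (hη_nonneg _ (hu_nonneg σ hσ0))
      simp only [hhdef]
      linarith
    have h3 : (∫ σ in (0:ℝ)..(α s), h σ) ≤ ∫ σ in (0:ℝ)..s, h σ := hmono_int (α s) s hαs0 hαss
    have h4 : c s ≤ c t := hc_mono (mem_Ici.mpr hs0) (mem_Ici.mpr ht0) hst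
    simp only [hmdef]
    linarith
  have hub' : ∀ s, 0 ≤ s → s ≤ t → u s ≤ φinv (m s) := by
    intro s hs0 hst
    have h0 : (0:ℝ) ≤ φ (u s) := hφ_bij.mapsTo (mem_Ici.mpr (hu_nonneg s hs0))
    have := hφinv_mono _ _ h0 (hub s hs0 hst)
    rwa [hφinv_left (u s) (hu_nonneg s hs0)] at this
  -- the function n
  have hφm_nonneg : ∀ r, 0 ≤ r → 0 ≤ φinv (m r) := fun r hr =>
    hφinv_nonneg _ (le_trans hx₀_pos.le (hmx₀ r hr))
  set n1 := fun s => f t s * w (φinv (m s)) + g t s with hn1def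
  have hn1_cont : ContinuousOn n1 (Ici 0) := by
    refine ((hfs_cont t ht0).mul
      (hw_cont.comp (hφinv_cont.comp ?_ (fun r hr => le_trans hx₀_pos.le (hmx₀ r hr)))
        (fun r hr => hφm_nonneg r hr))).add (hgs_cont t ht0)
    exact hm_cont
  have hn1_nonneg : ∀ s, 0 ≤ s → 0 ≤ n1 s := fun s hs =>
    add_nonneg (mul_nonneg (hf_nonneg t ht0 s hs) (hw_nonneg _ (hφm_nonneg s hs)))
      (hg_nonneg t ht0 s hs)
  set n := fun r => G (c t) + ∫ s in (0:ℝ)..r, n1 s with hndef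
  have hn_cont : ContinuousOn n (Ici 0) :=
    continuousOn_const.add (aux_primitive_cont hn1_cont le_rfl)
  have hn_deriv : ∀ x, 0 < x → HasDerivAt n (n1 x) x := fun x hx =>
    (aux_primitive_deriv hn1_cont le_rfl hx).const_add (G (c t))
  have hGct_pos : 0 < G (c t) := by
    have := hG_strict x₀ (c t) le_rfl (lt_of_lt_of_le hx₀_lt hc0t)
    rwa [hGx₀] at this
  have hn_lb : ∀ r, 0 ≤ r → G (c t) ≤ n r := by
    intro r hr
    have h1 : 0 ≤ ∫ s in (0:ℝ)..r, n1 s :=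
      intervalIntegral.integral_nonneg hr (fun s hs => hn1_nonneg s hs.1)
    simp only [hndef]; linarith
  have hn_nonneg : ∀ r, 0 ≤ r → 0 ≤ n r := fun r hr => le_trans hGct_pos.le (hn_lb r hr)
  have hn0val : n 0 = G (c t) := by simp [hndef]
  -- step (c): G (m r) ≤ n r
  have hGm_le : ∀ r, 0 ≤ r → r ≤ t → G (m r) ≤ n r := by
    intro r hr0 hrt
    have hsub : (∫ s in (0:ℝ)..r, h s * (1 / η (φinv (m s)))) =
        ∫ x in (m 0)..(m r), 1 / η (φinv x) := by
      refine aux_subst hr0 (hm_cont.mono Icc_subset_Ici_self)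
        (fun x hx => (hm_deriv x hx.1).hasDerivWithinAt)
        (hh_cont.mono Icc_subset_Ici_self) (hρ_cont.mono ?_)
      rintro _ ⟨z, hz, rfl⟩
      exact hmx₀ z hz.1
    have e1 : G (m r) - G (c t) = ∫ s in (0:ℝ)..r, h s * (1 / η (φinv (m s))) := by
      rw [hsub, hm0]
      exact hGdiff (c t) (m r) hx₀ct (hmx₀ r hr0)
    have e2 : (∫ s in (0:ℝ)..r, h s * (1 / η (φinv (m s)))) ≤ ∫ s in (0:ℝ)..r, n1 s := by
      refine intervalIntegral.integral_mono_on hr0 ?_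
        ((hn1_cont.mono (aux_uIcc_subset_Ici le_rfl hr0)).intervalIntegrable) (fun s hs => ?_)
      · refine ((hh_cont.mul (continuousOn_const.div
          (hη_cont.comp (hφinv_cont.comp hm_cont
            (fun z hz => le_trans hx₀_pos.le (hmx₀ z hz))) (fun z hz => hφm_nonneg z hz))
          (fun z hz => (hηφ_pos _ (hmx₀ z hz)).ne'))).mono
            (aux_uIcc_subset_Ici le_rfl hr0)).intervalIntegrable
      · have hs0 := hs.1
        have hst := le_trans hs.2 hrt
        have hEs : 0 < η (φinv (m s)) := hηφ_pos _ (hmx₀ s hs0)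
        rw [mul_one_div, div_le_iff₀ hEs]
        have hu_le := hub' s hs0 hst
        have hηle : η (u s) ≤ η (φinv (m s)) :=
          hη_mono (mem_Ici.mpr (hu_nonneg s hs0)) (mem_Ici.mpr (hφm_nonneg s hs0)) hu_le
        have hwle : w (u s) ≤ w (φinv (m s)) :=
          hw_mono (mem_Ici.mpr (hu_nonneg s hs0)) (mem_Ici.mpr (hφm_nonneg s hs0)) hu_le
        simp only [hhdef, hn1def]
        exact aux_ineq1 (hf_nonneg t ht0 s hs0) (hg_nonneg t ht0 s hs0)
          (hη_nonneg _ (hu_nonneg s hs0)) (hw_nonneg _ (hu_nonneg s hs0))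
          (hη_nonneg _ (hφm_nonneg s hs0)) hηle hwle
    have e3 : n r - G (c t) = ∫ s in (0:ℝ)..r, n1 s := by simp only [hndef]; ring
    linarith
  have hm_le_Ginv : ∀ r, 0 ≤ r → r ≤ t → m r ≤ Ginv (n r) := by
    intro r hr0 hrt
    have h1 := hGm_le r hr0 hrt
    have h3 := (hGinv_right (n r) (hn_nonneg r hr0)).1
    by_contra hcon
    push_neg at hcon
    have := hG_strict _ _ (hGinv_x₀ (n r) (hn_nonneg r hr0)) hcon
    rw [h3] at this
    linarith
  -- the function n0
  set n0 := fun r => G (c t) + ∫ s in (0:ℝ)..r, g t s with hn0def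
  have hn0_cont : ContinuousOn n0 (Ici 0) :=
    continuousOn_const.add (aux_primitive_cont (hgs_cont t ht0) le_rfl)
  have hn0_deriv : ∀ x, 0 < x → HasDerivAt n0 (g t x) x := fun x hx =>
    (aux_primitive_deriv (hgs_cont t ht0) le_rfl hx).const_add (G (c t))
  have hn0_lb : ∀ r, 0 ≤ r → G (c t) ≤ n0 r := by
    intro r hr
    have h1 : 0 ≤ ∫ s in (0:ℝ)..r, g t s :=
      intervalIntegral.integral_nonneg hr (fun s hs => hg_nonneg t ht0 s hs.1)
    simp only [hn0def]; linarith
  have hn0_nonneg : ∀ r, 0 ≤ r → 0 ≤ n0 r := fun r hr => le_trans hGct_pos.le (hn0_lb r hr)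
  have hn00 : n0 0 = G (c t) := by simp [hn0def]
  have hn0_le_n : ∀ r, 0 ≤ r → n0 r ≤ n r := by
    intro r hr
    have h1 : (∫ s in (0:ℝ)..r, g t s) ≤ ∫ s in (0:ℝ)..r, n1 s := by
      refine intervalIntegral.integral_mono_on hr
        (((hgs_cont t ht0).mono (aux_uIcc_subset_Ici le_rfl hr)).intervalIntegrable)
        ((hn1_cont.mono (aux_uIcc_subset_Ici le_rfl hr)).intervalIntegrable) (fun s hs => ?_)
      simp only [hn1def]
      exact le_add_of_nonneg_left (mul_nonneg (hf_nonneg t ht0 s hs.1)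
        (hw_nonneg _ (hφm_nonneg s hs.1)))
    simp only [hndef, hn0def]; linarith
  -- substitution identities at Ψ level
  have hσn_cont : ContinuousOn (fun s => 1 / w (φinv (Ginv (n s)))) (Ici 0) :=
    hσ_cont.comp hn_cont (fun r hr => hn_nonneg r hr)
  have hσn0_cont : ContinuousOn (fun s => 1 / w (φinv (Ginv (n0 s)))) (Ici 0) :=
    hσ_cont.comp hn0_cont (fun r hr => hn0_nonneg r hr)
  have hS2 : Ψ (n (α t)) - Ψ (G (c t)) =
      ∫ s in (0:ℝ)..(α t), n1 s * (1 / w (φinv (Ginv (n s)))) := by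
    have hsub := aux_subst hαt0 (hn_cont.mono Icc_subset_Ici_self)
      (fun x hx => (hn_deriv x hx.1).hasDerivWithinAt) (hn1_cont.mono Icc_subset_Ici_self)
      (hσ_cont.mono ?_)
    · rw [hsub, hn0val]
      exact hΨdiff (G (c t)) (n (α t)) hGct_pos.le (hn_nonneg _ hαt0)
    · rintro _ ⟨z, hz, rfl⟩
      exact hn_nonneg z hz.1
  have hS3 : Ψ (n0 (α t)) - Ψ (G (c t)) =
      ∫ s in (0:ℝ)..(α t), g t s * (1 / w (φinv (Ginv (n0 s)))) := by
    have hsub := aux_subst hαt0 (hn0_cont.mono Icc_subset_Ici_self)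
      (fun x hx => (hn0_deriv x hx.1).hasDerivWithinAt)
      ((hgs_cont t ht0).mono Icc_subset_Ici_self) (hσ_cont.mono ?_)
    · rw [hsub, hn00]
      exact hΨdiff (G (c t)) (n0 (α t)) hGct_pos.le (hn0_nonneg _ hαt0)
    · rintro _ ⟨z, hz, rfl⟩
      exact hn0_nonneg z hz.1
  -- pointwise comparison
  have hint3 : IntervalIntegrable (fun s => g t s * (1 / w (φinv (Ginv (n0 s)))))
      volume 0 (α t) :=
    (((hgs_cont t ht0).mul hσn0_cont).mono (aux_uIcc_subset_Ici le_rfl hαt0)).intervalIntegrable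
  have hkey : (∫ s in (0:ℝ)..(α t), n1 s * (1 / w (φinv (Ginv (n s))))) ≤
      (∫ s in (0:ℝ)..(α t), f t s) +
        ∫ s in (0:ℝ)..(α t), g t s * (1 / w (φinv (Ginv (n0 s)))) := by
    have h12 : (∫ s in (0:ℝ)..(α t), n1 s * (1 / w (φinv (Ginv (n s))))) ≤
        ∫ s in (0:ℝ)..(α t), (f t s + g t s * (1 / w (φinv (Ginv (n0 s))))) := by
      refine intervalIntegral.integral_mono_on hαt0
        (((hn1_cont.mul hσn_cont).mono (aux_uIcc_subset_Ici le_rfl hαt0)).intervalIntegrable)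
        ((((hfs_cont t ht0).add ((hgs_cont t ht0).mul hσn0_cont)).mono
          (aux_uIcc_subset_Ici le_rfl hαt0)).intervalIntegrable) (fun s hs => ?_)
      have hs0 := hs.1
      have hst : s ≤ t := le_trans hs.2 hαtt
      have hms := hm_le_Ginv s hs0 hst
      have hGinvn_nonneg : (0:ℝ) ≤ φinv (Ginv (n s)) :=
        hφinv_nonneg _ (le_trans hx₀_pos.le (hGinv_x₀ _ (hn_nonneg s hs0)))
      have hwm_le : w (φinv (m s)) ≤ w (φinv (Ginv (n s)))  :=
        hw_mono (mem_Ici.mpr (hφm_nonneg s hs0)) (mem_Ici.mpr hGinvn_nonneg)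
          (hφinv_mono _ _ (le_trans hx₀_pos.le (hmx₀ s hs0)) hms)
      have hWpos : 0 < w (φinv (Ginv (n s))) := hwσ_pos _ (hn_nonneg s hs0)
      have hfrac1 : w (φinv (m s)) * (1 / w (φinv (Ginv (n s)))) ≤ 1 := by
        rw [mul_one_div, div_le_one hWpos]; exact hwm_le
      have hfrac2 : (1 / w (φinv (Ginv (n s)))) ≤ 1 / w (φinv (Ginv (n0 s))) :=
        hσ_anti (n0 s) (n s) (hn0_nonneg s hs0) (hn0_le_n s hs0)
      simp only [hn1def]
      exact aux_ineq2 (hf_nonneg t ht0 s hs0) (hg_nonneg t ht0 s hs0) hfrac1 hfrac2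
    rwa [intervalIntegral.integral_add hF_int hint3] at h12
  have hn0A : n0 (α t) = p t := by rw [hp]
  have hfinal1 : Ψ (n (α t)) ≤ Ψ (p t) + ∫ s in (0:ℝ)..(α t), f t s := by
    rw [hn0A] at hS3
    linarith [hS2, hS3, hkey]
  -- y dominates n (α t)
  have hyn : n (α t) ≤ y := by
    by_contra hcon
    push_neg at hcon
    have hy0 : (0:ℝ) ≤ y := (lt_of_lt_of_le hpt_pos hy_mem.1).le
    have := hΨ_strict y (n (α t)) hy0 hcon
    rw [hy_eq] at this
    linarith
  -- finish
  have hGiny : Ginv (n (α t)) ≤ Ginv y := hGinv_mono _ _ (hn_nonneg _ hαt0) hyn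
  have hmA : φ (u t) ≤ m (α t) := by simp only [hmdef]; exact hmt
  have hmG : m (α t) ≤ Ginv (n (α t)) := hm_le_Ginv (α t) hαt0 hαtt
  have h0 : (0:ℝ) ≤ φ (u t) := hφ_bij.mapsTo (mem_Ici.mpr (hu_nonneg t ht0))
  have hfin := hφinv_mono _ _ h0 (le_trans hmA (le_trans hmG hGiny))
  rwa [hφinv_left (u t) (hu_nonneg t ht0)] at hfin
end

section
/- Under the hypotheses of Theorem 1 (u, c, α, f, g, φ, η, w, G, Ψ as there), if instead φ(u(t)) ≤ c(t) + ∫_0^{α(t)} f(t,s)η(u(s))w(u(s)) ds + ∫_0^t g(t,s)η(u(s))w(u(s)) ds for all t ≥ 0, then u(t) ≤ φ⁻¹(G⁻¹(Ψ⁻¹(Ψ(G(c(t))) + ∫_0^{α(t)} f(t,s) ds + ∫_0^t g(t,s) ds))) for all t ∈ [0,τ], where τ > 0 is chosen so that Ψ(G(c(t))) + ∫_0^{α(t)} f(t,s) ds + ∫_0^t g(t,s) ds lies in the domain of Ψ⁻¹ for t ∈ [0,τ]. -/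
open Set Filter intervalIntegral Topology MeasureTheory

private lemma aux_deriv_nonneg {α : ℝ → ℝ} {t a : ℝ} (hmono : MonotoneOn α (Set.Ici 0))
    (ht : 0 < t) (h : HasDerivAt α a t) : 0 ≤ a := by
  have h1 : Tendsto (slope α t) (𝓝[>] t) (𝓝 a) :=
    (hasDerivAt_iff_tendsto_slope.1 h).mono_left (nhdsWithin_mono _ fun x hx => hx.ne')
  refine ge_of_tendsto h1 ?_
  filter_upwards [self_mem_nhdsWithin] with x hx
  have hx' : t < x := hx
  rw [slope_def_field]
  exact div_nonneg (sub_nonneg.2 (hmono ht.le (ht.le.trans hx'.le) hx'.le))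
    (sub_nonneg.2 hx'.le)

/-- Theorem 2: second retarded integral inequality.  Conventions on inverse
functions are as in Theorem 1: `φinv` is the two-sided inverse of `φ` on
`[0,∞)`, `Ginv` the inverse of `G`, membership of
`Ψ(G(c t)) + ∫₀^{α t} f + ∫₀^t g` in `Dom(Ψ⁻¹)` is expressed as
`∃ y > 0, Ψ y = …`, and the bound `u t ≤ φ⁻¹(G⁻¹(Ψ⁻¹(…)))` as
`u t ≤ φinv (Ginv y)`.  Here `τ > 0` is assumed to be chosen so that the
argument lies in the domain of `Ψ⁻¹` for all `t ∈ [0,τ]`. -/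
theorem thm2_retarded_inequality
    (u c α : ℝ → ℝ) (f g : ℝ → ℝ → ℝ) (φ φinv η w G Ginv Ψ : ℝ → ℝ)
    (x₀ x₁ τ : ℝ)
    (hu_cont : ContinuousOn u (Ici 0)) (hu_nonneg : ∀ t ≥ (0:ℝ), 0 ≤ u t)
    (hc_cont : ContinuousOn c (Ici 0)) (hc_pos : ∀ t ≥ (0:ℝ), 0 < c t)
    (hc_mono : MonotoneOn c (Ici 0))
    (hα_C1 : ContDiffOn ℝ 1 α (Ici 0)) (hα_mono : MonotoneOn α (Ici 0))
    (hα_nonneg : ∀ t ≥ (0:ℝ), 0 ≤ α t) (hα_le : ∀ t ≥ (0:ℝ), α t ≤ t)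
    (hf_cont : ContinuousOn (Function.uncurry f) (Ici 0 ×ˢ Ici 0))
    (hf_nonneg : ∀ t ≥ (0:ℝ), ∀ s ≥ (0:ℝ), 0 ≤ f t s)
    (hf_mono : ∀ s ≥ (0:ℝ), MonotoneOn (fun t => f t s) (Ici 0))
    (hg_cont : ContinuousOn (Function.uncurry g) (Ici 0 ×ˢ Ici 0))
    (hg_nonneg : ∀ t ≥ (0:ℝ), ∀ s ≥ (0:ℝ), 0 ≤ g t s)
    (hg_mono : ∀ s ≥ (0:ℝ), MonotoneOn (fun t => g t s) (Ici 0))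
    (hφ_cont : ContinuousOn φ (Ici 0)) (hφ_mono : StrictMonoOn φ (Ici 0))
    (hφ_bij : BijOn φ (Ici 0) (Ici 0))
    (hφinv_left : ∀ x ≥ (0:ℝ), φinv (φ x) = x)
    (hφinv_right : ∀ y ≥ (0:ℝ), φ (φinv y) = y)
    (hη_cont : ContinuousOn η (Ici 0)) (hη_mono : MonotoneOn η (Ici 0))
    (hη_pos : ∀ x > (0:ℝ), 0 < η x)
    (hw_cont : ContinuousOn w (Ici 0)) (hw_mono : MonotoneOn w (Ici 0))
    (hw_pos : ∀ x > (0:ℝ), 0 < w x)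
    (hx₀_nonneg : 0 ≤ x₀) (hx₀_lt : x₀ < c 0) (hx₁ : 0 < x₁)
    (hG : ∀ x, G x = ∫ s in x₀..x, 1 / η (φinv s))
    (hG_div : Tendsto G atTop atTop)
    (hGinv_left : ∀ x ≥ x₀, Ginv (G x) = x)
    (hGinv_right : ∀ y ≥ (0:ℝ), G (Ginv y) = y ∧ x₀ ≤ Ginv y)
    (hΨ : ∀ x, Ψ x = ∫ s in x₁..x, 1 / w (φinv (Ginv s)))
    (hmain : ∀ t ≥ (0:ℝ),
      φ (u t) ≤ c t + (∫ s in (0:ℝ)..(α t), f t s * η (u s) * w (u s))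
        + ∫ s in (0:ℝ)..t, g t s * η (u s) * w (u s))
    (hτ : 0 < τ)
    (hdom : ∀ t ∈ Icc (0:ℝ) τ, ∃ y > (0:ℝ),
      Ψ y = Ψ (G (c t)) + (∫ s in (0:ℝ)..(α t), f t s)
        + ∫ s in (0:ℝ)..t, g t s) :
    ∀ t ∈ Icc (0:ℝ) τ,
      ∃ y > (0:ℝ), Ψ y = Ψ (G (c t)) + (∫ s in (0:ℝ)..(α t), f t s)
          + (∫ s in (0:ℝ)..t, g t s) ∧
        u t ≤ φinv (Ginv y) := by
  intro T hT
  obtain ⟨h0T, hTτ⟩ := hT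
  obtain ⟨y, hy_pos, hy_eq⟩ := hdom T ⟨h0T, hTτ⟩
  refine ⟨y, hy_pos, hy_eq, ?_⟩
  -- ### basic facts about φ and φinv
  have hφ0 : φ 0 = 0 := by
    obtain ⟨x, hx, hφx⟩ := hφ_bij.surjOn (self_mem_Ici : (0:ℝ) ∈ Ici 0)
    have h1 : (0:ℝ) ≤ φ 0 := hφ_bij.mapsTo self_mem_Ici
    have h2 : φ 0 ≤ φ x := hφ_mono.monotoneOn self_mem_Ici hx hx
    rw [hφx] at h2
    linarith
  have hφ_nonneg : ∀ x1 ≥ (0:ℝ), 0 ≤ φ x1 := fun x1 hx1 => hφ_bij.mapsTo hx1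
  have hφinv_nonneg : ∀ q ≥ (0:ℝ), 0 ≤ φinv q := by
    intro q hq
    obtain ⟨x, hx, rfl⟩ := hφ_bij.surjOn hq
    rw [hφinv_left x hx]; exact hx
  have hφinv_mono : ∀ a b : ℝ, 0 ≤ a → a ≤ b → φinv a ≤ φinv b := by
    intro a b ha hab
    obtain ⟨xa, hxa, rfl⟩ := hφ_bij.surjOn (show a ∈ Ici (0:ℝ) from ha)
    obtain ⟨xb, hxb, rfl⟩ := hφ_bij.surjOn (show b ∈ Ici (0:ℝ) from ha.trans hab)
    rw [hφinv_left xa hxa, hφinv_left xb hxb]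
    exact (hφ_mono.le_iff_le hxa hxb).1 hab
  have hφinv_pos : ∀ q > (0:ℝ), 0 < φinv q := by
    intro q hq
    rcases (hφinv_nonneg q hq.le).lt_or_eq with h | h
    · exact h
    · exfalso
      have := hφinv_right q hq.le
      rw [← h, hφ0] at this
      linarith
  have hφinv_monoOn : MonotoneOn φinv (Ici 0) := fun a ha b _ hab => hφinv_mono a b ha hab
  have hφinv_contAt : ∀ q > (0:ℝ), ContinuousAt φinv q := by
    intro q hq
    refine continuousAt_of_monotoneOn_of_image_mem_nhds hφinv_monoOn
      (Ici_mem_nhds hq) ?_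
    refine mem_of_superset (Ioi_mem_nhds (hφinv_pos q hq)) ?_
    intro x hx
    exact ⟨φ x, hφ_nonneg x (le_of_lt hx), hφinv_left x (le_of_lt hx)⟩
  -- ### nonnegativity of η and w on [0,∞)
  have hη_nonneg : ∀ x1 ≥ (0:ℝ), 0 ≤ η x1 := by
    intro x1 hx1
    rcases hx1.lt_or_eq with h | h
    · exact (hη_pos x1 h).le
    · subst h
      have hcw : ContinuousWithinAt η (Ioi (0:ℝ)) 0 :=
        (hη_cont 0 self_mem_Ici).mono Ioi_subset_Ici_self
      refine ge_of_tendsto hcw ?_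
      filter_upwards [self_mem_nhdsWithin] with x hx using (hη_pos x hx).le
  have hw_nonneg : ∀ x1 ≥ (0:ℝ), 0 ≤ w x1 := by
    intro x1 hx1
    rcases hx1.lt_or_eq with h | h
    · exact (hw_pos x1 h).le
    · subst h
      have hcw : ContinuousWithinAt w (Ioi (0:ℝ)) 0 :=
        (hw_cont 0 self_mem_Ici).mono Ioi_subset_Ici_self
      refine ge_of_tendsto hcw ?_
      filter_upwards [self_mem_nhdsWithin] with x hx using (hw_pos x hx).le
  -- ### the integrand of G
  set θ : ℝ → ℝ := fun s => 1 / η (φinv s) with hθ_def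
  have hθ_nonneg : ∀ s ≥ (0:ℝ), 0 ≤ θ s := fun s hs =>
    one_div_nonneg.2 (hη_nonneg _ (hφinv_nonneg s hs))
  have hθ_pos : ∀ s > (0:ℝ), 0 < θ s := fun s hs =>
    one_div_pos.2 (hη_pos _ (hφinv_pos s hs))
  have hθ_contAt : ∀ s > (0:ℝ), ContinuousAt θ s := by
    intro s hs
    have h1 : ContinuousAt φinv s := hφinv_contAt s hs
    have h2 : ContinuousAt η (φinv s) :=
      (hη_cont _ (hφinv_nonneg s hs.le)).continuousAt (Ici_mem_nhds (hφinv_pos s hs))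
    exact continuousAt_const.div (h2.comp h1) (ne_of_gt (hη_pos _ (hφinv_pos s hs)))
  have hθ_contOn : ContinuousOn θ (Ioi 0) := fun s hs =>
    (hθ_contAt s hs).continuousWithinAt
  have hθ_int : ∀ b, x₀ ≤ b → IntervalIntegrable θ volume x₀ b := by
    intro b hb
    obtain ⟨x, hx1, hx2⟩ : ∃ x, b ≤ x ∧ 1 ≤ G x :=
      ((eventually_ge_atTop b).and (hG_div.eventually_ge_atTop 1)).exists
    have hint : IntervalIntegrable θ volume x₀ x := by
      by_contra h
      rw [hG, intervalIntegral.integral_undef h] at hx2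
      linarith
    refine hint.mono_set ?_
    rw [uIcc_of_le hb, uIcc_of_le (hb.trans hx1)]
    exact Icc_subset_Icc le_rfl hx1
  have hθ_int2 : ∀ a b, x₀ ≤ a → x₀ ≤ b → IntervalIntegrable θ volume a b :=
    fun a b ha hb => (hθ_int a ha).symm.trans (hθ_int b hb)
  have hG_sub : ∀ a b, x₀ ≤ a → x₀ ≤ b → G b - G a = ∫ s in a..b, θ s := by
    intro a b ha hb
    rw [hG, hG]
    exact intervalIntegral.integral_interval_sub_left (hθ_int b hb) (hθ_int a ha)
  have hG_mono : ∀ a b, x₀ ≤ a → a ≤ b → G a ≤ G b := by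
    intro a b ha hab
    have h := hG_sub a b ha (ha.trans hab)
    have h2 : 0 ≤ ∫ s in a..b, θ s :=
      intervalIntegral.integral_nonneg hab fun s hs =>
        hθ_nonneg s ((hx₀_nonneg.trans ha).trans hs.1)
    linarith
  have hG_strict : ∀ a b, x₀ ≤ a → a < b → G a < G b := by
    intro a b ha hab
    have h := hG_sub a b ha (ha.trans hab.le)
    have h2 : 0 < ∫ s in a..b, θ s := by
      refine intervalIntegral_pos_of_pos_on (hθ_int2 a b ha (ha.trans hab.le)) ?_ hab
      intro s hs
      exact hθ_pos s (lt_of_le_of_lt (hx₀_nonneg.trans ha) hs.1)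
    linarith
  have hGx₀ : G x₀ = 0 := by rw [hG]; simp
  have hG_nonneg : ∀ x ≥ x₀, 0 ≤ G x := fun x hx => hGx₀ ▸ hG_mono x₀ x le_rfl hx
  have hGm_pos : 0 < G (c 0) := hGx₀ ▸ hG_strict x₀ (c 0) le_rfl hx₀_lt
  have hG_hasDeriv : ∀ p, x₀ ≤ p → 0 < p → HasDerivAt G (θ p) p := by
    intro p hp hp0
    have : HasDerivAt (fun x => ∫ s in x₀..x, θ s) (θ p) p :=
      intervalIntegral.integral_hasDerivAt_right (hθ_int p hp)
        (ContinuousOn.stronglyMeasurableAtFilter isOpen_Ioi hθ_contOn p hp0)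
        (hθ_contAt p hp0)
    convert this using 1
    funext x; rw [hG]
  -- ### Ginv facts
  have hGinv_mono : ∀ a b : ℝ, 0 ≤ a → a ≤ b → Ginv a ≤ Ginv b := by
    intro a b ha hab
    by_contra h
    push_neg at h
    have h1 := hGinv_right a ha
    have h2 := hGinv_right b (ha.trans hab)
    have := hG_strict (Ginv b) (Ginv a) h2.2 h
    rw [h1.1, h2.1] at this
    linarith
  have hGinv_gt : ∀ q > (0:ℝ), x₀ < Ginv q := by
    intro q hq
    have h1 := hGinv_right q hq.le
    rcases h1.2.lt_or_eq with h | h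
    · exact h
    · exfalso; rw [← h, hGx₀] at h1; linarith [h1.1]
  have hGinv_pos : ∀ q > (0:ℝ), 0 < Ginv q := fun q hq =>
    lt_of_le_of_lt hx₀_nonneg (hGinv_gt q hq)
  have hGinv_contAt : ∀ q > (0:ℝ), ContinuousAt Ginv q := by
    intro q hq
    refine continuousAt_of_monotoneOn_of_image_mem_nhds
      (fun a ha b _ hab => hGinv_mono a b ha hab) (Ici_mem_nhds hq) ?_
    refine mem_of_superset (Ioi_mem_nhds (hGinv_gt q hq)) ?_
    intro x hx
    exact ⟨G x, hG_nonneg x (le_of_lt hx), hGinv_left x (le_of_lt hx)⟩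
  -- ### the integrand of Ψ
  set ψ : ℝ → ℝ := fun s => 1 / w (φinv (Ginv s)) with hψ_def
  have hψ_pos : ∀ s > (0:ℝ), 0 < ψ s := fun s hs =>
    one_div_pos.2 (hw_pos _ (hφinv_pos _ (hGinv_pos s hs)))
  have hψ_contAt : ∀ s > (0:ℝ), ContinuousAt ψ s := by
    intro s hs
    have h1 : ContinuousAt Ginv s := hGinv_contAt s hs
    have h2 : ContinuousAt φinv (Ginv s) := hφinv_contAt _ (hGinv_pos s hs)
    have h3 : ContinuousAt w (φinv (Ginv s)) :=
      (hw_cont _ (hφinv_nonneg _ (hGinv_pos s hs).le)).continuousAt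
        (Ici_mem_nhds (hφinv_pos _ (hGinv_pos s hs)))
    exact continuousAt_const.div ((h3.comp h2).comp h1)
      (ne_of_gt (hw_pos _ (hφinv_pos _ (hGinv_pos s hs))))
  have hψ_contOn : ContinuousOn ψ (Ioi 0) := fun s hs =>
    (hψ_contAt s hs).continuousWithinAt
  have hψ_int : ∀ a b : ℝ, 0 < a → 0 < b → IntervalIntegrable ψ volume a b := by
    intro a b ha hb
    refine (hψ_contOn.mono ?_).intervalIntegrable
    intro s hs
    rcases Set.mem_uIcc.1 hs with h | h
    · exact lt_of_lt_of_le ha h.1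
    · exact lt_of_lt_of_le hb h.1
  have hΨ_sub : ∀ a b : ℝ, 0 < a → 0 < b → Ψ b - Ψ a = ∫ s in a..b, ψ s := by
    intro a b ha hb
    rw [hΨ, hΨ]
    exact intervalIntegral.integral_interval_sub_left (hψ_int x₁ b hx₁ hb)
      (hψ_int x₁ a hx₁ ha)
  have hΨ_strict : ∀ a b : ℝ, 0 < a → a < b → Ψ a < Ψ b := by
    intro a b ha hab
    have h := hΨ_sub a b ha (ha.trans hab)
    have h2 : 0 < ∫ s in a..b, ψ s := by
      refine intervalIntegral_pos_of_pos_on (hψ_int a b ha (ha.trans hab)) ?_ hab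
      intro s hs
      exact hψ_pos s (ha.trans hs.1)
    linarith
  have hΨ_hasDeriv : ∀ q > (0:ℝ), HasDerivAt Ψ (ψ q) q := by
    intro q hq
    have : HasDerivAt (fun x => ∫ s in x₁..x, ψ s) (ψ q) q :=
      intervalIntegral.integral_hasDerivAt_right (hψ_int x₁ q hx₁ hq)
        (ContinuousOn.stronglyMeasurableAtFilter isOpen_Ioi hψ_contOn q hq)
        (hψ_contAt q hq)
    convert this using 1
    funext x; rw [hΨ]
  -- ### α facts
  have hα0 : α 0 = 0 := le_antisymm (hα_le 0 le_rfl) (hα_nonneg 0 le_rfl)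
  have hα_cont : ContinuousOn α (Ici 0) := hα_C1.continuousOn
  have hα_deriv : ∀ t > (0:ℝ), HasDerivAt α (deriv α t) t := by
    intro t ht
    exact (((hα_C1.differentiableOn one_ne_zero) t ht.le).differentiableAt
      (Ici_mem_nhds ht)).hasDerivAt
  have hA_nonneg : ∀ t > (0:ℝ), 0 ≤ deriv α t := fun t ht =>
    aux_deriv_nonneg hα_mono ht (hα_deriv t ht)
  -- ### max-extended integrands
  have humax_cont : Continuous (fun s : ℝ => u (max s 0)) :=
    hu_cont.comp_continuous (continuous_id.max continuous_const)
      (fun x => le_max_right x 0)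
  have humax_nonneg : ∀ s : ℝ, 0 ≤ u (max s 0) := fun s =>
    hu_nonneg _ (le_max_right s 0)
  set K : ℝ → ℝ := fun s => η (u (max s 0)) * w (u (max s 0)) with hK_def
  have hK_cont : Continuous K := by
    refine Continuous.mul ?_ ?_
    · exact hη_cont.comp_continuous humax_cont (fun x => humax_nonneg x)
    · exact hw_cont.comp_continuous humax_cont (fun x => humax_nonneg x)
  have hK_nonneg : ∀ s, 0 ≤ K s := fun s =>
    mul_nonneg (hη_nonneg _ (humax_nonneg s)) (hw_nonneg _ (humax_nonneg s))
  set fT : ℝ → ℝ := fun s => f T (max s 0) with hfT_def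
  set gT : ℝ → ℝ := fun s => g T (max s 0) with hgT_def
  have hfT_cont : Continuous fT := by
    refine hf_cont.comp_continuous
      (continuous_const.prodMk (continuous_id.max continuous_const)) ?_
    intro x
    exact ⟨h0T, le_max_right x 0⟩
  have hgT_cont : Continuous gT := by
    refine hg_cont.comp_continuous
      (continuous_const.prodMk (continuous_id.max continuous_const)) ?_
    intro x
    exact ⟨h0T, le_max_right x 0⟩
  have hfT_nonneg : ∀ s, 0 ≤ fT s := fun s => hf_nonneg T h0T _ (le_max_right s 0)
  have hgT_nonneg : ∀ s, 0 ≤ gT s := fun s => hg_nonneg T h0T _ (le_max_right s 0)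
  set F₁ : ℝ → ℝ := fun s => fT s * K s with hF₁_def
  set F₂ : ℝ → ℝ := fun s => gT s * K s with hF₂_def
  have hF₁_cont : Continuous F₁ := hfT_cont.mul hK_cont
  have hF₂_cont : Continuous F₂ := hgT_cont.mul hK_cont
  have hF₁_nonneg : ∀ s, 0 ≤ F₁ s := fun s => mul_nonneg (hfT_nonneg s) (hK_nonneg s)
  have hF₂_nonneg : ∀ s, 0 ≤ F₂ s := fun s => mul_nonneg (hgT_nonneg s) (hK_nonneg s)
  -- primitives
  set P₁ : ℝ → ℝ := fun x => ∫ s in (0:ℝ)..x, F₁ s with hP₁_def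
  set P₂ : ℝ → ℝ := fun x => ∫ s in (0:ℝ)..x, F₂ s with hP₂_def
  set Q₁ : ℝ → ℝ := fun x => ∫ s in (0:ℝ)..x, fT s with hQ₁_def
  set Q₂ : ℝ → ℝ := fun x => ∫ s in (0:ℝ)..x, gT s with hQ₂_def
  have hprim_deriv : ∀ (F : ℝ → ℝ), Continuous F → ∀ p : ℝ,
      HasDerivAt (fun x => ∫ s in (0:ℝ)..x, F s) (F p) p := by
    intro F hF p
    exact intervalIntegral.integral_hasDerivAt_right (hF.intervalIntegrable 0 p)
      (hF.stronglyMeasurableAtFilter volume (𝓝 p)) hF.continuousAt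
  have hprim_cont : ∀ (F : ℝ → ℝ), Continuous F →
      Continuous (fun x => ∫ s in (0:ℝ)..x, F s) := by
    intro F hF
    exact continuous_iff_continuousAt.2 fun p => (hprim_deriv F hF p).continuousAt
  have hprim_mono : ∀ (F : ℝ → ℝ), Continuous F → (∀ s, 0 ≤ F s) →
      ∀ a b : ℝ, a ≤ b →
      (∫ s in (0:ℝ)..a, F s) ≤ ∫ s in (0:ℝ)..b, F s := by
    intro F hF hFn a b hab
    have h1 : (∫ s in (0:ℝ)..b, F s) - (∫ s in (0:ℝ)..a, F s) = ∫ s in a..b, F s :=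
      intervalIntegral.integral_interval_sub_left (hF.intervalIntegrable 0 b)
        (hF.intervalIntegrable 0 a)
    have h2 : 0 ≤ ∫ s in a..b, F s :=
      intervalIntegral.integral_nonneg hab fun s _ => hFn s
    linarith
  -- ### the comparison function z
  set z : ℝ → ℝ := fun t => c T + (P₁ (α t) + P₂ t) with hz_def
  have hz_contOn : ContinuousOn z (Ici 0) := by
    refine continuousOn_const.add (ContinuousOn.add ?_ ?_)
    · exact (hprim_cont F₁ hF₁_cont).comp_continuousOn hα_cont
    · exact (hprim_cont F₂ hF₂_cont).continuousOn
  have hz_deriv : ∀ t > (0:ℝ),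
      HasDerivAt z (F₁ (α t) * deriv α t + F₂ t) t := by
    intro t ht
    have h1 : HasDerivAt (fun t => P₁ (α t)) (F₁ (α t) * deriv α t) t :=
      (hprim_deriv F₁ hF₁_cont (α t)).comp t (hα_deriv t ht)
    have h2 : HasDerivAt P₂ (F₂ t) t := hprim_deriv F₂ hF₂_cont t
    exact (h1.add h2).const_add (c T)
  have hz_ge : ∀ t ≥ (0:ℝ), c T ≤ z t := by
    intro t ht
    have h1 : 0 ≤ P₁ (α t) := by
      have := hprim_mono F₁ hF₁_cont hF₁_nonneg 0 (α t) (hα_nonneg t ht)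
      simpa using this
    have h2 : 0 ≤ P₂ t := by
      have := hprim_mono F₂ hF₂_cont hF₂_nonneg 0 t ht
      simpa using this
    simp only [hz_def]
    linarith
  have hcT_pos : 0 < c T := hc_pos T h0T
  have hcT_ge : c 0 ≤ c T := hc_mono self_mem_Ici h0T h0T
  have hz_pos : ∀ t ≥ (0:ℝ), 0 < z t := fun t ht => lt_of_lt_of_le hcT_pos (hz_ge t ht)
  have hz_gt_x₀ : ∀ t ≥ (0:ℝ), x₀ < z t := fun t ht =>
    lt_of_lt_of_le (lt_of_lt_of_le hx₀_lt hcT_ge) (hz_ge t ht)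
  have hz_mono : ∀ a b : ℝ, 0 ≤ a → a ≤ b → z a ≤ z b := by
    intro a b ha hab
    have h1 : P₁ (α a) ≤ P₁ (α b) :=
      hprim_mono F₁ hF₁_cont hF₁_nonneg (α a) (α b)
        (hα_mono ha (ha.trans hab) hab)
    have h2 : P₂ a ≤ P₂ b := hprim_mono F₂ hF₂_cont hF₂_nonneg a b hab
    simp only [hz_def]
    linarith
  -- ### φ(u t) ≤ z t on [0, T]
  have hfs_contOn : ∀ t ≥ (0:ℝ), ContinuousOn (fun s => f t s * η (u s) * w (u s)) (Ici 0) := by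
    intro t ht
    have h1 : ContinuousOn (fun s => f t s) (Ici 0) := by
      refine hf_cont.comp (continuous_const.prodMk continuous_id).continuousOn ?_
      intro s hs; exact ⟨ht, hs⟩
    have h2 : ContinuousOn (fun s => η (u s)) (Ici 0) :=
      hη_cont.comp hu_cont (fun s hs => hu_nonneg s hs)
    have h3 : ContinuousOn (fun s => w (u s)) (Ici 0) :=
      hw_cont.comp hu_cont (fun s hs => hu_nonneg s hs)
    exact (h1.mul h2).mul h3
  have hgs_contOn : ∀ t ≥ (0:ℝ), ContinuousOn (fun s => g t s * η (u s) * w (u s)) (Ici 0) := by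
    intro t ht
    have h1 : ContinuousOn (fun s => g t s) (Ici 0) := by
      refine hg_cont.comp (continuous_const.prodMk continuous_id).continuousOn ?_
      intro s hs; exact ⟨ht, hs⟩
    have h2 : ContinuousOn (fun s => η (u s)) (Ici 0) :=
      hη_cont.comp hu_cont (fun s hs => hu_nonneg s hs)
    have h3 : ContinuousOn (fun s => w (u s)) (Ici 0) :=
      hw_cont.comp hu_cont (fun s hs => hu_nonneg s hs)
    exact (h1.mul h2).mul h3
  have hKeq : ∀ s ≥ (0:ℝ), K s = η (u s) * w (u s) := by
    intro s hs
    simp only [hK_def, max_eq_left hs]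
  have hC1 : ∀ t, 0 ≤ t → t ≤ T → φ (u t) ≤ z t := by
    intro t ht htT
    have hαt : 0 ≤ α t := hα_nonneg t ht
    have hmain_t := hmain t ht
    have hI1 : (∫ s in (0:ℝ)..(α t), f t s * η (u s) * w (u s)) ≤ P₁ (α t) := by
      refine intervalIntegral.integral_mono_on hαt ?_ ?_ ?_
      · exact ((hfs_contOn t ht).mono (by
          rw [uIcc_of_le hαt]; exact fun s hs => hs.1)).intervalIntegrable
      · exact hF₁_cont.intervalIntegrable 0 (α t)
      · intro s hs
        have hs0 : (0:ℝ) ≤ s := hs.1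
        have hfle : f t s ≤ f T s := hf_mono s hs0 ht h0T htT
        have : f t s * η (u s) * w (u s) ≤ f T s * (η (u s) * w (u s)) := by
          rw [mul_assoc]
          exact mul_le_mul_of_nonneg_right hfle
            (mul_nonneg (hη_nonneg _ (hu_nonneg s hs0)) (hw_nonneg _ (hu_nonneg s hs0)))
        calc f t s * η (u s) * w (u s) ≤ f T s * (η (u s) * w (u s)) := this
          _ = F₁ s := by
              simp only [hF₁_def, hfT_def, hKeq s hs0, max_eq_left hs0]
    have hI2 : (∫ s in (0:ℝ)..t, g t s * η (u s) * w (u s)) ≤ P₂ t := by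
      refine intervalIntegral.integral_mono_on ht ?_ ?_ ?_
      · exact ((hgs_contOn t ht).mono (by
          rw [uIcc_of_le ht]; exact fun s hs => hs.1)).intervalIntegrable
      · exact hF₂_cont.intervalIntegrable 0 t
      · intro s hs
        have hs0 : (0:ℝ) ≤ s := hs.1
        have hgle : g t s ≤ g T s := hg_mono s hs0 ht h0T htT
        have : g t s * η (u s) * w (u s) ≤ g T s * (η (u s) * w (u s)) := by
          rw [mul_assoc]
          exact mul_le_mul_of_nonneg_right hgle
            (mul_nonneg (hη_nonneg _ (hu_nonneg s hs0)) (hw_nonneg _ (hu_nonneg s hs0)))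
        calc g t s * η (u s) * w (u s) ≤ g T s * (η (u s) * w (u s)) := this
          _ = F₂ s := by
              simp only [hF₂_def, hgT_def, hKeq s hs0, max_eq_left hs0]
    have hct : c t ≤ c T := hc_mono ht h0T htT
    simp only [hz_def]
    linarith
  have hu_le : ∀ t, 0 ≤ t → t ≤ T → u t ≤ φinv (z t) := by
    intro t ht htT
    have h1 := hC1 t ht htT
    have h2 : u t = φinv (φ (u t)) := (hφinv_left (u t) (hu_nonneg t ht)).symm
    rw [h2]
    exact hφinv_mono _ _ (hφ_nonneg _ (hu_nonneg t ht)) h1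
  -- ### the functions v and ρ
  set v : ℝ → ℝ := fun t => Ψ (G (z t)) with hv_def
  set ρ : ℝ → ℝ := fun t => Ψ (G (c T)) + (Q₁ (α t) + Q₂ t) with hρ_def
  have hGz_pos : ∀ t ≥ (0:ℝ), 0 < G (z t) := by
    intro t ht
    exact lt_of_lt_of_le hGm_pos
      (hG_mono (c 0) (z t) hx₀_lt.le (hcT_ge.trans (hz_ge t ht)))
  have hv_deriv : ∀ t > (0:ℝ),
      HasDerivAt v (ψ (G (z t)) * (θ (z t) * (F₁ (α t) * deriv α t + F₂ t))) t := by
    intro t ht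
    have hGz : HasDerivAt G (θ (z t)) (z t) :=
      hG_hasDeriv (z t) (hz_gt_x₀ t ht.le).le (hz_pos t ht.le)
    have hΨd : HasDerivAt Ψ (ψ (G (z t))) (G (z t)) :=
      hΨ_hasDeriv (G (z t)) (hGz_pos t ht.le)
    have h1 : HasDerivAt (G ∘ z) (θ (z t) * (F₁ (α t) * deriv α t + F₂ t)) t :=
      hGz.comp t (hz_deriv t ht)
    have h2 := hΨd.comp t h1
    simpa [Function.comp_def] using h2
  have hρ_deriv : ∀ t > (0:ℝ),
      HasDerivAt ρ (fT (α t) * deriv α t + gT t) t := by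
    intro t ht
    have h1 : HasDerivAt (fun t => Q₁ (α t)) (fT (α t) * deriv α t) t :=
      (hprim_deriv fT hfT_cont (α t)).comp t (hα_deriv t ht)
    have h2 : HasDerivAt Q₂ (gT t) t := hprim_deriv gT hgT_cont t
    exact (h1.add h2).const_add (Ψ (G (c T)))
  -- ### the key derivative inequality
  have hkey : ∀ t, 0 < t → t ≤ T →
      ψ (G (z t)) * (θ (z t) * (F₁ (α t) * deriv α t + F₂ t))
        ≤ fT (α t) * deriv α t + gT t := by
    intro t ht htT
    set X : ℝ := φinv (z t) with hX_def
    have hX_pos : 0 < X := hφinv_pos _ (hz_pos t ht.le)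
    have hηX : 0 < η X := hη_pos X hX_pos
    have hwX : 0 < w X := hw_pos X hX_pos
    have hψeq : ψ (G (z t)) = 1 / w X := by
      simp only [hψ_def, hGinv_left (z t) (hz_gt_x₀ t ht.le).le, hX_def]
    have hθeq : θ (z t) = 1 / η X := rfl
    -- bounds on K
    have hαt0 : 0 ≤ α t := hα_nonneg t ht.le
    have huαt : u (α t) ≤ X := by
      refine le_trans (hu_le (α t) hαt0 ((hα_le t ht.le).trans htT)) ?_
      exact hφinv_mono _ _ (hz_pos (α t) hαt0).le (hz_mono (α t) t hαt0 (hα_le t ht.le))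
    have hut : u t ≤ X := hu_le t ht.le htT
    have hKαt : K (α t) ≤ η X * w X := by
      simp only [hK_def, max_eq_left hαt0]
      refine mul_le_mul (hη_mono (hu_nonneg _ hαt0) hX_pos.le huαt)
        (hw_mono (hu_nonneg _ hαt0) hX_pos.le huαt)
        (hw_nonneg _ (hu_nonneg _ hαt0)) (hη_nonneg _ hX_pos.le)
    have hKt : K t ≤ η X * w X := by
      simp only [hK_def, max_eq_left ht.le]
      refine mul_le_mul (hη_mono (hu_nonneg _ ht.le) hX_pos.le hut)
        (hw_mono (hu_nonneg _ ht.le) hX_pos.le hut)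
        (hw_nonneg _ (hu_nonneg _ ht.le)) (hη_nonneg _ hX_pos.le)
    have hA : 0 ≤ deriv α t := hA_nonneg t ht
    have hS : F₁ (α t) * deriv α t + F₂ t
        ≤ (fT (α t) * deriv α t + gT t) * (η X * w X) := by
      have h1 : F₁ (α t) * deriv α t ≤ fT (α t) * (η X * w X) * deriv α t := by
        refine mul_le_mul_of_nonneg_right ?_ hA
        exact mul_le_mul_of_nonneg_left hKαt (hfT_nonneg (α t))
      have h2 : F₂ t ≤ gT t * (η X * w X) :=
        mul_le_mul_of_nonneg_left hKt (hgT_nonneg t)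
      have : fT (α t) * (η X * w X) * deriv α t + gT t * (η X * w X)
          = (fT (α t) * deriv α t + gT t) * (η X * w X) := by ring
      linarith
    rw [hψeq, hθeq]
    have heq : (1 / w X) * ((1 / η X) * (F₁ (α t) * deriv α t + F₂ t))
        = (F₁ (α t) * deriv α t + F₂ t) / (η X * w X) := by
      field_simp
    rw [heq, div_le_iff₀ (by positivity)]
    exact hS
  -- ### continuity of v and ρ
  have hv_contOn : ContinuousOn v (Ici 0) := by
    intro t ht
    have hGz : ContinuousAt G (z t) :=
      (hG_hasDeriv (z t) (hz_gt_x₀ t ht).le (hz_pos t ht)).continuousAt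
    have hΨd : ContinuousAt Ψ (G (z t)) :=
      (hΨ_hasDeriv (G (z t)) (hGz_pos t ht)).continuousAt
    exact (hΨd.comp hGz).comp_continuousWithinAt (hz_contOn t ht)
  have hρ_contOn : ContinuousOn ρ (Ici 0) := by
    refine continuousOn_const.add (ContinuousOn.add ?_ ?_)
    · exact (hprim_cont fT hfT_cont).comp_continuousOn hα_cont
    · exact (hprim_cont gT hgT_cont).continuousOn
  -- ### monotone comparison
  have hmonoc : MonotoneOn (fun t => ρ t - v t) (Icc 0 T) := by
    have hsub : Icc (0:ℝ) T ⊆ Ici 0 := fun x hx => hx.1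
    refine monotoneOn_of_deriv_nonneg (convex_Icc 0 T)
      ((hρ_contOn.mono hsub).sub (hv_contOn.mono hsub)) ?_ ?_
    · rw [interior_Icc]
      intro t htI
      exact ((hρ_deriv t htI.1).sub (hv_deriv t htI.1)).differentiableAt.differentiableWithinAt
    · rw [interior_Icc]
      intro t htI
      rw [show (fun t => ρ t - v t) = ρ - v from rfl, ((hρ_deriv t htI.1).sub (hv_deriv t htI.1)).deriv]
      have := hkey t htI.1 htI.2.le
      linarith
  have hz0 : z 0 = c T := by
    simp [hz_def, hα0, hP₁_def, hP₂_def]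
  have hv0 : v 0 = Ψ (G (c T)) := by rw [hv_def]; simp only [hz0]
  have hρ0 : ρ 0 = Ψ (G (c T)) := by
    simp [hρ_def, hα0, hQ₁_def, hQ₂_def]
  have hvT_le : v T ≤ ρ T := by
    have h := hmonoc (left_mem_Icc.2 h0T) (right_mem_Icc.2 h0T) h0T
    simp only at h
    linarith [hv0, hρ0]
  -- ### conclusion
  have hαT0 : 0 ≤ α T := hα_nonneg T h0T
  have e1 : (∫ s in (0:ℝ)..(α T), f T s) = Q₁ (α T) := by
    refine intervalIntegral.integral_congr ?_
    intro s hs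
    rw [uIcc_of_le hαT0] at hs
    simp only [hfT_def, max_eq_left hs.1]
  have e2 : (∫ s in (0:ℝ)..T, g T s) = Q₂ T := by
    refine intervalIntegral.integral_congr ?_
    intro s hs
    rw [uIcc_of_le h0T] at hs
    simp only [hgT_def, max_eq_left hs.1]
  have hρT : ρ T = Ψ y := by
    rw [hρ_def]
    rw [hy_eq, e1, e2]
    ring
  have hΨ_le : Ψ (G (z T)) ≤ Ψ y := by
    have : v T = Ψ (G (z T)) := rfl
    linarith [hvT_le, hρT.symm ▸ hvT_le]
  have hGzT_le : G (z T) ≤ y := by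
    by_contra h
    push_neg at h
    have := hΨ_strict y (G (z T)) hy_pos h
    linarith
  have hzT_le : z T ≤ Ginv y := by
    have h1 : z T = Ginv (G (z T)) := (hGinv_left (z T) (hz_gt_x₀ T h0T).le).symm
    rw [h1]
    exact hGinv_mono _ _ (hGz_pos T h0T).le hGzT_le
  refine le_trans (hu_le T h0T le_rfl) ?_
  exact hφinv_mono _ _ (hz_pos T h0T).le hzT_le
end

section
/- Let m > n > 0, c > 0, let u : [0,∞) → [0,∞) be continuous, let α ∈ C¹([0,∞),[0,∞)) be nondecreasing with α(t) ≤ t, let f, g : [0,∞) → [0,∞) be continuous, and let w : [0,∞) → [0,∞) be continuous nondecreasing with w(x) > 0 for x > 0. Suppose u^m(t) ≤ c^{m/(m−n)} + (m/(m−n)) ∫_0^{α(t)} [f(s) u^n(s) w(u(s)) + g(s) u^n(s)] ds for all t ≥ 0. Define Ψ(x) = ∫_1^x ds/w(s^{1/(m−n)}) for x > 0. Then there exists τ > 0 such that for t ∈ [0,τ], Ψ(c + ∫_0^{α(t)} g(s) ds) + ∫_0^{α(t)} f(s) ds lies in the domain of Ψ⁻¹ and u(t) ≤ [Ψ⁻¹(Ψ(c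 + ∫_0^{α(t)} g(s) ds) + ∫_0^{α(t)} f(s) ds)]^{1/(m−n)}. -/
open Set Filter intervalIntegral MeasureTheory

set_option maxHeartbeats 2000000 in
/-- Sun's Theorem 2.1 (corollary of Theorem 1).  The statement
`Ψ(c + ∫₀^{α t} g) + ∫₀^{α t} f ∈ Dom(Ψ⁻¹)` together with the bound
`u t ≤ [Ψ⁻¹(…)]^{1/(m-n)}` is expressed as
`∃ y > 0, Ψ y = … ∧ u t ≤ y^{1/(m-n)}`. -/
theorem sun_thm21 (m n c : ℝ) (hmn : n < m) (hn : 0 < n) (hc : 0 < c)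
    (u α f g w Ψ : ℝ → ℝ)
    (hu_cont : ContinuousOn u (Ici 0)) (hu_nonneg : ∀ t ≥ (0:ℝ), 0 ≤ u t)
    (hα_C1 : ContDiffOn ℝ 1 α (Ici 0)) (hα_mono : MonotoneOn α (Ici 0))
    (hα_nonneg : ∀ t ≥ (0:ℝ), 0 ≤ α t) (hα_le : ∀ t ≥ (0:ℝ), α t ≤ t)
    (hf_cont : ContinuousOn f (Ici 0)) (hf_nonneg : ∀ s ≥ (0:ℝ), 0 ≤ f s)
    (hg_cont : ContinuousOn g (Ici 0)) (hg_nonneg : ∀ s ≥ (0:ℝ), 0 ≤ g s)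
    (hw_cont : ContinuousOn w (Ici 0)) (hw_mono : MonotoneOn w (Ici 0))
    (hw_pos : ∀ x > (0:ℝ), 0 < w x)
    (hΨ : ∀ x, Ψ x = ∫ s in (1:ℝ)..x, 1 / w (s ^ (1 / (m - n))))
    (hmain : ∀ t ≥ (0:ℝ),
      u t ^ m ≤ c ^ (m / (m - n)) + (m / (m - n)) *
        ∫ s in (0:ℝ)..(α t), (f s * u s ^ n * w (u s) + g s * u s ^ n)) :
    ∃ τ > (0:ℝ), ∀ t ∈ Icc (0:ℝ) τ,
      ∃ y > (0:ℝ),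
        Ψ y = Ψ (c + ∫ s in (0:ℝ)..(α t), g s) + (∫ s in (0:ℝ)..(α t), f s) ∧
        u t ≤ y ^ (1 / (m - n)) := by
  have hk : (0:ℝ) < m - n := by linarith
  have hm0 : (0:ℝ) < m := by linarith
  set q : ℝ := 1 / (m - n) with hqdef
  set p : ℝ := m / (m - n) with hpdef
  obtain rfl : Ψ = fun x => ∫ s in (1:ℝ)..x, 1 / w (s ^ q) := funext hΨ
  have hq0 : 0 < q := by rw [hqdef]; positivity
  have hp0 : 0 < p := by rw [hpdef]; positivity
  have hp1 : 1 < p := by rw [hpdef]; rw [lt_div_iff₀ hk]; linarith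
  have hpq : (1/p) * q = 1/m := by
    rw [hqdef, hpdef]; field_simp; try ring
  have hnq : (1/p) * (n*q) = n/m := by
    rw [hqdef, hpdef]; field_simp; try ring
  have hp1m : 1/p - 1 = -(n/m) := by
    rw [hpdef]; field_simp; try ring
  have hcpc : (c ^ p) ^ (1/p) = c := by
    rw [← Real.rpow_mul hc.le, mul_one_div_cancel hp0.ne', Real.rpow_one]
  -- basic integrability
  have hf_int : ∀ a b : ℝ, 0 ≤ a → 0 ≤ b → IntervalIntegrable f volume a b := fun a b ha hb =>
    (hf_cont.mono (fun x hx => le_trans (le_min ha hb) hx.1)).intervalIntegrable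
  have hg_int : ∀ a b : ℝ, 0 ≤ a → 0 ≤ b → IntervalIntegrable g volume a b := fun a b ha hb =>
    (hg_cont.mono (fun x hx => le_trans (le_min ha hb) hx.1)).intervalIntegrable
  -- the inner integrand
  set h₀ : ℝ → ℝ := fun s => f s * u s ^ n * w (u s) + g s * u s ^ n with hh0def
  have hu_maps : MapsTo u (Ici 0) (Ici 0) := fun s hs => hu_nonneg s hs
  have hun_cont : ContinuousOn (fun s => u s ^ n) (Ici 0) :=
    hu_cont.rpow_const (fun s _ => Or.inr hn.le)
  have hh0_cont : ContinuousOn h₀ (Ici 0) :=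
    ((hf_cont.mul hun_cont).mul (hw_cont.comp hu_cont hu_maps)).add (hg_cont.mul hun_cont)
  have hh0_nonneg : ∀ s ∈ Ici (0:ℝ), 0 ≤ h₀ s := by
    intro s hs
    rcases eq_or_lt_of_le (hu_nonneg s hs) with h | h
    · simp [hh0def, ← h, Real.zero_rpow hn.ne']
    · have hun : 0 ≤ u s ^ n := Real.rpow_nonneg (hu_nonneg s hs) n
      exact add_nonneg (mul_nonneg (mul_nonneg (hf_nonneg s hs) hun) (hw_pos _ h).le)
        (mul_nonneg (hg_nonneg s hs) hun)
  have hh0_int : ∀ a b : ℝ, 0 ≤ a → 0 ≤ b → IntervalIntegrable h₀ volume a b := fun a b ha hb =>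
    (hh0_cont.mono (fun x hx => le_trans (le_min ha hb) hx.1)).intervalIntegrable
  set Z : ℝ → ℝ := fun r => c ^ p + p * ∫ s in (0:ℝ)..r, h₀ s with hZdef
  have hZc : ∀ r ≥ (0:ℝ), c ^ p ≤ Z r := by
    intro r hr
    have h1 : 0 ≤ ∫ s in (0:ℝ)..r, h₀ s :=
      intervalIntegral.integral_nonneg hr (fun x hx => hh0_nonneg x hx.1)
    have h2 : 0 ≤ p * ∫ s in (0:ℝ)..r, h₀ s := mul_nonneg hp0.le h1
    simp only [hZdef]; linarith
  have hZpos : ∀ r ≥ (0:ℝ), 0 < Z r := fun r hr =>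
    lt_of_lt_of_le (Real.rpow_pos_of_pos hc p) (hZc r hr)
  have hZmono : ∀ a b : ℝ, 0 ≤ a → a ≤ b → Z a ≤ Z b := by
    intro a b ha hab
    have hsplit : (∫ s in (0:ℝ)..a, h₀ s) + (∫ s in a..b, h₀ s) = ∫ s in (0:ℝ)..b, h₀ s :=
      intervalIntegral.integral_add_adjacent_intervals (hh0_int 0 a le_rfl ha)
        (hh0_int a b ha (ha.trans hab))
    have hpos : 0 ≤ ∫ s in a..b, h₀ s :=
      intervalIntegral.integral_nonneg hab (fun x hx => hh0_nonneg x (le_trans ha hx.1))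
    simp only [hZdef]
    nlinarith [hp0.le]
  have hu_le : ∀ s ≥ (0:ℝ), u s ≤ Z s ^ (1/m) := by
    intro s hs
    have h1 : u s ^ m ≤ Z (α s) := hmain s hs
    have h2 : Z (α s) ≤ Z s := hZmono (α s) s (hα_nonneg s hs) (hα_le s hs)
    calc u s = (u s ^ m) ^ (1/m) := by
          rw [← Real.rpow_mul (hu_nonneg s hs), mul_one_div_cancel hm0.ne', Real.rpow_one]
      _ ≤ Z s ^ (1/m) := Real.rpow_le_rpow (Real.rpow_nonneg (hu_nonneg s hs) m)
          (h1.trans h2) (by positivity)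
  set v : ℝ → ℝ := fun s => Z s ^ (1/p) with hvdef
  have hvc : ∀ s ≥ (0:ℝ), c ≤ v s := by
    intro s hs
    calc c = (c ^ p) ^ (1/p) := hcpc.symm
      _ ≤ Z s ^ (1/p) := Real.rpow_le_rpow (Real.rpow_nonneg hc.le p) (hZc s hs) (by positivity)
  have hv_pos : ∀ s ≥ (0:ℝ), 0 < v s := fun s hs => lt_of_lt_of_le hc (hvc s hs)
  have hu_le_v : ∀ s ≥ (0:ℝ), u s ≤ v s ^ q := by
    intro s hs
    have hvq : v s ^ q = Z s ^ (1/m) := by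
      rw [hvdef]; dsimp only
      rw [← Real.rpow_mul (hZpos s hs).le, hpq]
    rw [hvq]; exact hu_le s hs
  have hZ_cont : ContinuousOn Z (Icc 0 1) := by
    have hint : IntegrableOn h₀ (uIcc (0:ℝ) 1) volume := by
      rw [uIcc_of_le zero_le_one]
      exact (hh0_cont.mono Icc_subset_Ici_self).integrableOn_Icc
    have := intervalIntegral.continuousOn_primitive_interval hint
    rw [uIcc_of_le zero_le_one] at this
    exact continuousOn_const.add (continuousOn_const.mul this)
  have hv_cont : ContinuousOn v (Icc 0 1) :=
    hZ_cont.rpow_const (fun x hx => Or.inl (hZpos x hx.1).ne')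
  set ψ : ℝ → ℝ := fun s => f s * v s ^ (n*q) * w (v s ^ q) + g s * v s ^ (n*q) with hψdef
  have hvq_cont : ContinuousOn (fun s => v s ^ q) (Icc 0 1) :=
    hv_cont.rpow_const (fun x hx => Or.inl (hv_pos x hx.1).ne')
  have hvnq_cont : ContinuousOn (fun s => v s ^ (n*q)) (Icc 0 1) :=
    hv_cont.rpow_const (fun x hx => Or.inl (hv_pos x hx.1).ne')
  have hψ_cont : ContinuousOn ψ (Icc 0 1) := by
    have hwvq : ContinuousOn (fun s => w (v s ^ q)) (Icc 0 1) :=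
      hw_cont.comp hvq_cont (fun x hx => Real.rpow_nonneg (hv_pos x hx.1).le q)
    exact (((hf_cont.mono Icc_subset_Ici_self).mul hvnq_cont).mul hwvq).add
      ((hg_cont.mono Icc_subset_Ici_self).mul hvnq_cont)
  have hψ_nonneg : ∀ s ∈ Icc (0:ℝ) 1, 0 ≤ ψ s := by
    intro s hs
    have hvnq : 0 ≤ v s ^ (n*q) := Real.rpow_nonneg (hv_pos s hs.1).le _
    have hwv : 0 < w (v s ^ q) := hw_pos _ (Real.rpow_pos_of_pos (hv_pos s hs.1) q)
    exact add_nonneg (mul_nonneg (mul_nonneg (hf_nonneg s hs.1) hvnq) hwv.le)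
      (mul_nonneg (hg_nonneg s hs.1) hvnq)
  have hhψ : ∀ s ∈ Icc (0:ℝ) 1, h₀ s ≤ ψ s := by
    intro s hs
    have hs0 : (0:ℝ) ≤ s := hs.1
    have hvs := hv_pos s hs0
    have huv : u s ≤ v s ^ q := hu_le_v s hs0
    have hun_le : u s ^ n ≤ v s ^ (n*q) := by
      have hpow : (v s ^ q) ^ n = v s ^ (n*q) := by
        rw [← Real.rpow_mul hvs.le, mul_comm]
      rw [← hpow]
      exact Real.rpow_le_rpow (hu_nonneg s hs0) huv hn.le
    rcases eq_or_lt_of_le (hu_nonneg s hs0) with h | h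
    · have hz : h₀ s = 0 := by simp [hh0def, ← h, Real.zero_rpow hn.ne']
      rw [hz]; exact hψ_nonneg s hs
    · have hwu : w (u s) ≤ w (v s ^ q) :=
        hw_mono (mem_Ici.mpr (hu_nonneg s hs0))
          (mem_Ici.mpr (Real.rpow_nonneg hvs.le q)) huv
      have hwu0 : 0 ≤ w (u s) := (hw_pos _ h).le
      have hvnq0 : 0 ≤ v s ^ (n*q) := Real.rpow_nonneg hvs.le _
      have t1 : f s * u s ^ n * w (u s) ≤ f s * v s ^ (n*q) * w (v s ^ q) :=
        mul_le_mul (mul_le_mul_of_nonneg_left hun_le (hf_nonneg s hs0)) hwu hwu0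
          (mul_nonneg (hf_nonneg s hs0) hvnq0)
      have t2 : g s * u s ^ n ≤ g s * v s ^ (n*q) :=
        mul_le_mul_of_nonneg_left hun_le (hg_nonneg s hs0)
      simp only [hh0def, hψdef]
      exact add_le_add t1 t2
  have hψ_int : ∀ a b : ℝ, a ∈ Icc (0:ℝ) 1 → b ∈ Icc (0:ℝ) 1 →
      IntervalIntegrable ψ volume a b := by
    intro a b ha hb
    apply (hψ_cont.mono ?_).intervalIntegrable
    intro x hx
    exact ⟨le_trans (le_min ha.1 hb.1) hx.1, le_trans hx.2 (max_le ha.2 hb.2)⟩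
  set A : ℝ → ℝ := fun r => c ^ p + p * ∫ s in (0:ℝ)..r, ψ s with hAdef
  have hZA : ∀ r ∈ Icc (0:ℝ) 1, Z r ≤ A r := by
    intro r hr
    have hle : (∫ s in (0:ℝ)..r, h₀ s) ≤ ∫ s in (0:ℝ)..r, ψ s := by
      apply intervalIntegral.integral_mono_on hr.1 (hh0_int 0 r le_rfl hr.1)
        (hψ_int 0 r ⟨le_rfl, zero_le_one⟩ hr)
      intro x hx
      exact hhψ x ⟨hx.1, le_trans hx.2 hr.2⟩
    simp only [hZdef, hAdef]
    nlinarith [hp0.le]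
  have hAc : ∀ r ∈ Icc (0:ℝ) 1, c ^ p ≤ A r := fun r hr => le_trans (hZc r hr.1) (hZA r hr)
  have hA_pos : ∀ r ∈ Icc (0:ℝ) 1, 0 < A r := fun r hr =>
    lt_of_lt_of_le (Real.rpow_pos_of_pos hc p) (hAc r hr)
  set B : ℝ → ℝ := fun r => A r ^ (1/p) with hBdef
  have hBc : ∀ r ∈ Icc (0:ℝ) 1, c ≤ B r := by
    intro r hr
    calc c = (c ^ p) ^ (1/p) := hcpc.symm
      _ ≤ A r ^ (1/p) := Real.rpow_le_rpow (Real.rpow_nonneg hc.le p) (hAc r hr) (by positivity)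
  have hB_pos : ∀ r ∈ Icc (0:ℝ) 1, 0 < B r := fun r hr => lt_of_lt_of_le hc (hBc r hr)
  have hvB : ∀ r ∈ Icc (0:ℝ) 1, v r ≤ B r := fun r hr =>
    Real.rpow_le_rpow (hZpos r hr.1).le (hZA r hr) (by positivity)
  have hA_cont : ContinuousOn A (Icc 0 1) := by
    have hint : IntegrableOn ψ (uIcc (0:ℝ) 1) volume := by
      rw [uIcc_of_le zero_le_one]
      exact hψ_cont.integrableOn_Icc
    have := intervalIntegral.continuousOn_primitive_interval hint
    rw [uIcc_of_le zero_le_one] at this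
    exact continuousOn_const.add (continuousOn_const.mul this)
  have hB_cont : ContinuousOn B (Icc 0 1) :=
    hA_cont.rpow_const (fun x hx => Or.inl (hA_pos x hx).ne')
  -- the function φ and properties of Ψ
  set φ : ℝ → ℝ := fun σ => 1 / w (σ ^ q) with hφdef
  have hwq_pos : ∀ σ : ℝ, 0 < σ → 0 < w (σ ^ q) := fun σ hσ =>
    hw_pos _ (Real.rpow_pos_of_pos hσ q)
  have hwq_cont : ContinuousOn (fun σ : ℝ => w (σ ^ q)) (Ioi 0) := by
    have hinner : ContinuousOn (fun σ : ℝ => σ ^ q) (Ioi (0:ℝ)) :=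
      continuousOn_id.rpow_const (fun x hx => Or.inl (ne_of_gt hx))
    exact hw_cont.comp hinner (fun x hx => (Real.rpow_pos_of_pos hx q).le)
  have hφ_cont : ContinuousOn φ (Ioi 0) :=
    continuousOn_const.div hwq_cont (fun x hx => (hwq_pos x hx).ne')
  have hφ_pos : ∀ σ : ℝ, 0 < σ → 0 < φ σ := fun σ hσ =>
    div_pos one_pos (hwq_pos σ hσ)
  have hφ_int : ∀ a b : ℝ, 0 < a → 0 < b → IntervalIntegrable φ volume a b := by
    intro a b ha hb
    apply (hφ_cont.mono ?_).intervalIntegrable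
    intro x hx
    exact lt_of_lt_of_le (lt_min ha hb) hx.1
  have hΨd : ∀ x : ℝ, 0 < x →
      HasDerivAt (fun x => ∫ s in (1:ℝ)..x, φ s) (φ x) x := by
    intro x hx
    exact intervalIntegral.integral_hasDerivAt_right (hφ_int 1 x one_pos hx)
      (ContinuousOn.stronglyMeasurableAtFilter isOpen_Ioi hφ_cont x hx)
      (hφ_cont.continuousAt (Ioi_mem_nhds hx))
  have hΨ_contOn : ContinuousOn (fun x => ∫ s in (1:ℝ)..x, φ s) (Ioi 0) := fun x hx =>
    ((hΨd x hx).continuousAt).continuousWithinAt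
  have hΨmono : ∀ a b : ℝ, 0 < a → a < b →
      (∫ s in (1:ℝ)..a, φ s) < ∫ s in (1:ℝ)..b, φ s := by
    intro a b ha hab
    have hb : 0 < b := ha.trans hab
    have hsub : (∫ s in (1:ℝ)..b, φ s) - (∫ s in (1:ℝ)..a, φ s) = ∫ s in a..b, φ s :=
      intervalIntegral.integral_interval_sub_left (hφ_int 1 b one_pos hb)
        (hφ_int 1 a one_pos ha)
    have hpos : 0 < ∫ s in a..b, φ s :=
      intervalIntegral.intervalIntegral_pos_of_pos_on (hφ_int a b ha hb)
        (fun x hx => hφ_pos x (ha.trans hx.1)) hab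
    linarith
  -- bounds and choice of τ
  obtain ⟨Mf, hMf⟩ : ∃ C, ∀ x ∈ Icc (0:ℝ) 1, f x ≤ C := by
    obtain ⟨C, hC⟩ := isCompact_Icc.exists_bound_of_continuousOn
      (hf_cont.mono Icc_subset_Ici_self)
    exact ⟨C, fun x hx => (le_abs_self _).trans (by simpa [Real.norm_eq_abs] using hC x hx)⟩
  obtain ⟨Mg, hMg⟩ : ∃ C, ∀ x ∈ Icc (0:ℝ) 1, g x ≤ C := by
    obtain ⟨C, hC⟩ := isCompact_Icc.exists_bound_of_continuousOn
      (hg_cont.mono Icc_subset_Ici_self)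
    exact ⟨C, fun x hx => (le_abs_self _).trans (by simpa [Real.norm_eq_abs] using hC x hx)⟩
  have hMf0 : 0 ≤ Mf := le_trans (hf_nonneg 0 le_rfl) (hMf 0 (by norm_num))
  have hMg0 : 0 ≤ Mg := le_trans (hg_nonneg 0 le_rfl) (hMg 0 (by norm_num))
  set w1 : ℝ := w ((c+1) ^ q) with hw1def
  have hw1 : 0 < w1 := hw_pos _ (Real.rpow_pos_of_pos (by linarith) q)
  set μ : ℝ := 1 / w1 with hμdef
  have hμ0 : 0 < μ := div_pos one_pos hw1
  set τ : ℝ := min 1 (min (1/(2*(Mg+1))) ((μ/2)/(Mf+1))) with hτdef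
  have hτ0 : 0 < τ := lt_min one_pos (lt_min (by positivity) (by positivity))
  have hτ1 : τ ≤ 1 := min_le_left _ _
  have hGle : ∀ r ∈ Icc (0:ℝ) τ, (∫ s in (0:ℝ)..r, g s) ≤ 1/2 := by
    intro r hr
    have h1 : (∫ s in (0:ℝ)..r, g s) ≤ ∫ _ in (0:ℝ)..r, Mg := by
      apply intervalIntegral.integral_mono_on hr.1 (hg_int 0 r le_rfl hr.1)
        intervalIntegrable_const
      intro x hx
      exact hMg x ⟨hx.1, hx.2.trans (hr.2.trans hτ1)⟩
    rw [intervalIntegral.integral_const, smul_eq_mul, sub_zero] at h1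
    have hτle : τ ≤ 1/(2*(Mg+1)) := le_trans (min_le_right _ _) (min_le_left _ _)
    have h2 : r * Mg ≤ (1/(2*(Mg+1))) * Mg :=
      mul_le_mul_of_nonneg_right (hr.2.trans hτle) hMg0
    have h3 : (1/(2*(Mg+1))) * Mg ≤ 1/2 := by
      rw [div_mul_eq_mul_div, div_le_div_iff₀ (by positivity) (by norm_num : (0:ℝ) < 2)]
      nlinarith
    linarith
  have hFle : ∀ r ∈ Icc (0:ℝ) τ, (∫ s in (0:ℝ)..r, f s) ≤ μ/2 := by
    intro r hr
    have h1 : (∫ s in (0:ℝ)..r, f s) ≤ ∫ _ in (0:ℝ)..r, Mf := by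
      apply intervalIntegral.integral_mono_on hr.1 (hf_int 0 r le_rfl hr.1)
        intervalIntegrable_const
      intro x hx
      exact hMf x ⟨hx.1, hx.2.trans (hr.2.trans hτ1)⟩
    rw [intervalIntegral.integral_const, smul_eq_mul, sub_zero] at h1
    have hτle : τ ≤ (μ/2)/(Mf+1) := le_trans (min_le_right _ _) (min_le_right _ _)
    have h2 : r * Mf ≤ ((μ/2)/(Mf+1)) * Mf :=
      mul_le_mul_of_nonneg_right (hr.2.trans hτle) hMf0
    have h3 : ((μ/2)/(Mf+1)) * Mf ≤ μ/2 := by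
      rw [div_mul_eq_mul_div, div_le_iff₀ (by positivity)]
      nlinarith
    linarith
  have hG0 : ∀ r ∈ Icc (0:ℝ) τ, 0 ≤ ∫ s in (0:ℝ)..r, g s := fun r hr =>
    intervalIntegral.integral_nonneg hr.1 (fun x hx => hg_nonneg x hx.1)
  have hF0 : ∀ r ∈ Icc (0:ℝ) τ, 0 ≤ ∫ s in (0:ℝ)..r, f s := fun r hr =>
    intervalIntegral.integral_nonneg hr.1 (fun x hx => hf_nonneg x hx.1)
  -- the key Bihari-type estimate
  have hkey : ∀ r ∈ Icc (0:ℝ) τ,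
      (∫ s in (1:ℝ)..(B r), φ s) ≤
        (∫ s in (1:ℝ)..(c + ∫ s in (0:ℝ)..r, g s), φ s) + ∫ s in (0:ℝ)..r, f s := by
    intro r hr
    have hr1 : r ∈ Icc (0:ℝ) 1 := ⟨hr.1, hr.2.trans hτ1⟩
    set Gr : ℝ := ∫ s in (0:ℝ)..r, g s with hGrdef
    set D : ℝ → ℝ := fun s => B s + (Gr - ∫ σ in (0:ℝ)..s, g σ) with hDdef
    set E : ℝ → ℝ := fun s => (∫ σ in (1:ℝ)..(c+Gr), φ σ) + (∫ σ in (0:ℝ)..s, f σ)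
        - ∫ σ in (1:ℝ)..(D s), φ σ with hEdef
    have hsub1 : Icc (0:ℝ) r ⊆ Icc (0:ℝ) 1 := Icc_subset_Icc le_rfl hr1.2
    have hGs_le : ∀ s ∈ Icc (0:ℝ) r, (∫ σ in (0:ℝ)..s, g σ) ≤ Gr := by
      intro s hs
      have hsubint : Gr - (∫ σ in (0:ℝ)..s, g σ) = ∫ σ in s..r, g σ :=
        intervalIntegral.integral_interval_sub_left (hg_int 0 r le_rfl hr.1)
          (hg_int 0 s le_rfl hs.1)
      have hnn : 0 ≤ ∫ σ in s..r, g σ :=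
        intervalIntegral.integral_nonneg hs.2 (fun x hx => hg_nonneg x (hs.1.trans hx.1))
      linarith
    have hBD : ∀ s ∈ Icc (0:ℝ) r, B s ≤ D s := by
      intro s hs
      have := hGs_le s hs
      simp only [hDdef]
      linarith
    have hD_pos : ∀ s ∈ Icc (0:ℝ) r, 0 < D s := fun s hs =>
      lt_of_lt_of_le (hB_pos s (hsub1 hs)) (hBD s hs)
    have hFcont : ContinuousOn (fun s => ∫ σ in (0:ℝ)..s, f σ) (Icc 0 r) := by
      have hint : IntegrableOn f (uIcc (0:ℝ) r) volume := by
        rw [uIcc_of_le hr.1]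
        exact ((hf_cont.mono Icc_subset_Ici_self).mono
          (Icc_subset_Icc le_rfl le_rfl)).integrableOn_Icc
      have := intervalIntegral.continuousOn_primitive_interval hint
      rwa [uIcc_of_le hr.1] at this
    have hGcont : ContinuousOn (fun s => ∫ σ in (0:ℝ)..s, g σ) (Icc 0 r) := by
      have hint : IntegrableOn g (uIcc (0:ℝ) r) volume := by
        rw [uIcc_of_le hr.1]
        exact (hg_cont.mono Icc_subset_Ici_self).integrableOn_Icc
      have := intervalIntegral.continuousOn_primitive_interval hint
      rwa [uIcc_of_le hr.1] at this
    have hDcont : ContinuousOn D (Icc 0 r) :=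
      (hB_cont.mono hsub1).add (continuousOn_const.sub hGcont)
    have hEcont : ContinuousOn E (Icc 0 r) :=
      (continuousOn_const.add hFcont).sub
        (hΨ_contOn.comp hDcont (fun s hs => hD_pos s hs))
    have hED : ∀ x ∈ Ioo (0:ℝ) r, ∃ e, HasDerivAt E e x ∧ 0 ≤ e := by
      intro x hx
      have hxI : x ∈ Icc (0:ℝ) r := Ioo_subset_Icc_self hx
      have hx1 : x ∈ Icc (0:ℝ) 1 := hsub1 hxI
      have hx01 : x ∈ Ioo (0:ℝ) 1 := ⟨hx.1, lt_of_lt_of_le hx.2 hr1.2⟩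
      have hF' : HasDerivAt (fun s => ∫ σ in (0:ℝ)..s, f σ) (f x) x :=
        intervalIntegral.integral_hasDerivAt_right (hf_int 0 x le_rfl hx.1.le)
          (ContinuousOn.stronglyMeasurableAtFilter isOpen_Ioi
            (hf_cont.mono (fun z hz => le_of_lt hz)) x hx.1)
          (hf_cont.continuousAt (Ici_mem_nhds hx.1))
      have hG' : HasDerivAt (fun s => ∫ σ in (0:ℝ)..s, g σ) (g x) x :=
        intervalIntegral.integral_hasDerivAt_right (hg_int 0 x le_rfl hx.1.le)
          (ContinuousOn.stronglyMeasurableAtFilter isOpen_Ioi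
            (hg_cont.mono (fun z hz => le_of_lt hz)) x hx.1)
          (hg_cont.continuousAt (Ici_mem_nhds hx.1))
      have hψ_int0x : IntervalIntegrable ψ volume 0 x := hψ_int 0 x ⟨le_rfl, zero_le_one⟩ hx1
      have hI' : HasDerivAt (fun s => ∫ σ in (0:ℝ)..s, ψ σ) (ψ x) x :=
        intervalIntegral.integral_hasDerivAt_right hψ_int0x
          (ContinuousOn.stronglyMeasurableAtFilter isOpen_Ioo
            (hψ_cont.mono Ioo_subset_Icc_self) x hx01)
          ((hψ_cont.mono Ioo_subset_Icc_self).continuousAt (isOpen_Ioo.mem_nhds hx01))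
      have hA' : HasDerivAt A (p * ψ x) x := (hI'.const_mul p).const_add (c ^ p)
      have hB' : HasDerivAt B (p * ψ x * (1/p) * A x ^ (1/p - 1)) x :=
        hA'.rpow_const (Or.inl (hA_pos x hx1).ne')
      have hD' : HasDerivAt D (p * ψ x * (1/p) * A x ^ (1/p - 1) + -(g x)) x :=
        hB'.add (hG'.const_sub Gr)
      have hDx : 0 < D x := hD_pos x hxI
      have hΨD : HasDerivAt (fun s => ∫ σ in (1:ℝ)..(D s), φ σ)
          (φ (D x) * (p * ψ x * (1/p) * A x ^ (1/p - 1) + -(g x))) x :=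
        (hΨd (D x) hDx).comp x hD'
      refine ⟨f x - φ (D x) * (p * ψ x * (1/p) * A x ^ (1/p - 1) + -(g x)),
        ((hF'.const_add _).sub hΨD), ?_⟩
      set Bval := p * ψ x * (1/p) * A x ^ (1/p - 1) with hBval
      have hA0 := hA_pos x hx1
      have hvx0 := hv_pos x hx.1.le
      have hwv : 0 < w (v x ^ q) := hw_pos _ (Real.rpow_pos_of_pos hvx0 q)
      have hvnq_le : v x ^ (n*q) ≤ A x ^ (n/m) := by
        have hle1 : v x ^ (n*q) ≤ B x ^ (n*q) :=
          Real.rpow_le_rpow hvx0.le (hvB x hx1) (by positivity)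
        have heq1 : B x ^ (n*q) = A x ^ (n/m) := by
          rw [hBdef]; dsimp only
          rw [← Real.rpow_mul hA0.le, hnq]
        rwa [heq1] at hle1
      have e1 : v x ^ (n*q) * A x ^ (1/p - 1) ≤ 1 := by
        have hA1p : 0 ≤ A x ^ (1/p - 1) := Real.rpow_nonneg hA0.le _
        calc v x ^ (n*q) * A x ^ (1/p - 1)
            ≤ A x ^ (n/m) * A x ^ (1/p - 1) := mul_le_mul_of_nonneg_right hvnq_le hA1p
          _ = A x ^ (n/m + (1/p - 1)) := (Real.rpow_add hA0 _ _).symm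
          _ = A x ^ (0:ℝ) := by rw [hp1m]; ring_nf
          _ = 1 := Real.rpow_zero _
      have hW0 : 0 ≤ f x * w (v x ^ q) + g x :=
        add_nonneg (mul_nonneg (hf_nonneg x hx.1.le) hwv.le) (hg_nonneg x hx.1.le)
      have e2 : Bval ≤ f x * w (v x ^ q) + g x := by
        have hBeq : Bval = (f x * w (v x ^ q) + g x) * (v x ^ (n*q) * A x ^ (1/p - 1)) := by
          rw [hBval, hψdef]; dsimp only
          field_simp
        rw [hBeq]
        calc (f x * w (v x ^ q) + g x) * (v x ^ (n*q) * A x ^ (1/p - 1))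
            ≤ (f x * w (v x ^ q) + g x) * 1 := mul_le_mul_of_nonneg_left e1 hW0
          _ = f x * w (v x ^ q) + g x := mul_one _
      have hvD : v x ^ q ≤ D x ^ q :=
        Real.rpow_le_rpow hvx0.le ((hvB x hx1).trans (hBD x hxI)) hq0.le
      have hwle : w (v x ^ q) ≤ w (D x ^ q) :=
        hw_mono (mem_Ici.mpr (Real.rpow_nonneg hvx0.le q))
          (mem_Ici.mpr (Real.rpow_nonneg hDx.le q)) hvD
      have e3 : Bval + -(g x) ≤ f x * w (D x ^ q) := by
        have hmul : f x * w (v x ^ q) ≤ f x * w (D x ^ q) :=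
          mul_le_mul_of_nonneg_left hwle (hf_nonneg x hx.1.le)
        linarith
      have hφD : 0 < φ (D x) := hφ_pos (D x) hDx
      have e4 : φ (D x) * (Bval + -(g x)) ≤ φ (D x) * (f x * w (D x ^ q)) :=
        mul_le_mul_of_nonneg_left e3 hφD.le
      have e5 : φ (D x) * (f x * w (D x ^ q)) = f x := by
        rw [hφdef]; dsimp only
        field_simp
        rw [mul_comm, mul_div_assoc, div_self (hwq_pos (D x) hDx).ne', mul_one]
      linarith
    have hEmono : MonotoneOn E (Icc 0 r) := by
      apply monotoneOn_of_deriv_nonneg (convex_Icc 0 r) hEcont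
      · intro x hx
        rw [interior_Icc] at hx
        obtain ⟨e, he, _⟩ := hED x hx
        exact he.differentiableAt.differentiableWithinAt
      · intro x hx
        rw [interior_Icc] at hx
        obtain ⟨e, he, he0⟩ := hED x hx
        rw [he.deriv]; exact he0
    have hB0 : B 0 = c := by
      simp only [hBdef, hAdef]
      rw [intervalIntegral.integral_same, mul_zero, add_zero]
      exact hcpc
    have hD0 : D 0 = c + Gr := by
      simp only [hDdef]
      rw [intervalIntegral.integral_same, hB0]
      ring
    have hDr : D r = B r := by
      simp only [hDdef]
      ring
    have hEr := hEmono (⟨le_rfl, hr.1⟩ : (0:ℝ) ∈ Icc (0:ℝ) r) ⟨hr.1, le_rfl⟩ hr.1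
    simp only [hEdef] at hEr
    rw [hD0, hDr, intervalIntegral.integral_same] at hEr
    linarith
  -- assembling
  refine ⟨τ, hτ0, fun t ht => ?_⟩
  have ht0 : (0:ℝ) ≤ t := ht.1
  have hr : α t ∈ Icc (0:ℝ) τ := ⟨hα_nonneg t ht0, le_trans (hα_le t ht0) ht.2⟩
  have hr1 : α t ∈ Icc (0:ℝ) 1 := ⟨hr.1, le_trans hr.2 hτ1⟩
  set r : ℝ := α t with hrdef
  set G : ℝ := ∫ s in (0:ℝ)..r, g s with hGdef
  set F : ℝ → ℝ := fun x => ∫ s in (1:ℝ)..x, φ s with hFdef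
  have hG0' : 0 ≤ G := hG0 r hr
  have hG1 : G ≤ 1/2 := hGle r hr
  have hcG : 0 < c + G := by linarith
  have hup : F (c + G) ≤ F (c + G) + ∫ s in (0:ℝ)..r, f s := by
    have := hF0 r hr; linarith
  have hΨc1 : F (c + G) + (∫ s in (0:ℝ)..r, f s) ≤ F (c + 1) := by
    have hsub : F (c+1) - F (c+G) = ∫ s in (c+G)..(c+1), φ s :=
      intervalIntegral.integral_interval_sub_left
        (hφ_int 1 (c+1) one_pos (by linarith)) (hφ_int 1 (c+G) one_pos hcG)
    have hlow : ((c+1) - (c+G)) * μ ≤ ∫ s in (c+G)..(c+1), φ s := by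
      have hmono := intervalIntegral.integral_mono_on (μ := volume)
        (f := fun _ => μ) (g := φ) (a := c+G) (b := c+1) (by linarith)
        intervalIntegrable_const (hφ_int (c+G) (c+1) hcG (by linarith)) ?_
      · rw [intervalIntegral.integral_const, smul_eq_mul] at hmono
        exact hmono
      · intro x hx
        have hx0 : 0 < x := lt_of_lt_of_le hcG hx.1
        have hxq : x ^ q ≤ (c+1) ^ q := Real.rpow_le_rpow hx0.le hx.2 hq0.le
        have hww : w (x ^ q) ≤ w1 :=
          hw_mono (mem_Ici.mpr (Real.rpow_nonneg hx0.le q))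
            (mem_Ici.mpr (Real.rpow_nonneg (by linarith : (0:ℝ) ≤ c+1) q)) hxq
        exact one_div_le_one_div_of_le (hwq_pos x hx0) hww
    have hFr := hFle r hr
    have hGμ : μ/2 ≤ (1 - G) * μ := by nlinarith
    have heq : (c+1) - (c+G) = 1 - G := by ring
    rw [heq] at hlow
    linarith
  have hIVT : Icc (F (c+G)) (F (c+1)) ⊆ F '' Icc (c+G) (c+1) :=
    intermediate_value_Icc (by linarith)
      (hΨ_contOn.mono (fun x hx => lt_of_lt_of_le hcG hx.1))
  obtain ⟨y, hy_mem, hy_eq⟩ := hIVT ⟨hup, hΨc1⟩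
  have hy0 : 0 < y := lt_of_lt_of_le hcG hy_mem.1
  refine ⟨y, hy0, hy_eq, ?_⟩
  have hBy : B r ≤ y := by
    by_contra hlt
    push_neg at hlt
    have h1 : F y < F (B r) := hΨmono y (B r) hy0 hlt
    have h2 : F (B r) ≤ F (c + G) + ∫ s in (0:ℝ)..r, f s := hkey r hr
    rw [hy_eq] at h1
    linarith
  have hum : u t ^ m ≤ Z r := hmain t ht0
  have h1 : u t ≤ Z r ^ (1/m) := by
    calc u t = (u t ^ m) ^ (1/m) := by
          rw [← Real.rpow_mul (hu_nonneg t ht0), mul_one_div_cancel hm0.ne', Real.rpow_one]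
      _ ≤ Z r ^ (1/m) := Real.rpow_le_rpow (Real.rpow_nonneg (hu_nonneg t ht0) m)
          hum (by positivity)
  have h2 : Z r ^ (1/m) ≤ A r ^ (1/m) :=
    Real.rpow_le_rpow (hZpos r hr.1).le (hZA r hr1) (by positivity)
  have h3 : A r ^ (1/m) = B r ^ q := by
    rw [hBdef]; dsimp only
    rw [← Real.rpow_mul (hA_pos r hr1).le, hpq]
  have h4 : B r ^ q ≤ y ^ q :=
    Real.rpow_le_rpow (hB_pos r hr1).le hBy hq0.le
  calc u t ≤ Z r ^ (1/m) := h1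
    _ ≤ A r ^ (1/m) := h2
    _ = B r ^ q := h3
    _ ≤ y ^ q := h4
end

section
/- Let c > 0, let u : [0,∞) → [0,∞) be continuous, let α ∈ C¹([0,∞),[0,∞)) be nondecreasing with α(t) ≤ t, let f, g : [0,∞) → [0,∞) be continuous, and let w : [0,∞) → [0,∞) be continuous nondecreasing with w(x) > 0 for x > 0. If u²(t) ≤ c² + 2∫_0^{α(t)} [f(s) u(s) w(u(s)) + g(s) u(s)] ds for all t ≥ 0, then with Ψ(x) = ∫_1^x ds/w(s), there exists τ > 0 such that u(t) ≤ Ψ⁻¹(Ψ(c + ∫_0^{α(t)} g(s) ds) + ∫_0^{α(t)} f(s) ds) for all t ∈ [0,τ] with the right-hand side well defined. -/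
open Set Filter intervalIntegral

set_option maxHeartbeats 1600000 in
/-- Lipovan's retarded Ou-Iang type inequality (case `m = 2`, `n = 1`).
Well-definedness of `Ψ⁻¹(Ψ(c + ∫₀^{α t} g) + ∫₀^{α t} f)` and the bound on
`u t` are expressed as `∃ y > 0, Ψ y = … ∧ u t ≤ y`. -/
theorem lipovan_ouiang (c : ℝ) (hc : 0 < c)
    (u α f g w Ψ : ℝ → ℝ)
    (hu_cont : ContinuousOn u (Ici 0)) (hu_nonneg : ∀ t ≥ (0:ℝ), 0 ≤ u t)
    (hα_C1 : ContDiffOn ℝ 1 α (Ici 0)) (hα_mono : MonotoneOn α (Ici 0))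
    (hα_nonneg : ∀ t ≥ (0:ℝ), 0 ≤ α t) (hα_le : ∀ t ≥ (0:ℝ), α t ≤ t)
    (hf_cont : ContinuousOn f (Ici 0)) (hf_nonneg : ∀ s ≥ (0:ℝ), 0 ≤ f s)
    (hg_cont : ContinuousOn g (Ici 0)) (hg_nonneg : ∀ s ≥ (0:ℝ), 0 ≤ g s)
    (hw_cont : ContinuousOn w (Ici 0)) (hw_mono : MonotoneOn w (Ici 0))
    (hw_pos : ∀ x > (0:ℝ), 0 < w x)
    (hΨ : ∀ x, Ψ x = ∫ s in (1:ℝ)..x, 1 / w s)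
    (hmain : ∀ t ≥ (0:ℝ),
      u t ^ 2 ≤ c ^ 2 + 2 *
        ∫ s in (0:ℝ)..(α t), (f s * u s * w (u s) + g s * u s)) :
    ∃ τ > (0:ℝ), ∀ t ∈ Icc (0:ℝ) τ,
      ∃ y > (0:ℝ),
        Ψ y = Ψ (c + ∫ s in (0:ℝ)..(α t), g s) + (∫ s in (0:ℝ)..(α t), f s) ∧
        u t ≤ y := by
  -- w is nonnegative on [0,∞)
  have hw0 : 0 ≤ w 0 := by
    have hct : Tendsto w (nhdsWithin 0 (Ioi 0)) (nhds (w 0)) :=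
      ((hw_cont 0 Set.self_mem_Ici).mono (Ioi_subset_Ici le_rfl)).tendsto
    exact ge_of_tendsto hct (eventually_nhdsWithin_of_forall fun x hx => (hw_pos x hx).le)
  have hw_nonneg : ∀ x ≥ (0:ℝ), 0 ≤ w x := by
    intro x hx
    rcases eq_or_lt_of_le hx with h | h
    · rw [← h]; exact hw0
    · exact (hw_pos x h).le
  -- integrability and FTC helpers
  have hIci_int : ∀ (p : ℝ → ℝ), ContinuousOn p (Ici 0) →
      ∀ a b : ℝ, 0 ≤ a → 0 ≤ b → IntervalIntegrable p MeasureTheory.volume a b := by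
    intro p hp a b ha hb
    apply (hp.mono ?_).intervalIntegrable
    intro x hx
    rcases Set.mem_uIcc.1 hx with ⟨h1, _⟩ | ⟨h1, _⟩ <;> [exact le_trans ha h1; exact le_trans hb h1]
  have prim_deriv : ∀ (p : ℝ → ℝ), ContinuousOn p (Ici 0) → ∀ x > (0:ℝ),
      HasDerivAt (fun y => ∫ s in (0:ℝ)..y, p s) (p x) x := by
    intro p hp x hx
    exact integral_hasDerivAt_right (hIci_int p hp 0 x le_rfl hx.le)
      ((hp.mono (Ioi_subset_Ici le_rfl)).stronglyMeasurableAtFilter isOpen_Ioi x hx)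
      (hp.continuousAt (Ici_mem_nhds hx))
  have prim_cont : ∀ (p : ℝ → ℝ), ContinuousOn p (Ici 0) →
      ContinuousOn (fun y => ∫ s in (0:ℝ)..y, p s) (Ici 0) := by
    intro p hp x hx
    have hle : (0:ℝ) ≤ x + 1 := by simp only [mem_Ici] at hx; linarith
    have hI : MeasureTheory.IntegrableOn p (uIcc 0 (x+1)) MeasureTheory.volume := by
      rw [uIcc_of_le hle]
      exact (hp.mono Icc_subset_Ici_self).integrableOn_Icc
    have h2 := intervalIntegral.continuousOn_primitive_interval hI
    rw [uIcc_of_le hle] at h2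
    have hxm : x ∈ Icc (0:ℝ) (x+1) := ⟨hx, by linarith⟩
    refine (h2 x hxm).mono_of_mem_nhdsWithin ?_
    exact Filter.inter_mem self_mem_nhdsWithin
      (mem_nhdsWithin_of_mem_nhds (Iic_mem_nhds (by linarith)))
  -- the majorant v
  set h : ℝ → ℝ := fun s => f s * u s * w (u s) + g s * u s with hhdef
  have hwu_cont : ContinuousOn (fun s => w (u s)) (Ici 0) :=
    hw_cont.comp hu_cont (fun x hx => hu_nonneg x hx)
  have hh_cont : ContinuousOn h (Ici 0) :=
    ((hf_cont.mul hu_cont).mul hwu_cont).add (hg_cont.mul hu_cont)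
  have hh_nonneg : ∀ s ≥ (0:ℝ), 0 ≤ h s := by
    intro s hs
    have h1 := hu_nonneg s hs
    have h2 := hw_nonneg (u s) h1
    have h3 := hf_nonneg s hs
    have h4 := hg_nonneg s hs
    positivity
  set z : ℝ → ℝ := fun x => c ^ 2 + 2 * ∫ s in (0:ℝ)..x, h s with hzdef
  have hz_ge : ∀ x ≥ (0:ℝ), c ^ 2 ≤ z x := by
    intro x hx
    have : 0 ≤ ∫ s in (0:ℝ)..x, h s :=
      integral_nonneg hx (fun s hs => hh_nonneg s hs.1)
    simp only [hzdef]; linarith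
  have hz_pos : ∀ x ≥ (0:ℝ), 0 < z x := fun x hx => lt_of_lt_of_le (pow_pos hc 2) (hz_ge x hx)
  set v : ℝ → ℝ := fun x => Real.sqrt (z x) with hvdef
  have hv_pos : ∀ x ≥ (0:ℝ), 0 < v x := fun x hx => Real.sqrt_pos.2 (hz_pos x hx)
  have key_le : ∀ t ≥ (0:ℝ), u t ≤ v (α t) := by
    intro t ht
    have hαt : (0:ℝ) ≤ α t := hα_nonneg t ht
    exact (Real.le_sqrt (hu_nonneg t ht) (hz_pos _ hαt).le).2 (hmain t ht)
  have hu_le_v : ∀ x ≥ (0:ℝ), u x ≤ v x := by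
    intro x hx
    have hαx : (0:ℝ) ≤ α x := hα_nonneg x hx
    have h1 : z (α x) ≤ z x := by
      have e1 := integral_add_adjacent_intervals (μ := MeasureTheory.volume) (f := h)
        (hIci_int h hh_cont 0 (α x) le_rfl hαx) (hIci_int h hh_cont (α x) x hαx hx)
      have e2 : 0 ≤ ∫ s in (α x)..x, h s :=
        integral_nonneg (hα_le x hx) (fun s hs => hh_nonneg s (le_trans hαx hs.1))
      simp only [hzdef]; nlinarith [e1]
    exact le_trans (key_le x hx) (Real.sqrt_le_sqrt h1)
  have hz_cont : ContinuousOn z (Ici 0) :=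
    continuousOn_const.add (continuousOn_const.mul (prim_cont h hh_cont))
  have hv_cont : ContinuousOn v (Ici 0) := Real.continuous_sqrt.comp_continuousOn hz_cont
  have hv_deriv : ∀ x > (0:ℝ), HasDerivAt v (h x / v x) x := by
    intro x hx
    have hz_deriv : HasDerivAt z (2 * h x) x :=
      ((prim_deriv h hh_cont x hx).const_mul 2).const_add (c ^ 2)
    have h1 := (Real.hasDerivAt_sqrt (ne_of_gt (hz_pos x hx.le))).comp x hz_deriv
    have hvne : v x ≠ 0 := ne_of_gt (hv_pos x hx.le)
    convert h1 using 1
    show h x / Real.sqrt (z x) = 1 / (2 * Real.sqrt (z x)) * (2 * h x)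
    rw [one_div_mul_eq_div, mul_div_mul_left _ _ two_ne_zero]
    all_goals rfl
  -- constants and τ
  obtain ⟨Mf, hMf⟩ := isCompact_Icc.exists_bound_of_continuousOn
    (hf_cont.mono (Icc_subset_Ici_self : Icc (0:ℝ) 1 ⊆ Ici 0))
  set M : ℝ := max Mf 1 with hMdef
  have hM1 : (1:ℝ) ≤ M := le_max_right _ _
  have hM0 : (0:ℝ) < M := lt_of_lt_of_le one_pos hM1
  have hfM : ∀ s ∈ Icc (0:ℝ) 1, f s ≤ M := by
    intro s hs
    calc f s ≤ |f s| := le_abs_self _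
    _ ≤ Mf := by have := hMf s hs; rwa [Real.norm_eq_abs] at this
    _ ≤ M := le_max_left _ _
  set G1 : ℝ := ∫ s in (0:ℝ)..1, g s with hG1def
  have hG1 : 0 ≤ G1 := integral_nonneg zero_le_one (fun s hs => hg_nonneg s hs.1)
  set K : ℝ := c + G1 + 1 with hKdef
  have hK : 0 < K := by positivity
  set B : ℝ := w K with hBdef
  have hB : 0 < B := hw_pos K hK
  set τ : ℝ := min 1 (1 / (B * M)) with hτdef
  have hτ : 0 < τ := lt_min one_pos (by positivity)
  refine ⟨τ, hτ, ?_⟩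
  intro t ht
  set x₀ : ℝ := α t with hx0def
  have hx₀0 : (0:ℝ) ≤ x₀ := hα_nonneg t ht.1
  have hx₀τ : x₀ ≤ τ := le_trans (hα_le t ht.1) ht.2
  have hx₀1 : x₀ ≤ 1 := le_trans hx₀τ (min_le_left _ _)
  set G : ℝ := ∫ s in (0:ℝ)..x₀, g s with hGdef
  set F : ℝ := ∫ s in (0:ℝ)..x₀, f s with hFdef
  have hG0 : 0 ≤ G := integral_nonneg hx₀0 (fun s hs => hg_nonneg s hs.1)
  have hF0 : 0 ≤ F := integral_nonneg hx₀0 (fun s hs => hf_nonneg s hs.1)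
  have hGle : G ≤ G1 := by
    have e1 := integral_add_adjacent_intervals (μ := MeasureTheory.volume) (f := g)
      (hIci_int g hg_cont 0 x₀ le_rfl hx₀0) (hIci_int g hg_cont x₀ 1 hx₀0 zero_le_one)
    have e2 : 0 ≤ ∫ s in x₀..1, g s :=
      integral_nonneg hx₀1 (fun s hs => hg_nonneg s (le_trans hx₀0 hs.1))
    simp only [hGdef, hG1def]; linarith
  have hFle : F ≤ 1 / B := by
    have h1 : F ≤ x₀ * M := by
      have h1' := integral_mono_on (μ := MeasureTheory.volume) hx₀0 (hIci_int f hf_cont 0 x₀ le_rfl hx₀0)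
        intervalIntegrable_const (g := fun _ => M)
        (fun s hs => hfM s ⟨hs.1, le_trans hs.2 hx₀1⟩)
      have h1'' : ∫ (_ : ℝ) in (0:ℝ)..x₀, M = x₀ * M := by
        rw [intervalIntegral.integral_const, smul_eq_mul]; ring
      rw [hFdef]
      linarith [h1', h1'']
    have h2 : x₀ * M ≤ τ * M := by nlinarith
    have h3 : τ * M ≤ (1 / (B * M)) * M := by
      have := min_le_right (1:ℝ) (1 / (B * M)); nlinarith
    have h4 : (1 / (B * M)) * M = 1 / B := by field_simp
    linarith
  set d : ℝ := c + G with hddef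
  have hd : 0 < d := by positivity
  have hdK : d + 1 ≤ K := by simp only [hddef, hKdef]; linarith
  -- Ψ facts
  have h1w_cont : ContinuousOn (fun s => 1 / w s) (Ioi 0) :=
    continuousOn_const.div (hw_cont.mono (Ioi_subset_Ici le_rfl))
      (fun x hx => ne_of_gt (hw_pos x hx))
  have h1w_int : ∀ a b : ℝ, 0 < a → 0 < b → IntervalIntegrable (fun s => 1 / w s) MeasureTheory.volume a b := by
    intro a b ha hb
    apply (h1w_cont.mono ?_).intervalIntegrable
    intro x hx
    rcases Set.mem_uIcc.1 hx with ⟨h1, _⟩ | ⟨h1, _⟩ <;> [exact lt_of_lt_of_le ha h1; exact lt_of_lt_of_le hb h1]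
  have hΨdiff : ∀ x > (0:ℝ), HasDerivAt Ψ (1 / w x) x := by
    intro x hx
    have hΨfun : Ψ = fun y => ∫ s in (1:ℝ)..y, 1 / w s := funext hΨ
    rw [hΨfun]
    exact integral_hasDerivAt_right (h1w_int 1 x one_pos hx)
      (h1w_cont.stronglyMeasurableAtFilter isOpen_Ioi x hx)
      (h1w_cont.continuousAt (Ioi_mem_nhds hx))
  have hΨcont : ContinuousOn Ψ (Ioi 0) :=
    fun x hx => ((hΨdiff x hx).continuousAt).continuousWithinAt
  have hΨsub : ∀ a b : ℝ, 0 < a → 0 < b → Ψ b - Ψ a = ∫ s in a..b, 1 / w s := by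
    intro a b ha hb
    rw [hΨ a, hΨ b]
    exact integral_interval_sub_left (h1w_int 1 b one_pos hb) (h1w_int 1 a one_pos ha)
  -- existence of y via IVT
  have hΨd1 : Ψ d + F ≤ Ψ (d + 1) := by
    have h1 : Ψ (d+1) - Ψ d = ∫ s in d..(d+1), 1 / w s := hΨsub d (d+1) hd (by linarith)
    have h2 : (1:ℝ) / B ≤ ∫ s in d..(d+1), 1 / w s := by
      have e1 : ∫ (_ : ℝ) in d..(d+1), (1:ℝ) / B = 1 / B := by
        rw [intervalIntegral.integral_const, smul_eq_mul]; ring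
      rw [← e1]
      apply integral_mono_on (by linarith) intervalIntegrable_const
        (h1w_int d (d+1) hd (by linarith))
      intro s hs
      have hs0 : 0 < s := lt_of_lt_of_le hd hs.1
      have hws : w s ≤ B := hw_mono hs0.le hK.le (le_trans hs.2 hdK)
      exact one_div_le_one_div_of_le (hw_pos s hs0) hws
    linarith
  obtain ⟨y, hy_mem, hy_eq⟩ : ∃ y ∈ Icc d (d+1), Ψ y = Ψ d + F := by
    have hsub : Icc d (d+1) ⊆ Ioi 0 := fun x hx => lt_of_lt_of_le hd hx.1
    have := intermediate_value_Icc (by linarith : d ≤ d+1) (hΨcont.mono hsub)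
    have hmem : Ψ d + F ∈ Icc (Ψ d) (Ψ (d+1)) := ⟨by linarith, hΨd1⟩
    obtain ⟨y, hy1, hy2⟩ := this hmem
    exact ⟨y, hy1, hy2⟩
  have hy_pos : 0 < y := lt_of_lt_of_le hd hy_mem.1
  -- Step A : v x ≤ d + ∫_0^x q on [0, x₀], where q = f · w∘v
  have hwv_cont : ContinuousOn (fun s => w (v s)) (Ici 0) :=
    hw_cont.comp hv_cont (fun x hx => (hv_pos x hx).le)
  set q : ℝ → ℝ := fun s => f s * w (v s) with hqdef
  have hq_cont : ContinuousOn q (Ici 0) := hf_cont.mul hwv_cont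
  have hq_nonneg : ∀ s ≥ (0:ℝ), 0 ≤ q s := fun s hs =>
    mul_nonneg (hf_nonneg s hs) (hw_nonneg _ (hv_pos s hs).le)
  set Q : ℝ → ℝ := fun x => v x - (∫ s in (0:ℝ)..x, g s) - (∫ s in (0:ℝ)..x, q s) with hQdef
  have hQanti : AntitoneOn Q (Icc 0 x₀) := by
    have hQderiv : ∀ x ∈ Ioo (0:ℝ) x₀, HasDerivAt Q (h x / v x - g x - q x) x := by
      intro x hx
      exact ((hv_deriv x hx.1).sub (prim_deriv g hg_cont x hx.1)).sub (prim_deriv q hq_cont x hx.1)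
    apply antitoneOn_of_deriv_nonpos (convex_Icc _ _)
    · exact ((hv_cont.mono Icc_subset_Ici_self).sub
        ((prim_cont g hg_cont).mono Icc_subset_Ici_self)).sub
        ((prim_cont q hq_cont).mono Icc_subset_Ici_self)
    · rw [interior_Icc]
      exact fun x hx => ((hQderiv x hx).differentiableAt).differentiableWithinAt
    · rw [interior_Icc]
      intro x hx
      rw [(hQderiv x hx).deriv]
      have hx0 : (0:ℝ) < x := hx.1
      have h1 : u x ≤ v x := hu_le_v x hx0.le
      have h2 : w (u x) ≤ w (v x) := hw_mono (hu_nonneg x hx0.le) (hv_pos x hx0.le).le h1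
      have hvp := hv_pos x hx0.le
      have h3 : h x ≤ (f x * w (v x) + g x) * v x := by
        have hfx := hf_nonneg x hx0.le
        have hgx := hg_nonneg x hx0.le
        have hux := hu_nonneg x hx0.le
        have hwux := hw_nonneg (u x) hux
        have e1 : u x * w (u x) ≤ v x * w (v x) := mul_le_mul h1 h2 hwux hvp.le
        have e2 : f x * (u x * w (u x)) ≤ f x * (v x * w (v x)) :=
          mul_le_mul_of_nonneg_left e1 hfx
        have e3 : g x * u x ≤ g x * v x := mul_le_mul_of_nonneg_left h1 hgx
        show f x * u x * w (u x) + g x * u x ≤ (f x * w (v x) + g x) * v x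
        nlinarith [e2, e3]
      have h4 : h x / v x ≤ f x * w (v x) + g x := (div_le_iff₀ hvp).2 (by linarith)
      have hqx : q x = f x * w (v x) := rfl
      linarith
  have hstepA : ∀ x ∈ Icc (0:ℝ) x₀, v x ≤ d + ∫ s in (0:ℝ)..x, q s := by
    intro x hx
    have hQx := hQanti ⟨le_rfl, hx₀0⟩ hx hx.1
    have hQ0 : Q 0 = c := by
      have e0 : Q 0 = v 0 - (∫ s in (0:ℝ)..0, g s) - (∫ s in (0:ℝ)..0, q s) := rfl
      have ez : z 0 = c ^ 2 := by
        have : z 0 = c ^ 2 + 2 * ∫ s in (0:ℝ)..0, h s := rfl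
        rw [this, intervalIntegral.integral_same]; ring
      have ev : v 0 = c := by
        rw [show v 0 = Real.sqrt (z 0) from rfl, ez, Real.sqrt_sq hc.le]
      rw [e0, ev, intervalIntegral.integral_same, intervalIntegral.integral_same]; ring
    have hgle : (∫ s in (0:ℝ)..x, g s) ≤ G := by
      have e1 := integral_add_adjacent_intervals (μ := MeasureTheory.volume) (f := g)
        (hIci_int g hg_cont 0 x le_rfl hx.1) (hIci_int g hg_cont x x₀ hx.1 hx₀0)
      have e2 : 0 ≤ ∫ s in x..x₀, g s :=
        integral_nonneg hx.2 (fun s hs => hg_nonneg s (le_trans hx.1 hs.1))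
      simp only [hGdef]; linarith
    rw [hQ0] at hQx
    simp only [hQdef] at hQx
    simp only [hddef]
    linarith
  -- Step B : Ψ(W x₀) ≤ Ψ d + F
  set W : ℝ → ℝ := fun x => d + ∫ s in (0:ℝ)..x, q s with hWdef
  have hW_pos : ∀ x ∈ Icc (0:ℝ) x₀, 0 < W x := by
    intro x hx
    have : 0 ≤ ∫ s in (0:ℝ)..x, q s := integral_nonneg hx.1 (fun s hs => hq_nonneg s hs.1)
    simp only [hWdef]; linarith
  set E : ℝ → ℝ := fun x => Ψ (W x) - ∫ s in (0:ℝ)..x, f s with hEdef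
  have hEanti : AntitoneOn E (Icc 0 x₀) := by
    apply antitoneOn_of_deriv_nonpos (convex_Icc _ _)
    · apply ContinuousOn.sub
      · apply hΨcont.comp (continuousOn_const.add
          ((prim_cont q hq_cont).mono Icc_subset_Ici_self))
        intro x hx
        exact hW_pos x hx
      · exact (prim_cont f hf_cont).mono Icc_subset_Ici_self
    · rw [interior_Icc]
      intro x hx
      have hWd : HasDerivAt W (q x) x := ((prim_deriv q hq_cont x hx.1).const_add d)
      have := ((hΨdiff (W x) (hW_pos x ⟨hx.1.le, hx.2.le⟩)).comp x hWd).sub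
        (prim_deriv f hf_cont x hx.1)
      exact this.differentiableAt.differentiableWithinAt
    · rw [interior_Icc]
      intro x hx
      have hxm : x ∈ Icc (0:ℝ) x₀ := ⟨hx.1.le, hx.2.le⟩
      have hWd : HasDerivAt W (q x) x := ((prim_deriv q hq_cont x hx.1).const_add d)
      have hE : HasDerivAt E (1 / w (W x) * q x - f x) x :=
        ((hΨdiff (W x) (hW_pos x hxm)).comp x hWd).sub (prim_deriv f hf_cont x hx.1)
      rw [hE.deriv]
      have hvW : v x ≤ W x := hstepA x hxm
      have hwvW : w (v x) ≤ w (W x) := hw_mono (hv_pos x hx.1.le).le (hW_pos x hxm).le hvW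
      have hwW : 0 < w (W x) := hw_pos _ (hW_pos x hxm)
      have hfx := hf_nonneg x hx.1.le
      have : 1 / w (W x) * q x ≤ f x := by
        rw [div_mul_eq_mul_div, one_mul, div_le_iff₀ hwW]
        have hqx : q x = f x * w (v x) := rfl
        rw [hqx]
        nlinarith
      linarith
  have hfinal : Ψ (W x₀) ≤ Ψ d + F := by
    have hE0 : E 0 = Ψ d := by
      have e0 : E 0 = Ψ (d + ∫ s in (0:ℝ)..0, q s) - ∫ s in (0:ℝ)..0, f s := rfl
      rw [e0, intervalIntegral.integral_same, intervalIntegral.integral_same, add_zero, sub_zero]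
    have := hEanti ⟨le_rfl, hx₀0⟩ ⟨hx₀0, le_rfl⟩ hx₀0
    rw [hE0] at this
    simp only [hEdef, hFdef] at this ⊢
    linarith
  -- conclude W x₀ ≤ y
  have hWy : W x₀ ≤ y := by
    by_contra hlt
    push_neg at hlt
    have hWp : 0 < W x₀ := hW_pos x₀ ⟨hx₀0, le_rfl⟩
    have hint := h1w_int y (W x₀) hy_pos hWp
    have hpos : 0 < ∫ s in y..(W x₀), 1 / w s := by
      apply intervalIntegral_pos_of_pos_on hint ?_ hlt
      intro s hs
      have hs0 : 0 < s := lt_trans hy_pos hs.1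
      exact div_pos one_pos (hw_pos s hs0)
    have := hΨsub y (W x₀) hy_pos hWp
    rw [hy_eq] at this
    linarith
  refine ⟨y, hy_pos, ?_, ?_⟩
  · rw [hy_eq]
  · exact (key_le t ht.1).trans ((hstepA x₀ ⟨hx₀0, le_rfl⟩).trans hWy)
end

section
/- Let n > 0, c > 0, 0 < x₀ < c, let u : [0,∞) → [0,∞) be continuous, let α ∈ C¹([0,∞),[0,∞)) be nondecreasing with α(t) ≤ t, let f : [0,∞)×[0,∞) → [0,∞) be continuous and nondecreasing in its first variable, and let w : [0,∞) → [0,∞) be continuous nondecreasing with w(x) > 0 for x > 0. Suppose uⁿ(t) ≤ c + ∫_0^{α(t)} f(t,s)(uⁿ(s)+1)ln(uⁿ(s)+1) w(u(s)) ds for all t ≥ 0. Define G(x) = ∫_{x₀}^x ds/((s+1)ln(s+1)) and Ψ(x) = ∫_1^x ds/w((exp(eˢ ln(x₀+1)) − 1)^{1/n}). Then there exists τ > 0 such that for all t ∈ [0,τ], Ψ(G(c)) + ∫_0^{α(t)} f(t,s) ds lies in the domain of Ψ⁻¹ and u(t) ≤ [G⁻¹(Ψ⁻¹(Ψ(G(c))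 + ∫_0^{α(t)} f(t,s) ds))]^{1/n}. -/
open Set Filter intervalIntegral Topology

set_option maxHeartbeats 2000000 in
/-- Second corollary of Theorem 1, with `φ(x) = xⁿ` and
`η(x) = (xⁿ+1)ln(xⁿ+1)`.  Here `G⁻¹(y) = exp(eʸ ln(x₀+1)) − 1` is explicit;
membership of `Ψ(G(c)) + ∫₀^{α t} f(t,s) ds` in `Dom(Ψ⁻¹)` and the bound
`u t ≤ [G⁻¹(Ψ⁻¹(…))]^{1/n}` are expressed via `∃ y > 0, Ψ y = …`. -/
theorem corollary_log (n c x₀ : ℝ) (hn : 0 < n) (hx₀ : 0 < x₀) (hx₀c : x₀ < c)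
    (u α w G Ψ : ℝ → ℝ) (f : ℝ → ℝ → ℝ)
    (hu_cont : ContinuousOn u (Ici 0)) (hu_nonneg : ∀ t ≥ (0:ℝ), 0 ≤ u t)
    (hα_C1 : ContDiffOn ℝ 1 α (Ici 0)) (hα_mono : MonotoneOn α (Ici 0))
    (hα_nonneg : ∀ t ≥ (0:ℝ), 0 ≤ α t) (hα_le : ∀ t ≥ (0:ℝ), α t ≤ t)
    (hf_cont : ContinuousOn (Function.uncurry f) (Ici 0 ×ˢ Ici 0))
    (hf_nonneg : ∀ t ≥ (0:ℝ), ∀ s ≥ (0:ℝ), 0 ≤ f t s)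
    (hf_mono : ∀ s ≥ (0:ℝ), MonotoneOn (fun t => f t s) (Ici 0))
    (hw_cont : ContinuousOn w (Ici 0)) (hw_mono : MonotoneOn w (Ici 0))
    (hw_pos : ∀ x > (0:ℝ), 0 < w x)
    (hG : ∀ x, G x = ∫ s in x₀..x, 1 / ((s + 1) * Real.log (s + 1)))
    (hΨ : ∀ x, Ψ x = ∫ s in (1:ℝ)..x,
      1 / w ((Real.exp (Real.exp s * Real.log (x₀ + 1)) - 1) ^ (1 / n)))
    (hmain : ∀ t ≥ (0:ℝ),
      u t ^ n ≤ c + ∫ s in (0:ℝ)..(α t),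
        f t s * (u s ^ n + 1) * Real.log (u s ^ n + 1) * w (u s)) :
    ∃ τ > (0:ℝ), ∀ t ∈ Icc (0:ℝ) τ,
      ∃ y > (0:ℝ),
        Ψ y = Ψ (G c) + (∫ s in (0:ℝ)..(α t), f t s) ∧
        u t ≤ (Real.exp (Real.exp y * Real.log (x₀ + 1)) - 1) ^ (1 / n) := by
  classical
  have hn' : n ≠ 0 := ne_of_gt hn
  have hc : (0:ℝ) < c := lt_trans hx₀ hx₀c
  set L := Real.log (x₀ + 1) with hLdef
  have hL : 0 < L := Real.log_pos (by linarith)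
  -- extended functions
  set uE : ℝ → ℝ := fun t => u (max t 0) with huEdef
  set fE : ℝ → ℝ → ℝ := fun t s => f (max t 0) (max s 0) with hfEdef
  have huE_cont : Continuous uE :=
    hu_cont.comp_continuous (continuous_id.max continuous_const) (fun x => mem_Ici.mpr (le_max_right _ _))
  have huE_nonneg : ∀ t, 0 ≤ uE t := fun t => hu_nonneg _ (le_max_right _ _)
  have huE_eq : ∀ t, 0 ≤ t → uE t = u t := fun t ht => by
    rw [huEdef]; simp [max_eq_left ht]
  have hfE_cont : Continuous (Function.uncurry fE) := by
    have : Function.uncurry fE = (Function.uncurry f) ∘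
        (fun p : ℝ × ℝ => (max p.1 0, max p.2 0)) := rfl
    rw [this]
    exact hf_cont.comp_continuous
      ((continuous_fst.max continuous_const).prodMk (continuous_snd.max continuous_const))
      (fun p => ⟨mem_Ici.mpr (le_max_right _ _), mem_Ici.mpr (le_max_right _ _)⟩)
  have hfE_nonneg : ∀ t s, 0 ≤ fE t s := fun t s =>
    hf_nonneg _ (le_max_right _ _) _ (le_max_right _ _)
  have hfE_eq : ∀ t, 0 ≤ t → ∀ s, 0 ≤ s → fE t s = f t s := fun t ht s hs => by
    rw [hfEdef]; simp [max_eq_left ht, max_eq_left hs]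
  have hfE_mono : ∀ s t t', t ≤ t' → fE t s ≤ fE t' s := fun s t t' htt' =>
    hf_mono _ (le_max_right _ _) (mem_Ici.mpr (le_max_right _ _)) (mem_Ici.mpr (le_max_right _ _))
      (max_le_max htt' le_rfl)
  -- q
  set q : ℝ → ℝ := fun t => uE t ^ n with hqdef
  have hq_cont : Continuous q := by
    rw [continuous_iff_continuousAt]
    intro t
    exact (Real.continuousAt_rpow_const _ _ (Or.inr hn.le)).comp huE_cont.continuousAt
  have hq_nonneg : ∀ t, 0 ≤ q t := fun t => Real.rpow_nonneg (huE_nonneg t) n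
  -- theta
  set θ : ℝ → ℝ := fun x => (x + 1) * Real.log (x + 1) * w (x ^ (1/n)) with hθdef
  have hθ_pos : ∀ x, 0 < x → 0 < θ x := by
    intro x hx
    have h1 : (0:ℝ) < x + 1 := by linarith
    have h2 : 0 < Real.log (x + 1) := Real.log_pos (by linarith)
    have h3 : 0 < x ^ (1/n) := Real.rpow_pos_of_pos hx _
    exact mul_pos (mul_pos h1 h2) (hw_pos _ h3)
  have hθ_contAt : ∀ x, 0 < x → ContinuousAt θ x := by
    intro x hx
    have h1 : ContinuousAt (fun x : ℝ => x + 1) x := by fun_prop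
    have h2 : ContinuousAt (fun x : ℝ => Real.log (x + 1)) x :=
      (Real.continuousAt_log (by positivity)).comp h1
    have h3 : ContinuousAt (fun x : ℝ => x ^ (1/n)) x :=
      Real.continuousAt_rpow_const _ _ (Or.inl (ne_of_gt hx))
    have h4 : ContinuousAt (fun x : ℝ => w (x ^ (1/n))) x := by
      have hmem : Ici (0:ℝ) ∈ 𝓝 (x ^ (1/n)) :=
        Ici_mem_nhds (Real.rpow_pos_of_pos hx _)
      exact ContinuousAt.comp (x := x) (g := w) (hw_cont.continuousAt hmem) h3
    exact (h1.mul h2).mul h4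
  have hθ0 : θ 0 = 0 := by rw [hθdef]; simp
  have hθ_nonneg : ∀ x, 0 ≤ x → 0 ≤ θ x := by
    intro x hx
    rcases eq_or_lt_of_le hx with h | h
    · rw [← h, hθ0]
    · exact (hθ_pos x h).le
  have hθ_mono : ∀ x y, 0 ≤ x → x ≤ y → θ x ≤ θ y := by
    intro x y hx hxy
    rcases eq_or_lt_of_le hx with h | h
    · rw [← h, hθ0]
      exact hθ_nonneg y (le_trans hx hxy)
    · have hy : 0 < y := lt_of_lt_of_le h hxy
      have h1 : (0:ℝ) < x + 1 := by linarith
      have h2 : 0 < Real.log (x + 1) := Real.log_pos (by linarith)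
      have hrx : 0 < x ^ (1/n) := Real.rpow_pos_of_pos h _
      have hrpow : x ^ (1/n) ≤ y ^ (1/n) :=
        Real.rpow_le_rpow h.le hxy (by positivity)
      have hwle : w (x ^ (1/n)) ≤ w (y ^ (1/n)) :=
        hw_mono (le_of_lt hrx) (le_trans hrx.le hrpow) hrpow
      have hlog : Real.log (x + 1) ≤ Real.log (y + 1) :=
        Real.log_le_log (by linarith) (by linarith)
      have hwx : 0 < w (x ^ (1/n)) := hw_pos _ hrx
      apply mul_le_mul _ hwle hwx.le
        (mul_nonneg (by linarith) (le_trans h2.le hlog))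
      apply mul_le_mul (by linarith) hlog h2.le (by linarith)
  have hθ_contOn : ContinuousOn θ (Ici 0) := by
    apply ContinuousOn.mul
    · intro x hx
      have h1 : ContinuousAt (fun x : ℝ => (x + 1) * Real.log (x + 1)) x := by
        apply ContinuousAt.mul (by fun_prop)
        exact (Real.continuousAt_log (by intro h; simp at hx; linarith)).comp (by fun_prop)
      exact h1.continuousWithinAt
    · apply hw_cont.comp
      · intro x hx
        exact (Real.continuousAt_rpow_const _ _ (Or.inr (by positivity))).continuousWithinAt
      · intro x hx
        exact Real.rpow_nonneg hx _
  have hθinv_cont : ContinuousOn (fun x => (θ x)⁻¹) (Ioi 0) := by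
    intro x hx
    exact ((hθ_contAt x hx).inv₀ (ne_of_gt (hθ_pos x hx))).continuousWithinAt
  -- F
  set F : ℝ → ℝ := fun a => ∫ σ in c..a, (θ σ)⁻¹ with hFdef
  have huIcc_sub : ∀ a b : ℝ, 0 < a → 0 < b → uIcc a b ⊆ Ioi 0 := by
    intro a b ha hb x hx
    exact lt_of_lt_of_le (lt_min ha hb) hx.1
  have hInt : ∀ a b : ℝ, 0 < a → 0 < b →
      IntervalIntegrable (fun x => (θ x)⁻¹) MeasureTheory.volume a b := by
    intro a b ha hb
    exact (hθinv_cont.mono (huIcc_sub a b ha hb)).intervalIntegrable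
  have hF_deriv : ∀ a, 0 < a → HasDerivAt F (θ a)⁻¹ a := by
    intro a ha
    exact intervalIntegral.integral_hasDerivAt_right (hInt c a hc ha)
      (ContinuousOn.stronglyMeasurableAtFilter isOpen_Ioi hθinv_cont a ha)
      ((hθ_contAt a ha).inv₀ (ne_of_gt (hθ_pos a ha)))
  have hF_cont : ContinuousOn F (Ioi 0) := fun a ha =>
    ((hF_deriv a ha).continuousAt).continuousWithinAt
  have hFc : F c = 0 := by rw [hFdef]; simp
  have hF_strict : StrictMonoOn F (Ioi 0) := by
    intro a ha b hb hab
    have hsplit : F a + ∫ σ in a..b, (θ σ)⁻¹ = F b :=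
      intervalIntegral.integral_add_adjacent_intervals (hInt c a hc ha) (hInt a b ha hb)
    have hpos : 0 < ∫ σ in a..b, (θ σ)⁻¹ := by
      apply intervalIntegral.intervalIntegral_pos_of_pos_on (hInt a b ha hb) _ hab
      intro x hx
      have hx0 : 0 < x := lt_trans ha hx.1
      exact inv_pos.mpr (hθ_pos x hx0)
    linarith
  have hF_inj : InjOn F (Ioi 0) := hF_strict.injOn
  -- P : inverse of F on [c, c+2]
  set R2 : ℝ := F (c + 2) with hR2def
  have hR2pos : 0 < R2 := by
    have := hF_strict (mem_Ioi.mpr hc) (mem_Ioi.mpr (by linarith : (0:ℝ) < c + 2))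
      (by linarith)
    rw [hFc] at this; exact this
  have hKsub : Icc c (c + 2) ⊆ Ioi (0:ℝ) := fun x hx => lt_of_lt_of_le hc hx.1
  have hFK : ∀ a ∈ Icc c (c + 2), F a ∈ Icc 0 R2 := by
    intro a ha
    constructor
    · rw [← hFc]
      rcases eq_or_lt_of_le ha.1 with h | h
      · rw [h]
      · exact (hF_strict (mem_Ioi.mpr hc) (hKsub ha) h).le
    · rcases eq_or_lt_of_le ha.2 with h | h
      · rw [h]
      · exact (hF_strict (hKsub ha) (mem_Ioi.mpr (by linarith)) h).le
  set P : ℝ → ℝ := fun r => if h : ∃ a ∈ Icc c (c + 2), F a = r then h.choose else c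
    with hPdef
  have hP_spec : ∀ r ∈ Icc (0:ℝ) R2, P r ∈ Icc c (c + 2) ∧ F (P r) = r := by
    intro r hr
    have hex : ∃ a ∈ Icc c (c + 2), F a = r := by
      have hIVT := intermediate_value_Icc (by linarith : c ≤ c + 2)
        (hF_cont.mono hKsub)
      have hr' : r ∈ Icc (F c) (F (c + 2)) := by rw [hFc]; exact hr
      exact hIVT hr'
    have : P r = hex.choose := by rw [hPdef]; simp only [dif_pos hex]
    rw [this]
    exact ⟨hex.choose_spec.1, hex.choose_spec.2⟩
  have hP_contOn : ContinuousOn P (Icc 0 R2) := by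
    let e : Icc c (c + 2) ≃ Icc (0:ℝ) R2 :=
      { toFun := fun a => ⟨F a, hFK a a.2⟩
        invFun := fun r => ⟨P r, (hP_spec r r.2).1⟩
        left_inv := by
          intro a
          apply Subtype.ext
          have h1 := hP_spec (F a) (hFK a a.2)
          exact hF_inj (hKsub h1.1) (hKsub a.2) h1.2
        right_inv := by
          intro r
          exact Subtype.ext (hP_spec r r.2).2 }
    have he_cont : Continuous (e : Icc c (c + 2) → Icc (0:ℝ) R2) :=
      Continuous.subtype_mk (ContinuousOn.restrict (hF_cont.mono hKsub))
        (fun a => hFK a a.2)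
    let homeo := he_cont.homeoOfEquivCompactToT2 (f := e)
    rw [continuousOn_iff_continuous_restrict]
    have hrestr : (Icc (0:ℝ) R2).domRestrict P = Subtype.val ∘ (homeo.symm : Icc (0:ℝ) R2 → Icc c (c+2)) := by
      funext r; rfl
    rw [hrestr]
    exact continuous_subtype_val.comp homeo.symm.continuous
  have hP_deriv : ∀ r ∈ Ioo (0:ℝ) R2, HasDerivAt P (θ (P r)) r := by
    intro r hr
    have hPr := hP_spec r (Ioo_subset_Icc_self hr)
    have hPrpos : 0 < P r := lt_of_lt_of_le hc hPr.1.1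
    have hcontP : ContinuousAt P r := hP_contOn.continuousAt (Icc_mem_nhds hr.1 hr.2)
    have hFd : HasDerivAt F (θ (P r))⁻¹ (P r) := hF_deriv _ hPrpos
    have hne : (θ (P r))⁻¹ ≠ 0 := inv_ne_zero (ne_of_gt (hθ_pos _ hPrpos))
    have hfg : ∀ᶠ y in 𝓝 r, F (P y) = y := by
      filter_upwards [Icc_mem_nhds hr.1 hr.2] with y hy using (hP_spec y hy).2
    have := HasDerivAt.of_local_left_inverse hcontP hFd hne hfg
    rwa [inv_inv] at this
  have hP_mono : ∀ r r', r ∈ Icc (0:ℝ) R2 → r' ∈ Icc (0:ℝ) R2 → r ≤ r' → P r ≤ P r' := by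
    intro r r' hr hr' hrr'
    by_contra hcon
    push_neg at hcon
    have := hF_strict (hKsub (hP_spec r' hr').1) (hKsub (hP_spec r hr).1) hcon
    rw [(hP_spec r hr).2, (hP_spec r' hr').2] at this
    linarith
  set R1 : ℝ := F (c + 1) with hR1def
  have hR1pos : 0 < R1 := by
    have := hF_strict (mem_Ioi.mpr hc) (mem_Ioi.mpr (by linarith : (0:ℝ) < c + 1))
      (by linarith)
    rw [hFc] at this; exact this
  have hR1R2 : R1 < R2 :=
    hF_strict (mem_Ioi.mpr (by linarith : (0:ℝ) < c + 1))
      (mem_Ioi.mpr (by linarith : (0:ℝ) < c + 2)) (by linarith)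
  set Δ : ℝ := R1 / 2 with hΔdef
  have hΔpos : 0 < Δ := by positivity
  -- αE and I
  set αE : ℝ → ℝ := fun t => α (max t 0) with hαEdef
  have hαE_cont : Continuous αE :=
    (hα_C1.continuousOn).comp_continuous (continuous_id.max continuous_const)
      (fun x => mem_Ici.mpr (le_max_right _ _))
  have hαE_nonneg : ∀ t, 0 ≤ αE t := fun t => hα_nonneg _ (le_max_right _ _)
  have hαE_eq : ∀ t, 0 ≤ t → αE t = α t := fun t ht => by
    rw [hαEdef]; simp [max_eq_left ht]
  have hαE_le : ∀ t, αE t ≤ max t 0 := fun t => hα_le _ (le_max_right _ _)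
  set I : ℝ → ℝ := fun t => ∫ s in (0:ℝ)..(αE t), fE t s with hIdef
  have hI_cont : Continuous I :=
    intervalIntegral.continuous_parametric_intervalIntegral_of_continuous hfE_cont hαE_cont
  have hI_nonneg : ∀ t, 0 ≤ I t := fun t =>
    intervalIntegral.integral_nonneg (hαE_nonneg t) (fun s _ => hfE_nonneg t s)
  have hfE_int : ∀ T a b : ℝ, IntervalIntegrable (fE T) MeasureTheory.volume a b := by
    intro T a b
    apply Continuous.intervalIntegrable
    have h : fE T = Function.uncurry fE ∘ (fun s => (T, s)) := rfl
    rw [h]; exact hfE_cont.comp (by fun_prop)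
  -- bound M on [0,1]²
  obtain ⟨M, hM⟩ := (isCompact_Icc.prod isCompact_Icc).exists_bound_of_continuousOn
      (hfE_cont.continuousOn : ContinuousOn (Function.uncurry fE) (Icc (0:ℝ) 1 ×ˢ Icc (0:ℝ) 1))
  have hMnn : 0 ≤ M := le_trans (norm_nonneg _)
    (hM (0,0) (by constructor <;> constructor <;> norm_num))
  have hfE_le : ∀ t ∈ Icc (0:ℝ) 1, ∀ s ∈ Icc (0:ℝ) 1, fE t s ≤ M := by
    intro t ht s hs
    have h := hM (t, s) (mem_prod.mpr ⟨ht, hs⟩)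
    calc fE t s ≤ |fE t s| := le_abs_self _
    _ ≤ M := by rw [← Real.norm_eq_abs]; exact h
  -- τ₀
  have hα0 : α 0 = 0 := le_antisymm (hα_le 0 le_rfl) (hα_nonneg 0 le_rfl)
  have hq0 : q 0 ≤ c := by
    have h := hmain 0 le_rfl
    rw [hα0, intervalIntegral.integral_same] at h
    have h2 : q 0 = u 0 ^ n := by simp only [hqdef]; rw [huE_eq 0 le_rfl]
    rw [h2]; linarith
  obtain ⟨τ₀, hτ₀pos, hτ₀⟩ : ∃ τ₀ > (0:ℝ), ∀ t ∈ Icc (0:ℝ) τ₀, q t ≤ c + 1 := by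
    have hev : ∀ᶠ t in 𝓝 (0:ℝ), q t < c + 1 :=
      hq_cont.continuousAt.eventually_lt_const (by linarith)
    obtain ⟨ε, hεpos, hε⟩ := Metric.eventually_nhds_iff.mp hev
    refine ⟨ε/2, by positivity, ?_⟩
    intro t ht
    have hd : dist t 0 < ε := by
      rw [Real.dist_eq, sub_zero, abs_of_nonneg ht.1]; linarith [ht.2]
    exact (hε hd).le
  set τ : ℝ := min τ₀ (min 1 (Δ / (M + 1))) with hτdef
  have hτpos : 0 < τ := by
    apply lt_min hτ₀pos (lt_min one_pos (by positivity))
  have hτ1 : τ ≤ 1 := le_trans (min_le_right _ _) (min_le_left _ _)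
  have hττ₀ : τ ≤ τ₀ := min_le_left _ _
  have hτΔ : τ ≤ Δ / (M + 1) := le_trans (min_le_right _ _) (min_le_right _ _)
  have hMτ : M * τ ≤ Δ := by
    have h := (le_div_iff₀ (by linarith : (0:ℝ) < M + 1)).mp hτΔ
    nlinarith [hτpos.le]
  have hIΔ : ∀ t ∈ Icc (0:ℝ) τ, I t ≤ Δ := by
    intro t ht
    have hαt1 : αE t ≤ τ := le_trans (hαE_le t) (by rw [max_eq_left ht.1]; exact ht.2)
    have h1 : I t ≤ M * αE t := by
      have hmono := intervalIntegral.integral_mono_on (hαE_nonneg t)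
        (hfE_int t 0 (αE t)) (_root_.intervalIntegrable_const (c := M))
        (fun s hs => hfE_le t ⟨ht.1, le_trans ht.2 hτ1⟩ s
          ⟨hs.1, le_trans hs.2 (le_trans hαt1 hτ1)⟩)
      rw [intervalIntegral.integral_const, sub_zero, smul_eq_mul, mul_comm] at hmono
      exact hmono
    have h2 : M * αE t ≤ M * τ := mul_le_mul_of_nonneg_left hαt1 hMnn
    linarith
  -- a priori bound
  have hq_le : ∀ t ∈ Icc (0:ℝ) τ, q t ≤ c + 1 := fun t ht =>
    hτ₀ t ⟨ht.1, le_trans ht.2 hττ₀⟩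
  -- B
  set B : ℝ → ℝ := fun t => max (q t) c with hBdef
  have hB_cont : Continuous B := hq_cont.max continuous_const
  have hB_pos : ∀ t, c ≤ B t := fun t => le_max_right _ _
  have hfE_c1 : ∀ T : ℝ, Continuous (fE T) := fun T =>
    hfE_cont.comp (continuous_const.prodMk continuous_id)
  -- rewrite of hmain with θ
  have hmain' : ∀ t ∈ Icc (0:ℝ) τ, q t ≤ c + ∫ s in (0:ℝ)..(αE t), fE t s * θ (q s) := by
    intro t ht
    have h := hmain t ht.1
    have hαt : αE t = α t := hαE_eq t ht.1
    have hqt : q t = u t ^ n := by simp only [hqdef]; rw [huE_eq t ht.1]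
    rw [hqt, hαt]
    refine le_trans h (le_of_eq ?_)
    congr 1
    apply intervalIntegral.integral_congr
    intro s hs
    rw [uIcc_of_le (hα_nonneg t ht.1)] at hs
    have hs0 : 0 ≤ s := hs.1
    have hq_s : q s = u s ^ n := by simp only [hqdef]; rw [huE_eq s hs0]
    have hpow : (q s) ^ (1/n) = u s := by
      rw [hq_s, ← Real.rpow_mul (hu_nonneg s hs0), mul_one_div_cancel hn', Real.rpow_one]
    simp only [hθdef]
    rw [hfE_eq t ht.1 s hs0, hpow, hq_s]
    ring
  -- Claim B
  have claimB : ∀ t ∈ Icc (0:ℝ) τ, F (B t) ≤ I t := by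
    intro t ht
    have key : ∀ δ, 0 < δ → δ ≤ Δ → F (B t) < δ + I t := by
      intro δ hδ hδΔ
      by_contra hcon
      push_neg at hcon
      set S : Set ℝ := {r | r ∈ Icc (0:ℝ) τ ∧ δ + I r ≤ F (B r)} with hSdef
      have hFB_cont : ContinuousOn (fun r => F (B r)) (Icc 0 τ) := by
        apply hF_cont.comp hB_cont.continuousOn
        intro r _
        exact lt_of_lt_of_le hc (hB_pos r)
      have hS_closed : IsClosed S := by
        have hSeq : S = Icc 0 τ ∩ (fun r => F (B r) - (δ + I r)) ⁻¹' (Ici 0) := by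
          ext r
          simp only [hSdef, mem_setOf_eq, mem_inter_iff, mem_preimage, mem_Ici]
          constructor
          · rintro ⟨h1, h2⟩; exact ⟨h1, by linarith⟩
          · rintro ⟨h1, h2⟩; exact ⟨h1, by linarith⟩
        rw [hSeq]
        exact ContinuousOn.preimage_isClosed_of_isClosed
          (hFB_cont.sub ((continuous_const.add hI_cont).continuousOn)) isClosed_Icc
          isClosed_Ici
      have hS_ne : S.Nonempty := ⟨t, ht, hcon⟩
      have hS_bdd : BddBelow S := ⟨0, fun r hr => hr.1.1⟩
      set t₀ := sInf S with ht₀def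
      have ht₀S : t₀ ∈ S := hS_closed.csInf_mem hS_ne hS_bdd
      have ht₀mem : t₀ ∈ Icc (0:ℝ) τ := ht₀S.1
      have hI0 : I 0 = 0 := by
        have : αE 0 = 0 := by rw [hαE_eq 0 le_rfl, hα0]
        simp only [hIdef]
        rw [this, intervalIntegral.integral_same]
      have hB0 : B 0 = c := by
        simp only [hBdef]
        exact max_eq_right hq0
      have ht₀pos : 0 < t₀ := by
        rcases eq_or_lt_of_le ht₀mem.1 with h | h
        · exfalso
          have h2 := ht₀S.2
          rw [← h, hB0, hFc, hI0] at h2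
          linarith
        · exact h
      have hαt₀_le : αE t₀ ≤ t₀ := le_trans (hαE_le t₀) (le_of_eq (max_eq_left ht₀mem.1))
      have hlt : ∀ s, 0 ≤ s → s < t₀ → F (B s) < δ + I s := by
        intro s hs0 hst
        by_contra hc2
        push_neg at hc2
        have hsS : s ∈ S := ⟨⟨hs0, le_trans hst.le ht₀mem.2⟩, hc2⟩
        have := csInf_le hS_bdd hsS
        rw [← ht₀def] at this
        linarith
      have hle : F (B t₀) ≤ δ + I t₀ := by
        have hsub : Ico (0:ℝ) t₀ ⊆ Icc 0 τ := fun s hs =>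
          ⟨hs.1, le_trans hs.2.le ht₀mem.2⟩
        have hnb : (𝓝[Ico (0:ℝ) t₀] t₀).NeBot := by
          apply mem_closure_iff_nhdsWithin_neBot.mp
          rw [closure_Ico (ne_of_lt ht₀pos)]
          exact ⟨ht₀mem.1, le_rfl⟩
        have htend : Tendsto (fun r => F (B r) - (δ + I r)) (𝓝[Ico (0:ℝ) t₀] t₀)
            (𝓝 (F (B t₀) - (δ + I t₀))) := by
          apply Tendsto.mono_left _ (nhdsWithin_mono t₀ hsub)
          exact (hFB_cont.sub ((continuous_const.add hI_cont).continuousOn)) t₀ ht₀mem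
        have hev : ∀ᶠ s in 𝓝[Ico (0:ℝ) t₀] t₀, F (B s) - (δ + I s) ≤ 0 := by
          filter_upwards [self_mem_nhdsWithin] with s hs
          linarith [hlt s hs.1 hs.2]
        have := le_of_tendsto htend hev
        linarith
      have heq : F (B t₀) = δ + I t₀ := le_antisymm hle ht₀S.2
      -- J
      set J : ℝ → ℝ := fun s => ∫ σ in (0:ℝ)..s, fE t₀ σ with hJdef
      have hJ_cont_at : ∀ s : ℝ, HasDerivAt J (fE t₀ s) s := by
        intro s
        exact intervalIntegral.integral_hasDerivAt_right (hfE_int t₀ 0 s)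
          ((hfE_c1 t₀).stronglyMeasurableAtFilter _ _) (hfE_c1 t₀).continuousAt
      have hJ_cont : Continuous J :=
        continuous_iff_continuousAt.mpr (fun s => (hJ_cont_at s).continuousAt)
      have hJ0 : J 0 = 0 := intervalIntegral.integral_same
      have hJI : J (αE t₀) = I t₀ := rfl
      have hJ_mono : ∀ a b : ℝ, a ≤ b → J a ≤ J b := by
        intro a b hab
        have hadd := intervalIntegral.integral_add_adjacent_intervals
          (hfE_int t₀ 0 a) (hfE_int t₀ a b)
        have hnn : 0 ≤ ∫ σ in a..b, fE t₀ σ :=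
          intervalIntegral.integral_nonneg hab (fun σ _ => hfE_nonneg _ _)
        simp only [hJdef]
        linarith [hadd]
      have hJ_nonneg : ∀ s, 0 ≤ s → 0 ≤ J s := fun s hs => by
        rw [← hJ0]; exact hJ_mono 0 s hs
      have hIJ : ∀ s ∈ Icc (0:ℝ) (αE t₀), I s ≤ J s := by
        intro s hs
        have hαs_le : αE s ≤ s := le_trans (hαE_le s) (le_of_eq (max_eq_left hs.1))
        have hst₀ : s ≤ t₀ := le_trans hs.2 hαt₀_le
        have h1 : I s ≤ ∫ σ in (0:ℝ)..(αE s), fE t₀ σ :=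
          intervalIntegral.integral_mono_on (hαE_nonneg s) (hfE_int s 0 (αE s))
            (hfE_int t₀ 0 (αE s)) (fun σ _ => hfE_mono σ s t₀ hst₀)
        exact le_trans h1 (hJ_mono _ _ hαs_le)
      have hIt₀Δ : I t₀ ≤ Δ := hIΔ t₀ ht₀mem
      have hJub : ∀ s ∈ Icc (0:ℝ) (αE t₀), δ + J s ≤ R1 := by
        intro s hs
        have h1 : J s ≤ J (αE t₀) := hJ_mono _ _ hs.2
        rw [hJI] at h1
        have : Δ + Δ = R1 := by rw [hΔdef]; ring
        linarith
      have hmemIcc : ∀ s ∈ Icc (0:ℝ) (αE t₀), δ + J s ∈ Icc (0:ℝ) R2 := by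
        intro s hs
        constructor
        · have := hJ_nonneg s hs.1; linarith
        · exact le_trans (hJub s hs) hR1R2.le
      have hmemIoo : ∀ s ∈ Icc (0:ℝ) (αE t₀), δ + J s ∈ Ioo (0:ℝ) R2 := by
        intro s hs
        constructor
        · have := hJ_nonneg s hs.1; linarith
        · exact lt_of_le_of_lt (hJub s hs) hR1R2
      set ψ : ℝ → ℝ := fun s => P (δ + J s) with hψdef
      have hψ_pos : ∀ s ∈ Icc (0:ℝ) (αE t₀), c ≤ ψ s := fun s hs =>
        (hP_spec _ (hmemIcc s hs)).1.1
      have hψ_deriv : ∀ s ∈ Icc (0:ℝ) (αE t₀), HasDerivAt ψ (θ (ψ s) * fE t₀ s) s := by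
        intro s hs
        have hP := hP_deriv _ (hmemIoo s hs)
        have hJd : HasDerivAt (fun r => δ + J r) (fE t₀ s) s := (hJ_cont_at s).const_add δ
        exact hP.comp s hJd
      have hψ_contOn : ContinuousOn ψ (Icc 0 (αE t₀)) := by
        apply hP_contOn.comp ((continuous_const.add hJ_cont).continuousOn)
        intro s hs
        exact hmemIcc s hs
      have hθψ_cont : ContinuousOn (fun s => θ (ψ s)) (Icc 0 (αE t₀)) := by
        intro s hs
        exact ContinuousAt.comp_continuousWithinAt
          (hθ_contAt _ (lt_of_lt_of_le hc (hψ_pos s hs))) (hψ_contOn s hs)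
      have hFTC : ∫ s in (0:ℝ)..(αE t₀), θ (ψ s) * fE t₀ s = ψ (αE t₀) - ψ 0 := by
        apply intervalIntegral.integral_eq_sub_of_hasDerivAt
        · intro s hs
          rw [uIcc_of_le (hαE_nonneg t₀)] at hs
          exact hψ_deriv s hs
        · apply ContinuousOn.intervalIntegrable
          rw [uIcc_of_le (hαE_nonneg t₀)]
          exact hθψ_cont.mul (hfE_c1 t₀).continuousOn
      have hψ0 : ψ 0 = P δ := by simp only [hψdef, hJ0, add_zero]
      have hψα : ψ (αE t₀) = P (δ + I t₀) := by simp only [hψdef, hJI]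
      have hptwise : ∀ s ∈ Icc (0:ℝ) (αE t₀), fE t₀ s * θ (q s) ≤ θ (ψ s) * fE t₀ s := by
        intro s hs
        rw [mul_comm (θ (ψ s))]
        apply mul_le_mul_of_nonneg_left _ (hfE_nonneg t₀ s)
        apply hθ_mono _ _ (hq_nonneg s)
        have hst₀ : s ≤ t₀ := le_trans hs.2 hαt₀_le
        have hFBs : F (B s) ≤ δ + I s := by
          rcases eq_or_lt_of_le hst₀ with h | h
          · rw [h]; exact heq.le
          · exact (hlt s hs.1 h).le
        have hFψ : F (ψ s) = δ + J s := (hP_spec _ (hmemIcc s hs)).2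
        have hBψ : B s ≤ ψ s := by
          by_contra hcon2
          push_neg at hcon2
          have hstr := hF_strict (mem_Ioi.mpr (lt_of_lt_of_le hc (hψ_pos s hs)))
            (mem_Ioi.mpr (lt_of_lt_of_le hc (hB_pos s))) hcon2
          rw [hFψ] at hstr
          have := hIJ s hs
          linarith
        exact le_trans (le_max_left _ _) hBψ
      have hint1 : IntervalIntegrable (fun s => fE t₀ s * θ (q s))
          MeasureTheory.volume 0 (αE t₀) := by
        apply ContinuousOn.intervalIntegrable
        rw [uIcc_of_le (hαE_nonneg t₀)]
        apply ((hfE_c1 t₀).continuousOn).mul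
        exact hθ_contOn.comp hq_cont.continuousOn (fun s _ => hq_nonneg s)
      have hint2 : IntervalIntegrable (fun s => θ (ψ s) * fE t₀ s)
          MeasureTheory.volume 0 (αE t₀) := by
        apply ContinuousOn.intervalIntegrable
        rw [uIcc_of_le (hαE_nonneg t₀)]
        exact hθψ_cont.mul (hfE_c1 t₀).continuousOn
      have hchain : q t₀ ≤ c + (P (δ + I t₀) - P δ) := by
        have h1 := hmain' t₀ ht₀mem
        have h2 : (∫ s in (0:ℝ)..(αE t₀), fE t₀ s * θ (q s)) ≤
            ∫ s in (0:ℝ)..(αE t₀), θ (ψ s) * fE t₀ s :=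
          intervalIntegral.integral_mono_on (hαE_nonneg t₀) hint1 hint2 hptwise
        rw [hFTC, hψ0, hψα] at h2
        linarith
      have hδmem : δ ∈ Icc (0:ℝ) R2 := by
        constructor
        · exact hδ.le
        · have : Δ ≤ R1 := by rw [hΔdef]; linarith
          linarith [hR1R2.le]
      have hPδ : c < P δ := by
        have hFPδ := (hP_spec δ hδmem).2
        by_contra hcon3
        push_neg at hcon3
        rcases eq_or_lt_of_le hcon3 with h | h
        · rw [h] at hFPδ; rw [hFc] at hFPδ; linarith
        · have := hF_strict (mem_Ioi.mpr (lt_of_lt_of_le hc (hP_spec δ hδmem).1.1))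
            (mem_Ioi.mpr hc) h
          rw [hFPδ, hFc] at this
          linarith
      have hmem2 : δ + I t₀ ∈ Icc (0:ℝ) R2 := by
        constructor
        · have := hI_nonneg t₀; linarith
        · have : Δ + Δ = R1 := by rw [hΔdef]; ring
          linarith [hR1R2.le]
      have hBt₀ : B t₀ = P (δ + I t₀) := by
        apply hF_inj (mem_Ioi.mpr (lt_of_lt_of_le hc (hB_pos t₀)))
          (mem_Ioi.mpr (lt_of_lt_of_le hc (hP_spec _ hmem2).1.1))
        rw [heq, (hP_spec _ hmem2).2]
      have hPmono : P δ ≤ P (δ + I t₀) := hP_mono _ _ hδmem hmem2 (by linarith [hI_nonneg t₀])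
      have hBlt : B t₀ < P (δ + I t₀) := by
        apply max_lt
        · linarith
        · linarith
      rw [hBt₀] at hBlt
      exact lt_irrefl _ hBlt
    by_contra hcon
    push_neg at hcon
    set δ' := min Δ ((F (B t) - I t)/2) with hδ'def
    have hδ'pos : 0 < δ' := lt_min hΔpos (by linarith)
    have hkey := key δ' hδ'pos (min_le_left _ _)
    have hδ'le : δ' ≤ (F (B t) - I t)/2 := min_le_right _ _
    linarith
  -- explicit formula for G
  have hA : ∀ s : ℝ, 0 < s → HasDerivAt (fun y => Real.log (Real.log (y + 1)))
      (1 / ((s + 1) * Real.log (s + 1))) s := by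
    intro s hs
    have h1 : HasDerivAt (fun y : ℝ => y + 1) 1 s := (hasDerivAt_id s).add_const 1
    have h2 : HasDerivAt (fun y : ℝ => Real.log (y + 1)) ((s + 1)⁻¹ * 1) s :=
      by have := (Real.hasDerivAt_log (by linarith : s + (1:ℝ) ≠ 0)).comp s h1; exact this
    have h3 : Real.log (s + 1) ≠ 0 := ne_of_gt (Real.log_pos (by linarith))
    have h4 := (Real.hasDerivAt_log h3).comp s h2
    refine HasDerivAt.congr_deriv h4 ?_
    rw [mul_one]
    field_simp
  have hGint : ∀ a b : ℝ, 0 < a → 0 < b →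
      IntervalIntegrable (fun s => 1 / ((s + 1) * Real.log (s + 1)))
        MeasureTheory.volume a b := by
    intro a b ha hb
    apply ContinuousOn.intervalIntegrable
    intro s hs
    have hs0 : 0 < s := huIcc_sub a b ha hb hs
    have hlog : Real.log (s + 1) ≠ 0 := ne_of_gt (Real.log_pos (by linarith))
    have : ContinuousAt (fun s : ℝ => 1 / ((s + 1) * Real.log (s + 1))) s := by
      apply ContinuousAt.div continuousAt_const
      · exact ContinuousAt.mul (by fun_prop)
          ((Real.continuousAt_log (by linarith)).comp (by fun_prop))
      · positivity
    exact this.continuousWithinAt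
  have hGexp : ∀ x : ℝ, 0 < x → G x = Real.log (Real.log (x + 1)) - Real.log L := by
    intro x hx
    rw [hG x]
    have heval := intervalIntegral.integral_eq_sub_of_hasDerivAt
      (f := fun y => Real.log (Real.log (y + 1)))
      (f' := fun s => 1 / ((s + 1) * Real.log (s + 1)))
      (a := x₀) (b := x)
      (fun s hs => hA s (huIcc_sub x₀ x hx₀ hx hs)) (hGint x₀ x hx₀ hx)
    rw [heval, hLdef]
  have hGderiv : ∀ σ : ℝ, 0 < σ →
      HasDerivAt G (((σ + 1) * Real.log (σ + 1))⁻¹) σ := by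
    intro σ hσ
    have h := (hA σ hσ).sub_const (Real.log L)
    rw [one_div] at h
    apply h.congr_of_eventuallyEq
    filter_upwards [Ioi_mem_nhds hσ] with y hy
    exact hGexp y hy
  -- v and Hs
  set v : ℝ → ℝ := fun s => (Real.exp (Real.exp s * L) - 1) ^ (1 / n) with hvdef
  have hv_base : ∀ s : ℝ, 0 < Real.exp (Real.exp s * L) - 1 := by
    intro s
    have h1 : 0 < Real.exp s * L := mul_pos (Real.exp_pos s) hL
    have h2 : (1:ℝ) = Real.exp 0 := (Real.exp_zero).symm
    have h3 : Real.exp 0 < Real.exp (Real.exp s * L) := Real.exp_lt_exp.mpr h1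
    rw [h2]; linarith
  have hv_pos : ∀ s : ℝ, 0 < v s := fun s =>
    Real.rpow_pos_of_pos (hv_base s) _
  set Hs : ℝ → ℝ := fun s => 1 / w (v s) with hHsdef
  have hHs_cont : Continuous Hs := by
    rw [continuous_iff_continuousAt]
    intro s
    have hvc : ContinuousAt v s := by
      apply ContinuousAt.comp (x := s)
        (Real.continuousAt_rpow_const _ _ (Or.inl (ne_of_gt (hv_base s))))
      fun_prop
    have hwc : ContinuousAt (fun s => w (v s)) s :=
      ContinuousAt.comp (x := s) (g := w)
        (hw_cont.continuousAt (Ici_mem_nhds (hv_pos s))) hvc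
    exact ContinuousAt.div continuousAt_const hwc (ne_of_gt (hw_pos _ (hv_pos s)))
  have hΨ' : ∀ x : ℝ, Ψ x = ∫ s in (1:ℝ)..x, Hs s := fun x => by rw [hΨ x]
  have hvG : ∀ σ : ℝ, 0 < σ → v (G σ) = σ ^ (1 / n) := by
    intro σ hσ
    have h1 : Real.exp (G σ) = Real.log (σ + 1) / L := by
      rw [hGexp σ hσ, Real.exp_sub, Real.exp_log (Real.log_pos (by linarith)),
        Real.exp_log hL]
    simp only [hvdef]
    rw [h1, div_mul_cancel₀ _ (ne_of_gt hL), Real.exp_log (by linarith : (0:ℝ) < σ + 1)]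
    norm_num
  -- conclusion
  refine ⟨τ, hτpos, ?_⟩
  intro t ht
  have hrmem : I t ∈ Icc (0:ℝ) R2 := by
    constructor
    · exact hI_nonneg t
    · have h1 : I t ≤ Δ := hIΔ t ht
      have h2 : Δ ≤ R1 := by rw [hΔdef]; linarith
      linarith [hR1R2.le]
  set xt : ℝ := P (I t) with hxtdef
  have hxt_spec := hP_spec (I t) hrmem
  have hxt_ge : c ≤ xt := hxt_spec.1.1
  have hxt_pos : 0 < xt := lt_of_lt_of_le hc hxt_ge
  have hFxt : F xt = I t := hxt_spec.2
  -- q t ≤ xt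
  have hqxt : q t ≤ xt := by
    have h1 : F (B t) ≤ I t := claimB t ht
    rw [← hFxt] at h1
    have hBxt : B t ≤ xt := by
      by_contra hcon
      push_neg at hcon
      have := hF_strict (mem_Ioi.mpr hxt_pos)
        (mem_Ioi.mpr (lt_of_lt_of_le hc (hB_pos t))) hcon
      linarith
    exact le_trans (le_max_left _ _) hBxt
  -- y
  refine ⟨G xt, ?_, ?_, ?_⟩
  · -- 0 < G xt
    have h1 : Real.log (x₀ + 1) < Real.log (c + 1) :=
      Real.log_lt_log (by linarith) (by linarith)
    have h2 : Real.log (c + 1) ≤ Real.log (xt + 1) :=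
      Real.log_le_log (by linarith) (by linarith)
    have h3 : Real.log L < Real.log (Real.log (xt + 1)) := by
      apply Real.log_lt_log hL
      rw [hLdef]; linarith
    rw [hGexp xt hxt_pos]
    linarith
  · -- Ψ equation
    have hIt : (∫ s in (0:ℝ)..(α t), f t s) = I t := by
      simp only [hIdef]
      rw [← hαE_eq t ht.1]
      apply intervalIntegral.integral_congr
      intro s hs
      rw [uIcc_of_le (hαE_nonneg t)] at hs
      exact (hfE_eq t ht.1 s hs.1).symm
    rw [hΨ' (G xt), hΨ' (G c), hIt]
    have hHs_int : ∀ a b : ℝ, IntervalIntegrable Hs MeasureTheory.volume a b :=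
      fun a b => hHs_cont.intervalIntegrable a b
    have hsplit := intervalIntegral.integral_add_adjacent_intervals
      (hHs_int 1 (G c)) (hHs_int (G c) (G xt))
    rw [← hsplit]
    congr 1
    -- ∫_{G c}^{G xt} Hs = I t
    have hcv := intervalIntegral.integral_comp_smul_deriv
      (f := G) (f' := fun σ => ((σ + 1) * Real.log (σ + 1))⁻¹) (g := Hs)
      (a := c) (b := xt)
      (fun σ hσ => hGderiv σ (huIcc_sub c xt hc hxt_pos hσ))
      (by
        intro σ hσ
        have hσ0 : 0 < σ := huIcc_sub c xt hc hxt_pos hσ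
        have : ContinuousAt (fun σ : ℝ => ((σ + 1) * Real.log (σ + 1))⁻¹) σ := by
          apply ContinuousAt.inv₀
          · exact ContinuousAt.mul (by fun_prop)
              ((Real.continuousAt_log (by linarith)).comp (by fun_prop))
          · have := Real.log_pos (by linarith : (1:ℝ) < σ + 1)
            positivity
        exact this.continuousWithinAt)
      hHs_cont
    rw [← hcv, ← hFxt]
    simp only [hFdef]
    apply intervalIntegral.integral_congr
    intro σ hσ
    rw [uIcc_of_le hxt_ge] at hσ
    have hσ0 : 0 < σ := lt_of_lt_of_le hc hσ.1
    have hwσ : 0 < w (σ ^ (1 / n)) := hw_pos _ (Real.rpow_pos_of_pos hσ0 _)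
    show ((σ + 1) * Real.log (σ + 1))⁻¹ • Hs (G σ) = (θ σ)⁻¹
    simp only [hHsdef]
    rw [hvG σ hσ0]
    simp only [hθdef]
    simp only [smul_eq_mul, one_div, mul_inv]
  · -- the bound
    have hut : u t = uE t := (huE_eq t ht.1).symm
    have hun : u t ^ n ≤ xt := by rw [hut]; exact hqxt
    have hfin : u t ≤ xt ^ (1 / n) := by
      have h1 : (u t ^ n) ^ (1 / n) ≤ xt ^ (1 / n) :=
        Real.rpow_le_rpow (Real.rpow_nonneg (hu_nonneg t ht.1) n) hun (by positivity)
      rwa [← Real.rpow_mul (hu_nonneg t ht.1), mul_one_div_cancel hn', Real.rpow_one] at h1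
    have hvy : v (G xt) = xt ^ (1 / n) := hvG xt hxt_pos
    rw [← hvy] at hfin
    exact hfin
end

section
/- Let m > n > 0, c > 0, let u : [0,∞) → [0,∞) be continuous, let α ∈ C¹([0,∞),[0,∞)) be nondecreasing with α(t) ≤ t, let f, g : [0,∞) → [0,∞) be continuous, and let w : [0,∞) → [0,∞) be continuous nondecreasing with w(x) > 0 for x > 0. Suppose u^m(t) ≤ c^{m/(m−n)} + (m/(m−n)) (∫_0^{α(t)} f(s) uⁿ(s) w(u(s)) ds + ∫_0^t g(s) uⁿ(s) w(u(s)) ds) for all t ≥ 0. Define Ψ(x) = ∫_1^x ds/w(s^{1/(m−n)}). Then for every t ∈ [0,τ], where τ > 0 is such that Ψ(c) + ∫_0^{α(t)} f(s) ds + ∫_0^t g(s) ds lies in the domain of Ψ⁻¹ on [0,τ], one has u(t) ≤ [Ψ⁻¹(Ψ(c) + ∫_0^{α(t)} f(s) ds + ∫_0^t g(s) ds)]^{1/(m−n)}. -/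
open Set Filter Topology MeasureTheory intervalIntegral

private lemma sun_prim_aux {F : ℝ → ℝ} (hF : Continuous F) (hF0 : ∀ x, 0 ≤ F x) :
    (∀ r, HasDerivAt (fun r => ∫ x in (0:ℝ)..r, F x) (F r) r) ∧
      Monotone (fun r => ∫ x in (0:ℝ)..r, F x) := by
  constructor
  · intro r
    exact intervalIntegral.integral_hasDerivAt_right (hF.intervalIntegrable _ _)
      hF.aestronglyMeasurable.stronglyMeasurableAtFilter hF.continuousAt
  · intro a b hab
    have h1 : (∫ x in (0:ℝ)..b, F x) - (∫ x in (0:ℝ)..a, F x) = ∫ x in a..b, F x :=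
      intervalIntegral.integral_interval_sub_left
        (hF.intervalIntegrable 0 b) (hF.intervalIntegrable 0 a)
    have h2 : 0 ≤ ∫ x in a..b, F x :=
      intervalIntegral.integral_nonneg hab fun x _ => hF0 x
    simp only [ge_iff_le]
    linarith

/-- Sun's Theorem 2.2 (corollary of Theorem 2).  `τ > 0` is assumed chosen so
that `Ψ(c) + ∫₀^{α t} f + ∫₀^t g ∈ Dom(Ψ⁻¹)` on `[0,τ]` (expressed as
`∃ y > 0, Ψ y = …`); the conclusion `u t ≤ [Ψ⁻¹(…)]^{1/(m-n)}` is expressed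
via the same witness. -/
theorem sun_thm22 (m n c τ : ℝ) (hmn : n < m) (hn : 0 < n) (hc : 0 < c)
    (u α f g w Ψ : ℝ → ℝ)
    (hu_cont : ContinuousOn u (Ici 0)) (hu_nonneg : ∀ t ≥ (0:ℝ), 0 ≤ u t)
    (hα_C1 : ContDiffOn ℝ 1 α (Ici 0)) (hα_mono : MonotoneOn α (Ici 0))
    (hα_nonneg : ∀ t ≥ (0:ℝ), 0 ≤ α t) (hα_le : ∀ t ≥ (0:ℝ), α t ≤ t)
    (hf_cont : ContinuousOn f (Ici 0)) (hf_nonneg : ∀ s ≥ (0:ℝ), 0 ≤ f s)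
    (hg_cont : ContinuousOn g (Ici 0)) (hg_nonneg : ∀ s ≥ (0:ℝ), 0 ≤ g s)
    (hw_cont : ContinuousOn w (Ici 0)) (hw_mono : MonotoneOn w (Ici 0))
    (hw_pos : ∀ x > (0:ℝ), 0 < w x)
    (hΨ : ∀ x, Ψ x = ∫ s in (1:ℝ)..x, 1 / w (s ^ (1 / (m - n))))
    (hmain : ∀ t ≥ (0:ℝ),
      u t ^ m ≤ c ^ (m / (m - n)) + (m / (m - n)) *
        ((∫ s in (0:ℝ)..(α t), f s * u s ^ n * w (u s)) +
          ∫ s in (0:ℝ)..t, g s * u s ^ n * w (u s)))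
    (hτ : 0 < τ)
    (hdom : ∀ t ∈ Icc (0:ℝ) τ, ∃ y > (0:ℝ),
      Ψ y = Ψ c + (∫ s in (0:ℝ)..(α t), f s) + ∫ s in (0:ℝ)..t, g s) :
    ∀ t ∈ Icc (0:ℝ) τ,
      ∃ y > (0:ℝ),
        Ψ y = Ψ c + (∫ s in (0:ℝ)..(α t), f s) + (∫ s in (0:ℝ)..t, g s) ∧
        u t ≤ y ^ (1 / (m - n)) := by
  have hk : 0 < m - n := sub_pos.2 hmn
  have hm : 0 < m := hn.trans hmn
  set p : ℝ := m / (m - n) with hpdef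
  have hp : 0 < p := div_pos hm hk
  set e : ℝ := (m - n) / m with hedef
  have he : 0 < e := div_pos hk hm
  have hep : e * p = 1 := by rw [hedef, hpdef]; field_simp
  have hpe : p * e = 1 := by rw [mul_comm]; exact hep
  -- nonnegativity of w at 0 (by continuity from the right)
  have hw0 : 0 ≤ w 0 := by
    have hcw : ContinuousWithinAt w (Ici 0) 0 := hw_cont 0 self_mem_Ici
    have h1 : Tendsto w (𝓝[>] (0:ℝ)) (𝓝 (w 0)) :=
      hcw.tendsto.mono_left (nhdsWithin_mono _ Ioi_subset_Ici_self)
    exact ge_of_tendsto h1 (eventually_nhdsWithin_of_forall fun x hx => (hw_pos x hx).le)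
  have hw_nonneg : ∀ x ≥ (0:ℝ), 0 ≤ w x := by
    intro x hx
    rcases eq_or_lt_of_le hx with h | h
    · rw [← h]; exact hw0
    · exact (hw_pos x h).le
  -- clamped functions
  set q : ℝ → ℝ := fun s => max s 0 with hqdef
  have hq_cont : Continuous q := continuous_id.max continuous_const
  have hq_mem : ∀ s, q s ∈ Ici (0:ℝ) := fun s => mem_Ici.mpr (le_max_right s 0)
  have hq_eq : ∀ s ≥ (0:ℝ), q s = s := fun s hs => max_eq_left hs
  set U : ℝ → ℝ := fun s => u (q s) with hUdef
  have hU_cont : Continuous U := hu_cont.comp_continuous hq_cont hq_mem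
  have hU_nonneg : ∀ s, 0 ≤ U s := fun s => hu_nonneg _ (hq_mem s)
  set ftil : ℝ → ℝ := fun s => f (q s) with hftildef
  have hftil_cont : Continuous ftil := hf_cont.comp_continuous hq_cont hq_mem
  have hftil_nonneg : ∀ s, 0 ≤ ftil s := fun s => hf_nonneg _ (hq_mem s)
  set gtil : ℝ → ℝ := fun s => g (q s) with hgtildef
  have hgtil_cont : Continuous gtil := hg_cont.comp_continuous hq_cont hq_mem
  have hgtil_nonneg : ∀ s, 0 ≤ gtil s := fun s => hg_nonneg _ (hq_mem s)
  set F : ℝ → ℝ := fun s => ftil s * U s ^ n * w (U s) with hFdef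
  have hF_cont : Continuous F :=
    (hftil_cont.mul (hU_cont.rpow_const fun s => Or.inr hn.le)).mul
      (hw_cont.comp_continuous hU_cont hU_nonneg)
  have hF0 : ∀ s, 0 ≤ F s := fun s =>
    mul_nonneg (mul_nonneg (hftil_nonneg s) (Real.rpow_nonneg (hU_nonneg s) n))
      (hw_nonneg _ (hU_nonneg s))
  set G : ℝ → ℝ := fun s => gtil s * U s ^ n * w (U s) with hGdef
  have hG_cont : Continuous G :=
    (hgtil_cont.mul (hU_cont.rpow_const fun s => Or.inr hn.le)).mul
      (hw_cont.comp_continuous hU_cont hU_nonneg)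
  have hG0 : ∀ s, 0 ≤ G s := fun s =>
    mul_nonneg (mul_nonneg (hgtil_nonneg s) (Real.rpow_nonneg (hU_nonneg s) n))
      (hw_nonneg _ (hU_nonneg s))
  -- primitives
  set A : ℝ → ℝ := fun r => ∫ x in (0:ℝ)..r, F x with hAdef
  obtain ⟨hA_deriv, hA_mono⟩ := sun_prim_aux hF_cont hF0
  set B : ℝ → ℝ := fun r => ∫ x in (0:ℝ)..r, G x with hBdef
  obtain ⟨hB_deriv, hB_mono⟩ := sun_prim_aux hG_cont hG0
  set Af : ℝ → ℝ := fun r => ∫ x in (0:ℝ)..r, ftil x with hAfdef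
  obtain ⟨hAf_deriv, _⟩ := sun_prim_aux hftil_cont hftil_nonneg
  set Bg : ℝ → ℝ := fun r => ∫ x in (0:ℝ)..r, gtil x with hBgdef
  obtain ⟨hBg_deriv, _⟩ := sun_prim_aux hgtil_cont hgtil_nonneg
  have hA_cont : Continuous A := continuous_iff_continuousAt.mpr fun r => (hA_deriv r).continuousAt
  have hB_cont : Continuous B := continuous_iff_continuousAt.mpr fun r => (hB_deriv r).continuousAt
  have hAf_cont : Continuous Af :=
    continuous_iff_continuousAt.mpr fun r => (hAf_deriv r).continuousAt
  have hBg_cont : Continuous Bg :=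
    continuous_iff_continuousAt.mpr fun r => (hBg_deriv r).continuousAt
  have hA0 : A 0 = 0 := intervalIntegral.integral_same
  have hB0 : B 0 = 0 := intervalIntegral.integral_same
  have hAf0 : Af 0 = 0 := intervalIntegral.integral_same
  have hBg0 : Bg 0 = 0 := intervalIntegral.integral_same
  have hA_nonneg : ∀ r ≥ (0:ℝ), 0 ≤ A r := fun r hr => hA0 ▸ hA_mono hr
  have hB_nonneg : ∀ r ≥ (0:ℝ), 0 ≤ B r := fun r hr => hB0 ▸ hB_mono hr
  -- the majorant z
  set z : ℝ → ℝ := fun s => c ^ p + p * (A (α s) + B s) with hzdef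
  have hz_pos : ∀ s ≥ (0:ℝ), 0 < z s := by
    intro s hs
    have h1 : 0 ≤ A (α s) := hA_nonneg _ (hα_nonneg s hs)
    have h2 : 0 ≤ B s := hB_nonneg s hs
    have h3 : 0 < c ^ p := Real.rpow_pos_of_pos hc p
    simp only [hzdef]
    nlinarith
  have hz_mono : MonotoneOn z (Ici 0) := by
    intro a ha b hb hab
    simp only [hzdef]
    have h1 : A (α a) ≤ A (α b) := hA_mono (hα_mono ha hb hab)
    have h2 : B a ≤ B b := hB_mono hab
    nlinarith
  -- main hypothesis rewritten with z
  have hmain' : ∀ s ≥ (0:ℝ), u s ^ m ≤ z s := by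
    intro s hs
    have h0 := hmain s hs
    have e1 : (∫ x in (0:ℝ)..(α s), f x * u x ^ n * w (u x)) = A (α s) := by
      apply intervalIntegral.integral_congr
      intro r hr
      rw [uIcc_of_le (hα_nonneg s hs)] at hr
      simp only [hFdef, hftildef, hUdef, hqdef, max_eq_left hr.1]
    have e2 : (∫ x in (0:ℝ)..s, g x * u x ^ n * w (u x)) = B s := by
      apply intervalIntegral.integral_congr
      intro r hr
      rw [uIcc_of_le hs] at hr
      simp only [hGdef, hgtildef, hUdef, hqdef, max_eq_left hr.1]
    rw [e1, e2] at h0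
    simpa only [hzdef] using h0
  have hUle : ∀ s ≥ (0:ℝ), u s ≤ z s ^ (1 / m) := by
    intro s hs
    have h1 := hmain' s hs
    have h2 : (u s ^ m) ^ (1 / m) ≤ z s ^ (1 / m) :=
      Real.rpow_le_rpow (Real.rpow_nonneg (hu_nonneg s hs) m) h1 (by positivity)
    rwa [← Real.rpow_mul (hu_nonneg s hs), mul_one_div_cancel hm.ne', Real.rpow_one] at h2
  -- the key pointwise bound
  have hkey : ∀ r x : ℝ, 0 ≤ r → r ≤ x →
      U r ^ n * w (U r) ≤ z x ^ (n / m) * w (z x ^ (1 / m)) := by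
    intro r x hr hrx
    have hx0 : (0:ℝ) ≤ x := hr.trans hrx
    have hzx : 0 < z x := hz_pos x hx0
    have hzr : z r ≤ z x := hz_mono hr hx0 hrx
    have hUr : U r = u r := by simp only [hUdef, hqdef, max_eq_left hr]
    have hur : u r ≤ z x ^ (1 / m) :=
      (hUle r hr).trans (Real.rpow_le_rpow (hz_pos r hr).le hzr (by positivity))
    have h1 : U r ^ n ≤ z x ^ (n / m) := by
      rw [hUr]
      calc u r ^ n ≤ (z x ^ (1 / m)) ^ n :=
            Real.rpow_le_rpow (hu_nonneg r hr) hur hn.le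
        _ = z x ^ (n / m) := by
            rw [← Real.rpow_mul hzx.le, show 1 / m * n = n / m by ring]
    have h2 : w (U r) ≤ w (z x ^ (1 / m)) :=
      hw_mono (hU_nonneg r) (Real.rpow_nonneg hzx.le _) (hUr ▸ hur)
    exact mul_le_mul h1 h2 (hw_nonneg _ (hU_nonneg r)) (Real.rpow_nonneg hzx.le _)
  -- properties of Φ (the explicit form of Ψ)
  set ρ : ℝ → ℝ := fun s => 1 / w (s ^ (1 / (m - n))) with hρdef
  set Φ : ℝ → ℝ := fun x => ∫ s in (1:ℝ)..x, ρ s with hΦdef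
  have hΨΦ : ∀ x, Ψ x = Φ x := fun x => hΨ x
  have hρ_cont : ContinuousOn ρ (Ioi 0) := by
    apply ContinuousOn.div continuousOn_const
    · exact hw_cont.comp
        (ContinuousOn.rpow_const continuousOn_id fun x hx => Or.inl (ne_of_gt hx))
        fun x hx => (Real.rpow_pos_of_pos hx _).le
    · exact fun x hx => (hw_pos _ (Real.rpow_pos_of_pos hx _)).ne'
  have hρ_pos : ∀ s : ℝ, 0 < s → 0 < ρ s := fun s hs =>
    one_div_pos.2 (hw_pos _ (Real.rpow_pos_of_pos hs _))
  have hsub : ∀ b : ℝ, 0 < b → uIcc (1:ℝ) b ⊆ Ioi 0 := by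
    intro b hb x hx
    exact lt_of_lt_of_le (lt_min one_pos hb) hx.1
  have hΦ_deriv : ∀ b : ℝ, 0 < b → HasDerivAt Φ (ρ b) b := by
    intro b hb
    exact intervalIntegral.integral_hasDerivAt_right
      ((hρ_cont.mono (hsub b hb)).intervalIntegrable)
      (AEStronglyMeasurable.stronglyMeasurableAtFilter_of_mem
        (hρ_cont.aestronglyMeasurable measurableSet_Ioi) (Ioi_mem_nhds hb))
      (hρ_cont.continuousAt (Ioi_mem_nhds hb))
  have hΦ_mono : ∀ a b : ℝ, 0 < a → a < b → Φ a < Φ b := by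
    intro a b ha hab
    have hb : 0 < b := ha.trans hab
    have hsubab : uIcc a b ⊆ Ioi 0 := fun x hx => lt_of_lt_of_le (lt_min ha hb) hx.1
    have hdiff : Φ b - Φ a = ∫ s in a..b, ρ s :=
      intervalIntegral.integral_interval_sub_left
        ((hρ_cont.mono (hsub b hb)).intervalIntegrable)
        ((hρ_cont.mono (hsub a ha)).intervalIntegrable)
    have hpos : 0 < ∫ s in a..b, ρ s := by
      apply intervalIntegral.intervalIntegral_pos_of_pos_on
        ((hρ_cont.mono hsubab).intervalIntegrable)
        (fun x hx => hρ_pos x (ha.trans hx.1)) hab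
    linarith
  -- the decreasing function H
  intro t ht
  obtain ⟨y, hy_pos, hy⟩ := hdom t ht
  refine ⟨y, hy_pos, hy, ?_⟩
  have ht0 : 0 ≤ t := ht.1
  set H : ℝ → ℝ := fun s => Φ (z s ^ e) - Af (α s) - Bg s with hHdef
  have hα_contOn : ContinuousOn α (Icc 0 t) :=
    (hα_C1.continuousOn).mono (Icc_subset_Ici_self)
  have hz_contOn : ContinuousOn z (Icc 0 t) := by
    simp only [hzdef]
    exact continuousOn_const.add (continuousOn_const.mul
      ((hA_cont.comp_continuousOn hα_contOn).add hB_cont.continuousOn))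
  have hv_contOn : ContinuousOn (fun s => z s ^ e) (Icc 0 t) :=
    hz_contOn.rpow_const fun x hx => Or.inl (hz_pos x hx.1).ne'
  have hH_cont : ContinuousOn H (Icc 0 t) := by
    apply ContinuousOn.sub
    apply ContinuousOn.sub
    · intro s hs
      have h1 : ContinuousAt Φ (z s ^ e) :=
        (hΦ_deriv _ (Real.rpow_pos_of_pos (hz_pos s hs.1) e)).continuousAt
      exact ContinuousAt.comp_continuousWithinAt (f := fun s => z s ^ e) (x := s)
        h1 (hv_contOn s hs)
    · exact hAf_cont.comp_continuousOn hα_contOn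
    · exact hBg_cont.continuousOn
  have key : ∀ x ∈ Ioo (0:ℝ) t, ∃ d ≤ (0:ℝ), HasDerivAt H d x := by
    intro x hx
    obtain ⟨hx0, hxt⟩ := hx
    have hx0' : (0:ℝ) ≤ x := hx0.le
    have hαx0 : 0 ≤ α x := hα_nonneg x hx0'
    have hαxx : α x ≤ x := hα_le x hx0'
    have hαdiff : DifferentiableAt ℝ α x :=
      (hα_C1.differentiableOn one_ne_zero).differentiableAt (Ici_mem_nhds hx0)
    have hαd : HasDerivAt α (deriv α x) x := hαdiff.hasDerivAt
    have hα'0 : 0 ≤ deriv α x := by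
      have h1 : Tendsto (slope α x) (𝓝[>] x) (𝓝 (deriv α x)) :=
        (hasDerivAt_iff_tendsto_slope.mp hαd).mono_left
          (nhdsWithin_mono _ fun y hy => ne_of_gt hy)
      refine ge_of_tendsto h1 (eventually_nhdsWithin_of_forall fun s hs => ?_)
      rw [slope_def_field]
      have hs' : x < s := hs
      exact div_nonneg (sub_nonneg.2 (hα_mono hx0' (hx0'.trans hs'.le) hs'.le))
        (sub_nonneg.2 hs'.le)
    have hZ : 0 < z x := hz_pos x hx0'
    have hW0 : 0 < w (z x ^ (1 / m)) := hw_pos _ (Real.rpow_pos_of_pos hZ _)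
    -- derivatives
    have hAd : HasDerivAt (fun s => A (α s)) (F (α x) * deriv α x) x :=
      (hA_deriv (α x)).comp x hαd
    have hzd : HasDerivAt z (p * (F (α x) * deriv α x + G x)) x := by
      simp only [hzdef]
      exact ((hAd.add (hB_deriv x)).const_mul p).const_add (c ^ p)
    have hvd : HasDerivAt (fun s => z s ^ e)
        (p * (F (α x) * deriv α x + G x) * e * z x ^ (e - 1)) x :=
      hzd.rpow_const (Or.inl hZ.ne')
    have hΦvd : HasDerivAt (fun s => Φ (z s ^ e))
        (ρ (z x ^ e) * (p * (F (α x) * deriv α x + G x) * e * z x ^ (e - 1))) x :=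
      by have h1 := hΦ_deriv (z x ^ e) (Real.rpow_pos_of_pos hZ e); exact h1.comp x hvd
    have hAfd : HasDerivAt (fun s => Af (α s)) (ftil (α x) * deriv α x) x :=
      (hAf_deriv (α x)).comp x hαd
    have hBgd := hBg_deriv x
    refine ⟨_, ?_, (hΦvd.sub hAfd).sub hBgd⟩
    -- the inequality
    have hρZ : ρ (z x ^ e) = 1 / w (z x ^ (1 / m)) := by
      simp only [hρdef]
      rw [← Real.rpow_mul hZ.le, show e * (1 / (m - n)) = 1 / m by
        rw [hedef]; field_simp]
    have hFb : F (α x) ≤ ftil (α x) * (z x ^ (n / m) * w (z x ^ (1 / m))) := by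
      have h1 := hkey (α x) x hαx0 hαxx
      calc F (α x) = ftil (α x) * (U (α x) ^ n * w (U (α x))) := by
            simp only [hFdef]; ring
        _ ≤ _ := mul_le_mul_of_nonneg_left h1 (hftil_nonneg _)
    have hGb : G x ≤ gtil x * (z x ^ (n / m) * w (z x ^ (1 / m))) := by
      have h1 := hkey x x hx0' le_rfl
      calc G x = gtil x * (U x ^ n * w (U x)) := by
            simp only [hGdef]; ring
        _ ≤ _ := mul_le_mul_of_nonneg_left h1 (hgtil_nonneg _)
    have hT0 : 0 ≤ ftil (α x) * deriv α x + gtil x :=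
      add_nonneg (mul_nonneg (hftil_nonneg _) hα'0) (hgtil_nonneg _)
    have hS : F (α x) * deriv α x + G x ≤
        (ftil (α x) * deriv α x + gtil x) * (z x ^ (n / m) * w (z x ^ (1 / m))) := by
      have h1 : F (α x) * deriv α x ≤
          ftil (α x) * (z x ^ (n / m) * w (z x ^ (1 / m))) * deriv α x :=
        mul_le_mul_of_nonneg_right hFb hα'0
      calc F (α x) * deriv α x + G x
          ≤ ftil (α x) * (z x ^ (n / m) * w (z x ^ (1 / m))) * deriv α x +
            gtil x * (z x ^ (n / m) * w (z x ^ (1 / m))) := add_le_add h1 hGb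
        _ = (ftil (α x) * deriv α x + gtil x) * (z x ^ (n / m) * w (z x ^ (1 / m))) := by
            ring
    have hcancel : z x ^ (e - 1) * z x ^ (n / m) = 1 := by
      rw [← Real.rpow_add hZ, show e - 1 + n / m = 0 by rw [hedef]; field_simp; ring]
      exact Real.rpow_zero _
    have hZe1 : (0:ℝ) ≤ z x ^ (e - 1) := (Real.rpow_pos_of_pos hZ _).le
    have hmain_ineq : ρ (z x ^ e) * (p * (F (α x) * deriv α x + G x) * e * z x ^ (e - 1))
        ≤ ftil (α x) * deriv α x + gtil x := by
      rw [hρZ]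
      calc 1 / w (z x ^ (1 / m)) * (p * (F (α x) * deriv α x + G x) * e * z x ^ (e - 1))
          = (e * p) * (z x ^ (e - 1) * (F (α x) * deriv α x + G x)) / w (z x ^ (1 / m)) := by
            ring
        _ = z x ^ (e - 1) * (F (α x) * deriv α x + G x) / w (z x ^ (1 / m)) := by
            rw [hep]; ring
        _ ≤ z x ^ (e - 1) * ((ftil (α x) * deriv α x + gtil x) *
              (z x ^ (n / m) * w (z x ^ (1 / m)))) / w (z x ^ (1 / m)) := by
            gcongr
        _ = (ftil (α x) * deriv α x + gtil x) * (z x ^ (e - 1) * z x ^ (n / m)) *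
              (w (z x ^ (1 / m)) / w (z x ^ (1 / m))) := by ring
        _ = ftil (α x) * deriv α x + gtil x := by
            rw [hcancel, div_self hW0.ne']; ring
    linarith
  have hanti : AntitoneOn H (Icc 0 t) := by
    apply antitoneOn_of_deriv_nonpos (convex_Icc 0 t) hH_cont
    · intro x hx
      rw [interior_Icc] at hx
      obtain ⟨d, _, hd⟩ := key x hx
      exact hd.differentiableAt.differentiableWithinAt
    · intro x hx
      rw [interior_Icc] at hx
      obtain ⟨d, hd0, hd⟩ := key x hx
      rw [hd.deriv]; exact hd0
  have hHt : H t ≤ H 0 :=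
    hanti (show (0:ℝ) ∈ Icc 0 t from ⟨le_rfl, ht0⟩) (⟨ht0, le_rfl⟩) ht0
  -- compute H 0
  have hα0 : α 0 = 0 := le_antisymm (hα_le 0 le_rfl) (hα_nonneg 0 le_rfl)
  have hz0 : z 0 = c ^ p := by
    simp only [hzdef, hα0, hA0, hB0]; ring
  have hH0 : H 0 = Φ c := by
    simp only [hHdef, hz0, hα0, hAf0, hBg0]
    rw [← Real.rpow_mul hc.le, hpe, Real.rpow_one]
    ring
  -- compute H t
  have hαt0 : 0 ≤ α t := hα_nonneg t ht0
  have hAf_eq : Af (α t) = ∫ s in (0:ℝ)..(α t), f s := by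
    apply intervalIntegral.integral_congr
    intro r hr
    rw [uIcc_of_le hαt0] at hr
    simp only [hftildef, hqdef, max_eq_left hr.1]
  have hBg_eq : Bg t = ∫ s in (0:ℝ)..t, g s := by
    apply intervalIntegral.integral_congr
    intro r hr
    rw [uIcc_of_le ht0] at hr
    simp only [hgtildef, hqdef, max_eq_left hr.1]
  rw [hΨΦ y, hΨΦ c] at hy
  have hΦle : Φ (z t ^ e) ≤ Φ y := by
    have h1 : H t = Φ (z t ^ e) - Af (α t) - Bg t := rfl
    rw [hH0, h1, hAf_eq, hBg_eq] at hHt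
    linarith [hy]
  have hzt : 0 < z t := hz_pos t ht0
  have hvle : z t ^ e ≤ y := by
    by_contra hcon
    push_neg at hcon
    have := hΦ_mono y (z t ^ e) hy_pos hcon
    linarith
  have h1 : u t ≤ z t ^ (1 / m) := hUle t ht0
  have h2 : z t ^ (1 / m) = (z t ^ e) ^ (1 / (m - n)) := by
    rw [← Real.rpow_mul hzt.le, show e * (1 / (m - n)) = 1 / m by
      rw [hedef]; field_simp]
  have h3 : (z t ^ e) ^ (1 / (m - n)) ≤ y ^ (1 / (m - n)) :=
    Real.rpow_le_rpow (Real.rpow_nonneg hzt.le e) hvle (by positivity)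
  linarith [h2 ▸ h1]
end
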